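/- arXiv:1910.00308 — 9 statements merged into one kernel-verified Lean document; each statement's English description precedes it below -/
import Mathlib

section
/- Let 0 < p < 1 be a probability and let m : ℕ → ℕ be a function with positive values such that (−log_{1-p} m(n) − n)/log n → ∞ as n → ∞ (i.e. m(n) = 1/(1-p)^{n + ω(log n)}). Then for every n, E[|min(B_{n,m(n),p})|] ≥ 1, and E[|min(B_{n,m(n),p})|] → 1 as n → ∞. -/
open MeasureTheory

/-- The Bernoulli(p) measure on `Bool`. -/
noncomputable def bernoulliBool (p : ℝ) : Measure Bool :=
  ENNReal.ofReal p • Measure.dirac true + ENNReal.ofReal (1 - p) • Measure.dirac false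

instance (p : ℝ) : IsFiniteMeasure (bernoulliBool p) := by
  constructor
  rw [bernoulliBool]
  simp [ENNReal.add_lt_top]

/-- The law of `m` i.i.d. random subsets of `{1,…,n}` (encoded as indicator vectors),
each element included independently with probability `p`. -/
noncomputable def hyperMeasure (n m : ℕ) (p : ℝ) : Measure (Fin m → Fin n → Bool) :=
  Measure.pi fun _ : Fin m => Measure.pi fun _ : Fin n => bernoulliBool p

/-- The subset of `Fin n` encoded by an indicator vector. -/
def toSet {n : ℕ} (f : Fin n → Bool) : Finset (Fin n) :=
  Finset.univ.filter fun i => f i = true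

/-- The number of distinct minimal edges of the sampled multi-hypergraph:
sets `S` that occur among the samples and such that no sample is a proper subset of `S`. -/
def minCount (n m : ℕ) (ω : Fin m → Fin n → Bool) : ℕ :=
  (Finset.univ.filter fun S : Finset (Fin n) =>
    (∃ j, toSet (ω j) = S) ∧ ∀ k, ¬ toSet (ω k) ⊂ S).card

/-- Expected size of the minimization of `B_{n,m,p}`. -/
noncomputable def expMin (n m : ℕ) (p : ℝ) : ℝ :=
  ∫ ω, (minCount n m ω : ℝ) ∂(hyperMeasure n m p)

lemma bernoulli_prob {p : ℝ} (h0 : 0 ≤ p) (h1 : p ≤ 1) :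
    IsProbabilityMeasure (bernoulliBool p) := by
  constructor
  rw [bernoulliBool]
  simp only [Measure.add_apply, Measure.smul_apply, measure_univ, smul_eq_mul, mul_one]
  rw [← ENNReal.ofReal_add h0 (by linarith)]
  norm_num

lemma one_le_minCount {n m : ℕ} (hm : 1 ≤ m) (ω : Fin m → Fin n → Bool) :
    1 ≤ minCount n m ω := by
  rw [minCount, Nat.one_le_iff_ne_zero, ← Nat.pos_iff_ne_zero, Finset.card_pos]
  have hne : (Finset.univ.image fun j => toSet (ω j)).Nonempty := by
    haveI : Nonempty (Fin m) := ⟨⟨0, hm⟩⟩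
    simpa using Finset.univ_nonempty
  obtain ⟨S, hS, hmin⟩ := Finset.exists_min_image _ (fun S => S.card) hne
  simp only [Finset.mem_image, Finset.mem_univ, true_and] at hS
  refine ⟨S, Finset.mem_filter.mpr ⟨Finset.mem_univ _, hS, fun k hk => ?_⟩⟩
  have := hmin (toSet (ω k)) (Finset.mem_image.mpr ⟨k, Finset.mem_univ _, rfl⟩)
  exact absurd (Finset.card_lt_card hk) (not_lt.mpr this)

lemma minCount_le_one {n m : ℕ} {ω : Fin m → Fin n → Bool}
    (h : ∃ j, ∀ i, ω j i = false) : minCount n m ω ≤ 1 := by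
  obtain ⟨j, hj⟩ := h
  have hjE : toSet (ω j) = ∅ := by
    simp [toSet, hj]
  rw [minCount]
  refine Finset.card_le_one.mpr fun a ha b hb => ?_
  simp only [Finset.mem_filter] at ha hb
  have key : ∀ S : Finset (Fin n), (∀ k, ¬ toSet (ω k) ⊂ S) → S = ∅ := by
    intro S hS
    by_contra hne
    exact hS j (hjE ▸ Finset.empty_ssubset.mpr (Finset.nonempty_iff_ne_empty.mpr hne))
  rw [key a ha.2.2, key b hb.2.2]

lemma minCount_le_pow (n m : ℕ) (ω : Fin m → Fin n → Bool) :
    minCount n m ω ≤ 2 ^ n := by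
  calc minCount n m ω ≤ (Finset.univ : Finset (Finset (Fin n))).card :=
        Finset.card_filter_le _ _
    _ = 2 ^ n := by simp [Fintype.card_finset]

lemma bernoulli_false (p : ℝ) : bernoulliBool p {false} = ENNReal.ofReal (1 - p) := by
  rw [bernoulliBool]
  simp [Measure.dirac_apply]

lemma measure_C (n m : ℕ) {p : ℝ} (h0 : 0 < p) (h1 : p < 1) :
    hyperMeasure n m p {ω | ∀ j, ∃ i, ω j i = true}
      = ENNReal.ofReal ((1 - (1-p)^n)^m) := by
  haveI := bernoulli_prob h0.le h1.le
  have hp1 : (0:ℝ) ≤ 1 - p := by linarith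
  have hpow1 : (1-p)^n ≤ 1 := pow_le_one₀ hp1 (by linarith)
  set ν := Measure.pi fun _ : Fin n => bernoulliBool p with hν
  haveI : IsProbabilityMeasure ν := by rw [hν]; infer_instance
  have hC : {ω : Fin m → Fin n → Bool | ∀ j, ∃ i, ω j i = true}
      = Set.pi Set.univ (fun _ : Fin m => {f : Fin n → Bool | ∃ i, f i = true}) := by
    ext ω; simp [Set.mem_pi]
  have hB : {f : Fin n → Bool | ∃ i, f i = true}
      = (Set.pi Set.univ fun _ : Fin n => ({false} : Set Bool))ᶜ := by
    ext f
    simp [Set.mem_pi]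
  have hνsmall : ν (Set.pi Set.univ fun _ : Fin n => ({false} : Set Bool))
      = ENNReal.ofReal ((1-p)^n) := by
    rw [hν, Measure.pi_pi]
    simp [bernoulli_false]
    rw [← ENNReal.ofReal_pow hp1]
  have hνB : ν {f : Fin n → Bool | ∃ i, f i = true} = ENNReal.ofReal (1 - (1-p)^n) := by
    rw [hB, measure_compl ((Set.toFinite _).measurableSet) (measure_ne_top _ _), hνsmall,
      measure_univ, ← ENNReal.ofReal_one, ← ENNReal.ofReal_sub _ (by positivity)]
  rw [hyperMeasure, hC, Measure.pi_pi]
  simp only [← hν, hνB, Finset.prod_const, Finset.card_univ, Fintype.card_fin]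
  rw [← ENNReal.ofReal_pow (by linarith)]

lemma one_le_expMin {n M : ℕ} (hM : 1 ≤ M) {p : ℝ} (h0 : 0 < p) (h1 : p < 1) :
    1 ≤ expMin n M p := by
  haveI := bernoulli_prob h0.le h1.le
  haveI : IsProbabilityMeasure (hyperMeasure n M p) := by rw [hyperMeasure]; infer_instance
  rw [expMin]
  calc (1:ℝ) = ∫ _ω : Fin M → Fin n → Bool, (1:ℝ) ∂(hyperMeasure n M p) := by simp
    _ ≤ _ := integral_mono (integrable_const 1) (.of_finite) fun ω => by
        show (1:ℝ) ≤ (minCount n M ω : ℝ)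
        exact_mod_cast one_le_minCount hM ω

lemma expMin_le {n M : ℕ} {p : ℝ} (h0 : 0 < p) (h1 : p < 1) :
    expMin n M p ≤ 1 + 2^n * (1 - (1-p)^n)^M := by
  haveI := bernoulli_prob h0.le h1.le
  haveI : IsProbabilityMeasure (hyperMeasure n M p) := by rw [hyperMeasure]; infer_instance
  have hp1 : (0:ℝ) ≤ 1 - p := by linarith
  have hpow1 : (1-p)^n ≤ 1 := pow_le_one₀ hp1 (by linarith)
  set C : Set (Fin M → Fin n → Bool) := {ω | ∀ j, ∃ i, ω j i = true} with hCdef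
  have hmeas : MeasurableSet C := (Set.toFinite _).measurableSet
  have hb : ∀ ω, (minCount n M ω : ℝ) ≤ 1 + C.indicator (fun _ => (2^n : ℝ)) ω := by
    intro ω
    by_cases hω : ω ∈ C
    · rw [Set.indicator_of_mem hω]
      have h2 : (minCount n M ω : ℝ) ≤ 2^n := by exact_mod_cast minCount_le_pow n M ω
      linarith
    · rw [Set.indicator_of_notMem hω, add_zero]
      have hex : ∃ j, ∀ i, ω j i = false := by
        simp only [hCdef, Set.mem_setOf_eq, not_forall, not_exists] at hω
        obtain ⟨j, hj⟩ := hω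
        exact ⟨j, fun i => by simpa using hj i⟩
      exact_mod_cast minCount_le_one hex
  calc expMin n M p ≤ ∫ ω, (1 + C.indicator (fun _ => (2^n:ℝ)) ω) ∂(hyperMeasure n M p) :=
        integral_mono (.of_finite) (.of_finite) hb
    _ = 1 + (2^n) * (1 - (1-p)^n)^M := by
        rw [integral_add (integrable_const 1) (.of_finite), integral_const,
          integral_indicator_const _ hmeas, measureReal_def, measureReal_def, measure_C n M h0 h1,
          ENNReal.toReal_ofReal (pow_nonneg (by linarith) M)]
        simp [smul_eq_mul, mul_comm]

lemma g_tendsto {p : ℝ} (h0 : 0 < p) (h1 : p < 1) (m : ℕ → ℕ) (hm : ∀ n, 1 ≤ m n)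
    (hgrow : Filter.Tendsto
      (fun n : ℕ => (-(Real.log (m n) / Real.log (1 - p)) - n) / Real.log n)
      Filter.atTop Filter.atTop) :
    Filter.Tendsto (fun n : ℕ => (2:ℝ)^n * (1 - (1-p)^n)^(m n)) Filter.atTop (nhds 0) := by
  set c := 1 - p with hc
  have hc0 : 0 < c := by simp [hc]; linarith
  have hc1 : c < 1 := by simp [hc]; linarith
  set L := Real.log c with hLdef
  have hL : L < 0 := Real.log_neg hc0 hc1
  have hub : ∀ n : ℕ, (2:ℝ)^n * (1 - c^n)^(m n) ≤ Real.exp (n * Real.log 2 - (m n) * c^n) := by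
    intro n
    have hcn0 : (0:ℝ) < c^n := pow_pos hc0 n
    have hcn1 : c^n ≤ 1 := pow_le_one₀ hc0.le hc1.le
    have h2 : (2:ℝ)^n = Real.exp (n * Real.log 2) := by
      rw [Real.exp_nat_mul, Real.exp_log (by norm_num : (0:ℝ) < 2)]
    have h3 : (1 - c^n)^(m n) ≤ Real.exp (-(c^n))^(m n) := by
      apply pow_le_pow_left₀ (by linarith)
      linarith [Real.add_one_le_exp (-(c^n))]
    calc (2:ℝ)^n * (1 - c^n)^(m n) ≤ (2:ℝ)^n * Real.exp (-(c^n))^(m n) := by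
          apply mul_le_mul_of_nonneg_left h3 (by positivity)
      _ = Real.exp (n * Real.log 2 - (m n) * c^n) := by
          rw [h2, ← Real.exp_nat_mul, ← Real.exp_add]
          congr 1; ring
  have hkey : ∀ᶠ n : ℕ in Filter.atTop,
      (n:ℝ) * Real.log 2 - (m n) * c^n ≤ -(n:ℝ) := by
    have hev := hgrow.eventually_ge_atTop (2 / (-L))
    filter_upwards [hev, Filter.eventually_ge_atTop 3] with n hn hn3
    have hn3' : (3:ℝ) ≤ n := by exact_mod_cast hn3
    have hlogn : 1 ≤ Real.log n := by
      rw [Real.le_log_iff_exp_le (by linarith)]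
      calc Real.exp 1 ≤ 2.7182818286 := Real.exp_one_lt_d9.le
        _ ≤ n := by linarith
    have hlogpos : 0 < Real.log n := by linarith
    have hhn : (2 / (-L)) * Real.log n ≤ -(Real.log (m n) / L) - n :=
      (le_div_iff₀ hlogpos).mp hn
    have hmpos : (0:ℝ) < m n := by exact_mod_cast hm n
    have hmc : (m n : ℝ) * c^n = Real.exp (Real.log (m n) + n * L) := by
      rw [Real.exp_add, Real.exp_log hmpos, hLdef, Real.exp_nat_mul, Real.exp_log hc0]
    have hexparg : Real.log (m n) + n * L = (-L) * (-(Real.log (m n) / L) - n) := by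
      field_simp [hL.ne]
      ring
    have hge : Real.exp (2 * Real.log n) ≤ (m n : ℝ) * c^n := by
      rw [hmc, hexparg]
      apply Real.exp_le_exp.mpr
      have h4 : (-L) * ((2 / (-L)) * Real.log n) ≤ (-L) * (-(Real.log (m n) / L) - n) :=
        mul_le_mul_of_nonneg_left hhn (by linarith)
      calc 2 * Real.log n = (-L) * ((2 / (-L)) * Real.log n) := by
            field_simp [hL.ne]
        _ ≤ _ := h4
    have hn2 : Real.exp (2 * Real.log n) = (n:ℝ)^2 := by
      rw [show (2:ℝ) * Real.log n = ((2:ℕ):ℝ) * Real.log n by norm_num,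
        Real.exp_nat_mul, Real.exp_log (by linarith)]
    have hlog2 : Real.log 2 ≤ 1 := by
      linarith [Real.log_le_sub_one_of_pos (by norm_num : (0:ℝ) < 2)]
    have : (n:ℝ)^2 ≤ (m n : ℝ) * c^n := hn2 ▸ hge
    nlinarith [mul_le_mul_of_nonneg_left hlog2 (by linarith : (0:ℝ) ≤ n)]
  have hbot : Filter.Tendsto (fun n : ℕ => (n:ℝ) * Real.log 2 - (m n) * c^n)
      Filter.atTop Filter.atBot := by
    apply Filter.tendsto_atBot_mono' _ hkey
    exact Filter.tendsto_neg_atBot_iff.mpr tendsto_natCast_atTop_atTop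
  have hexp0 : Filter.Tendsto
      (fun n : ℕ => Real.exp ((n:ℝ) * Real.log 2 - (m n) * c^n))
      Filter.atTop (nhds 0) := Real.tendsto_exp_atBot.comp hbot
  refine squeeze_zero (fun n => ?_) hub hexp0
  have : (1:ℝ) - c^n ≥ 0 := by linarith [pow_le_one₀ hc0.le hc1.le (n := n)]
  positivity

/-- **Collapse of the minimization.** If `m(n) = 1/(1-p)^{n+ω(log n)}`, i.e.
`(-log_{1-p} m(n) - n)/log n → ∞`, then `1 ≤ E[|min(B_{n,m(n),p})|]` for all `n` and
`E[|min(B_{n,m(n),p})|] → 1`. -/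
theorem minimization_collapse (p : ℝ) (hp0 : 0 < p) (hp1 : p < 1)
    (m : ℕ → ℕ) (hm : ∀ n, 1 ≤ m n)
    (hgrow : Filter.Tendsto
      (fun n : ℕ => (-(Real.log (m n) / Real.log (1 - p)) - n) / Real.log n)
      Filter.atTop Filter.atTop) :
    (∀ n : ℕ, 1 ≤ expMin n (m n) p) ∧
      Filter.Tendsto (fun n : ℕ => expMin n (m n) p) Filter.atTop (nhds 1) := by
  refine ⟨fun n => one_le_expMin (hm n) hp0 hp1, ?_⟩
  have hg := g_tendsto hp0 hp1 m hm hgrow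
  have h1' : Filter.Tendsto (fun n : ℕ => 1 + (2:ℝ)^n * (1 - (1-p)^n)^(m n))
      Filter.atTop (nhds 1) := by
    simpa using tendsto_const_nhds.add hg
  exact tendsto_of_tendsto_of_tendsto_of_le_of_le tendsto_const_nhds h1'
    (fun n => one_le_expMin (hm n) hp0 hp1) (fun n => expMin_le hp0 hp1)
end

section
/- Let n be a positive integer, x and p probabilities with 0 < x < p < 1 such that x·n is an integer, and let Y ~ Bin(n,p). Then 2^{-Dkl(x‖p)·n}/√(8·n·x·(1-x)) ≤ P[Y ≤ xn] ≤ (p·√(1-x))/((p-x)·√(π·x)) · 2^{-Dkl(x‖p)·n}/√n. -/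
/-- Binary Kullback–Leibler divergence between Bernoulli distributions
(`Real.logb 2 0 = 0`, so the convention `0·log 0 = 0` holds). -/
noncomputable def dkl (x p : ℝ) : ℝ :=
  x * Real.logb 2 (x / p) + (1 - x) * Real.logb 2 ((1 - x) / (1 - p))

/-- `P[Y ≤ t]` for a binomial random variable `Y ~ Bin(n,p)`. -/
noncomputable def binomPLE (n : ℕ) (p t : ℝ) : ℝ :=
  ∑ k ∈ Finset.range (n + 1),
    if (k : ℝ) ≤ t then (n.choose k : ℝ) * p ^ k * (1 - p) ^ (n - k) else 0

/-- `P[Y ≥ t]` for a binomial random variable `Y ~ Bin(n,p)`. -/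
noncomputable def binomPGE (n : ℕ) (p t : ℝ) : ℝ :=
  ∑ k ∈ Finset.range (n + 1),
    if t ≤ (k : ℝ) then (n.choose k : ℝ) * p ^ k * (1 - p) ^ (n - k) else 0

open Real


lemma log_lt_half {y : ℝ} (hy : 1 < y) : Real.log y < (y - y⁻¹) / 2 := by
  have h0 : 0 < Real.log y := Real.log_pos hy
  have h := (Real.self_lt_sinh_iff.mpr h0)
  rwa [Real.sinh_eq, Real.exp_log (by linarith), Real.exp_neg,
    Real.exp_log (by linarith)] at h

noncomputable def phiCH (t : ℝ) : ℝ := (t + 1/2) * (Real.log (t+1) - Real.log t)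

lemma phiCH_hasDeriv {t : ℝ} (ht : 0 < t) :
    HasDerivAt phiCH ((Real.log (t+1) - Real.log t) + (t + 1/2) * ((t+1)⁻¹ - t⁻¹)) t := by
  have h1 : HasDerivAt (fun s : ℝ => s + 1/2) 1 t := (hasDerivAt_id t).add_const _
  have h2 : HasDerivAt (fun s : ℝ => Real.log (s+1) - Real.log s) ((t+1)⁻¹ - t⁻¹) t := by
    have ha : HasDerivAt (fun s : ℝ => Real.log (s+1)) ((t+1)⁻¹) t := by
      have := (Real.hasDerivAt_log (by linarith : t+1 ≠ 0)).comp t ((hasDerivAt_id t).add_const 1)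
      simpa [Function.comp_def] using this
    exact ha.sub (Real.hasDerivAt_log (ne_of_gt ht))
  have := h1.mul h2
  refine this.congr_deriv ?_
  ring

lemma phiCH_anti : StrictAntiOn phiCH (Set.Ici 1) := by
  apply strictAntiOn_of_deriv_neg (convex_Ici 1)
  · intro s hs
    have hs' : (0:ℝ) < s := lt_of_lt_of_le one_pos hs
    exact (phiCH_hasDeriv hs').continuousAt.continuousWithinAt
  · intro s hs
    rw [interior_Ici] at hs
    have hs' : (1:ℝ) < s := hs
    have h0 : (0:ℝ) < s := by linarith
    rw [(phiCH_hasDeriv h0).deriv]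
    have hy : 1 < (s+1)/s := by
      rw [lt_div_iff₀ h0]; linarith
    have key := log_lt_half hy
    have hlog : Real.log ((s+1)/s) = Real.log (s+1) - Real.log s :=
      Real.log_div (by linarith) (ne_of_gt h0)
    rw [hlog] at key
    have halg : ((s+1)/s - ((s+1)/s)⁻¹)/2 = -((s + 1/2) * ((s+1)⁻¹ - s⁻¹)) := by
      rw [inv_div]
      field_simp
      ring
    rw [halg] at key
    linarith


lemma Hanti (a b : ℕ) (ha : 1 ≤ a) (hab : a ≤ b) :
    ((b:ℝ)+1)^(2*b+1) * (a:ℝ)^(2*a+1) ≤ ((a:ℝ)+1)^(2*a+1) * (b:ℝ)^(2*b+1) := by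
  have ha' : (1:ℝ) ≤ (a:ℝ) := by exact_mod_cast ha
  have hb' : (1:ℝ) ≤ (b:ℝ) := le_trans ha' (by exact_mod_cast hab)
  have ha0 : (0:ℝ) < a := by linarith
  have hb0 : (0:ℝ) < b := by linarith
  have hphi : phiCH (b:ℝ) ≤ phiCH (a:ℝ) := by
    rcases eq_or_lt_of_le (show (a:ℝ) ≤ (b:ℝ) by exact_mod_cast hab) with h | h
    · rw [h]
    · exact le_of_lt (phiCH_anti ha' (le_trans ha' (le_of_lt h)) h)
  simp only [phiCH] at hphi
  have h2 : ((2*b+1 : ℕ):ℝ) * Real.log (((b:ℝ)+1)/b) ≤ ((2*a+1 : ℕ):ℝ) * Real.log (((a:ℝ)+1)/a) := by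
    rw [Real.log_div (by linarith) (ne_of_gt hb0), Real.log_div (by linarith) (ne_of_gt ha0)]
    push_cast
    nlinarith [hphi]
  have h3 := Real.exp_le_exp.mpr h2
  rw [Real.exp_nat_mul, Real.exp_nat_mul,
    Real.exp_log (by positivity), Real.exp_log (by positivity)] at h3
  rw [div_pow, div_pow] at h3
  rw [div_le_div_iff₀ (by positivity) (by positivity)] at h3
  linarith [h3]

lemma choose_sq_lower (k : ℕ) (hk : 1 ≤ k) : ∀ m : ℕ, 1 ≤ m →
    ((k+m:ℕ):ℝ)^(2*(k+m)+1) ≤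
      8 * (((k+m).choose k : ℕ):ℝ)^2 * (k:ℝ)^(2*k+1) * (m:ℝ)^(2*m+1) := by
  refine Nat.le_induction ?_ ?_
  · -- base m = 1
    have h := Hanti 1 k (le_refl 1) hk
    have hc : (k+1).choose k = k+1 := Nat.choose_succ_self_right k
    have hk0 : (0:ℝ) < k := by exact_mod_cast hk
    push_cast [hc]
    norm_num at h
    have e : ((k:ℝ)+1)^(2*(k+1)+1) = ((k:ℝ)+1)^(2*k+1) * ((k:ℝ)+1)^2 := by
      rw [show 2*(k+1)+1 = (2*k+1)+2 from by omega, pow_add]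
    nlinarith [pow_pos (show (0:ℝ) < (k:ℝ)+1 by linarith) (2*k+1), sq_nonneg ((k:ℝ)+1),
      pow_pos hk0 (2*k+1)]
  · -- step
    intro m hm IH
    set N := k + m with hNdef
    have hkN : k ≤ N := Nat.le_add_right k m
    have hmN : m ≤ N := Nat.le_add_left m k
    have hN1 : 1 ≤ N := le_trans hk hkN
    have hcc : (N+1).choose k * (m+1) = (N+1) * N.choose k := by
      have h1 := Nat.add_one_mul_choose_eq N m
      have h2 : (N+1).choose (m+1) = (N+1).choose k := by
        rw [show N+1 = (m+1)+k by omega, Nat.choose_symm_add]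
      have h3 : N.choose m = N.choose k := by
        rw [show N = m + k by omega, Nat.choose_symm_add]
      rw [← h2, ← h3]
      omega
    have hccR : ((N+1).choose k : ℝ) * ((m:ℝ)+1) = ((N:ℝ)+1) * (N.choose k : ℝ) := by
      exact_mod_cast congrArg (Nat.cast : ℕ → ℝ) hcc
    have hH := Hanti m N hm hmN
    have hm0 : (0:ℝ) < m := by exact_mod_cast hm
    have hN0 : (0:ℝ) < N := by exact_mod_cast hN1
    have hk0 : (0:ℝ) < k := by exact_mod_cast hk
    have hcast : ((k+(m+1):ℕ):ℝ) = (N:ℝ)+1 := by push_cast [hNdef]; ring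
    have hexp : 2*(k+(m+1))+1 = (2*N+1)+2 := by omega
    rw [hcast, hexp]
    set C := (N.choose k : ℝ) with hCdef
    set C' := ((N+1).choose k : ℝ) with hC'def
    set K := (k:ℝ)
    set M := (m:ℝ)
    have key : ((N:ℝ)+1)^((2*N+1)+2) * (M^(2*m+1) * (M+1)^2) ≤
        (8 * C'^2 * K^(2*k+1) * (((m+1:ℕ)):ℝ)^(2*(m+1)+1)) * (M^(2*m+1) * (M+1)^2) := by
      have hcast2 : (((m+1:ℕ)):ℝ) = M+1 := by push_cast; ring
      rw [hcast2]
      calc ((N:ℝ)+1)^((2*N+1)+2) * (M^(2*m+1) * (M+1)^2)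
          = (((N:ℝ)+1)^(2*N+1) * M^(2*m+1)) * (((N:ℝ)+1)^2*(M+1)^2) := by
            rw [pow_add]; ring
        _ ≤ ((M+1)^(2*m+1) * (N:ℝ)^(2*N+1)) * (((N:ℝ)+1)^2*(M+1)^2) := by
            apply mul_le_mul_of_nonneg_right hH (by positivity)
        _ ≤ ((M+1)^(2*m+1) * (8 * C^2 * K^(2*k+1) * M^(2*m+1))) * (((N:ℝ)+1)^2*(M+1)^2) := by
            apply mul_le_mul_of_nonneg_right _ (by positivity)
            exact mul_le_mul_of_nonneg_left IH (by positivity)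
        _ = (8 * C'^2 * K^(2*k+1) * (M+1)^(2*(m+1)+1)) * (M^(2*m+1) * (M+1)^2) := by
            have hexp2 : 2*(m+1)+1 = (2*m+1)+2 := by omega
            rw [hexp2, pow_add, pow_add]
            linear_combination (-8*K^(2*k+1)*M^(2*m+1)*(M+1)^(2*m+1)*(M+1)^2*
              (((N:ℝ)+1)*C + C'*(M+1))) * hccR
    exact le_of_mul_le_mul_right key (by positivity)


lemma stirling_lower (j : ℕ) (hj : 1 ≤ j) : Real.sqrt π ≤ Stirling.stirlingSeq j := by
  obtain ⟨i, rfl⟩ := Nat.exists_eq_add_of_le hj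
  have ht : Filter.Tendsto (Stirling.stirlingSeq ∘ Nat.succ) Filter.atTop (nhds (Real.sqrt π)) := by
    have := Stirling.tendsto_stirlingSeq_sqrt_pi
    exact this.comp (Filter.tendsto_add_atTop_nat 1)
  have := Stirling.stirlingSeq'_antitone.le_of_tendsto ht i
  simpa [Nat.add_comm] using this

lemma stirling_upper (j : ℕ) (hj : 1 ≤ j) : Stirling.stirlingSeq j ≤ exp 1 / Real.sqrt 2 := by
  obtain ⟨i, rfl⟩ := Nat.exists_eq_add_of_le hj
  have := Stirling.stirlingSeq'_antitone (Nat.zero_le i)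
  simp only [Function.comp] at this
  rw [← Stirling.stirlingSeq_one]
  simpa [Nat.add_comm] using this

lemma factorial_sq_mul (j : ℕ) (hj : 1 ≤ j) :
    (j.factorial : ℝ)^2 * (exp 1)^(2*j) =
      (Stirling.stirlingSeq j)^2 * (2*(j:ℝ)) * (j:ℝ)^(2*j) := by
  have hj0 : (0:ℝ) < j := by exact_mod_cast hj
  have hD : (0:ℝ) < Real.sqrt (2*(j:ℝ)) * ((j:ℝ)/exp 1)^j := by positivity
  have e1 : (j.factorial : ℝ) = Stirling.stirlingSeq j * (Real.sqrt (2*(j:ℝ)) * ((j:ℝ)/exp 1)^j) := by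
    rw [Stirling.stirlingSeq]
    field_simp
  have hsq : (Real.sqrt (2*(j:ℝ)))^2 = 2*(j:ℝ) := Real.sq_sqrt (by positivity)
  have h3 : (((j:ℝ)/exp 1)^j)^2 * (exp 1)^(2*j) = (j:ℝ)^(2*j) := by
    rw [← pow_mul, mul_comm j 2, div_pow, div_mul_cancel₀]
    exact (pow_pos (Real.exp_pos 1) _).ne'
  calc (j.factorial : ℝ)^2 * (exp 1)^(2*j)
      = (Stirling.stirlingSeq j)^2 * (Real.sqrt (2*(j:ℝ)))^2 *
        ((((j:ℝ)/exp 1)^j)^2 * (exp 1)^(2*j)) := by rw [e1]; ring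
    _ = (Stirling.stirlingSeq j)^2 * (2*(j:ℝ)) * (j:ℝ)^(2*j) := by rw [hsq, h3]

lemma choose_sq_upper (k m : ℕ) (hk : 1 ≤ k) (hm : 1 ≤ m) :
    π * (((k+m).choose k : ℕ):ℝ)^2 * (k:ℝ)^(2*k+1) * (m:ℝ)^(2*m+1) ≤
      ((k+m:ℕ):ℝ)^(2*(k+m)+1) := by
  set n := k + m with hn
  have hn1 : 1 ≤ n := le_trans hk (Nat.le_add_right k m)
  set sk := Stirling.stirlingSeq k
  set sm := Stirling.stirlingSeq m
  set sn := Stirling.stirlingSeq n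
  have hsk : Real.sqrt π ≤ sk := stirling_lower k hk
  have hsm : Real.sqrt π ≤ sm := stirling_lower m hm
  have hsn : sn ≤ exp 1 / Real.sqrt 2 := stirling_upper n hn1
  have hsn0 : 0 ≤ sn := le_trans (Real.sqrt_nonneg π) (stirling_lower n hn1)
  have hπ : (Real.sqrt π)^2 = π := Real.sq_sqrt pi_pos.le
  have h2 : (Real.sqrt 2)^2 = 2 := Real.sq_sqrt (by norm_num)
  have hs2 : (0:ℝ) < Real.sqrt 2 := by positivity
  have hEsq : exp 1 ^ 2 < 4 * π := by
    nlinarith [Real.exp_one_lt_d9, Real.pi_gt_d6, Real.exp_pos 1]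
  have hS : π * sn^2 * 2 ≤ 4 * (sk^2 * sm^2) := by
    have h1 : sn^2 ≤ (exp 1 / Real.sqrt 2)^2 := by
      apply pow_le_pow_left₀ hsn0 hsn
    have h2' : (exp 1 / Real.sqrt 2)^2 = exp 1 ^2 / 2 := by
      rw [div_pow, h2]
    have h3 : π ≤ sk^2 := by nlinarith [Real.sqrt_nonneg π]
    have h4 : π ≤ sm^2 := by nlinarith [Real.sqrt_nonneg π]
    nlinarith [pi_pos, sq_nonneg sn, sq_nonneg sk, sq_nonneg sm]
  -- factorial identities
  have ek := factorial_sq_mul k hk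
  have em := factorial_sq_mul m hm
  have en := factorial_sq_mul n hn1
  have hcf : ((n.choose k : ℕ):ℝ) * (k.factorial:ℝ) * (m.factorial:ℝ) = (n.factorial : ℝ) := by
    have := Nat.choose_mul_factorial_mul_factorial (show k ≤ n from Nat.le_add_right k m)
    rw [show n - k = m from by omega] at this
    exact_mod_cast congrArg (Nat.cast : ℕ → ℝ) this
  have hK0 : (0:ℝ) < (k:ℝ) := by exact_mod_cast hk
  have hM0 : (0:ℝ) < (m:ℝ) := by exact_mod_cast hm
  have hN0 : (0:ℝ) < (n:ℝ) := by exact_mod_cast hn1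
  have hP0 : (0:ℝ) < (k.factorial:ℝ) := by exact_mod_cast Nat.factorial_pos k
  have hQ0 : (0:ℝ) < (m.factorial:ℝ) := by exact_mod_cast Nat.factorial_pos m
  set C := ((n.choose k : ℕ):ℝ)
  set P := (k.factorial:ℝ)
  set Q := ((m.factorial:ℝ):ℝ)
  set R := (n.factorial : ℝ)
  set K := (k:ℝ)
  set M := (m:ℝ)
  set N := ((n:ℕ):ℝ)
  have key : (π * C^2 * K^(2*k+1) * M^(2*m+1)) * ((P*Q*(exp 1)^n)^2) ≤
      (N^(2*n+1)) * ((P*Q*(exp 1)^n)^2) := by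
    have l1 : (π * C^2 * K^(2*k+1) * M^(2*m+1)) * ((P*Q*(exp 1)^n)^2)
        = (π * sn^2 * 2) * (N^(2*n+1) * K^(2*k+1) * M^(2*m+1)) := by
      have expand : (π * C^2 * K^(2*k+1) * M^(2*m+1)) * ((P*Q*(exp 1)^n)^2)
          = π * K^(2*k+1) * M^(2*m+1) * ((C*P*Q)^2 * (exp 1)^(2*n)) := by ring
      rw [expand, hcf, en]
      ring
    have l2 : (N^(2*n+1)) * ((P*Q*(exp 1)^n)^2)
        = (4 * (sk^2 * sm^2)) * (N^(2*n+1) * K^(2*k+1) * M^(2*m+1)) := by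
      have expand : (N^(2*n+1)) * ((P*Q*(exp 1)^n)^2)
          = N^(2*n+1) * ((P^2 * (exp 1)^(2*k)) * (Q^2 * (exp 1)^(2*m))) := by
        rw [show 2*n = 2*k + 2*m from by omega]
        ring
      rw [expand, ek, em]
      ring
    rw [l1, l2]
    exact mul_le_mul_of_nonneg_right hS (by positivity)
  exact le_of_mul_le_mul_right key (by positivity)

lemma dkl_rpow_eq_aux (k m : ℕ) (x p : ℝ) (hx0 : 0 < x) (hx1 : x < 1)
    (hp0 : 0 < p) (hp1 : p < 1) (hk0 : 0 < k) (hm0 : 0 < m)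
    (hk : (k:ℝ) = x * (k+m:ℕ)) (hm : (m:ℝ) = (1-x) * (k+m:ℕ)) :
    (2:ℝ) ^ (-(dkl x p) * ((k+m:ℕ):ℝ)) =
      ((k+m:ℕ):ℝ)^(k+m) * (p^k * (1-p)^m) / ((k:ℝ)^k * (m:ℝ)^m) := by
  have hl2 : Real.log 2 ≠ 0 := by
    have := Real.log_pos (by norm_num : (1:ℝ) < 2); linarith
  have hK0 : (0:ℝ) < k := by exact_mod_cast hk0
  have hM0 : (0:ℝ) < m := by exact_mod_cast hm0
  have hN0 : (0:ℝ) < ((k+m:ℕ):ℝ) := by positivity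
  rw [Real.rpow_def_of_pos (by norm_num : (0:ℝ) < 2)]
  have hd : Real.log 2 * dkl x p =
      x * (Real.log x - Real.log p) + (1-x) * (Real.log (1-x) - Real.log (1-p)) := by
    rw [dkl, Real.logb, Real.logb,
      Real.log_div (ne_of_gt hx0) (ne_of_gt hp0),
      Real.log_div (by linarith : (1:ℝ)-x ≠ 0) (by linarith : (1:ℝ)-p ≠ 0)]
    field_simp
  have harg : Real.log 2 * (-(dkl x p) * ((k+m:ℕ):ℝ)) =
      (k:ℝ) * (Real.log p - Real.log x) + (m:ℝ) * (Real.log (1-p) - Real.log (1-x)) := by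
    have h0 : Real.log 2 * (-(dkl x p) * ((k+m:ℕ):ℝ)) =
        -((x * (Real.log x - Real.log p) + (1-x) * (Real.log (1-x) - Real.log (1-p))) * ((k+m:ℕ):ℝ)) := by
      rw [← hd]; ring
    rw [h0]
    push_cast at hk hm ⊢
    linear_combination (Real.log x - Real.log p) * hk + (Real.log (1-x) - Real.log (1-p)) * hm
  rw [harg, Real.exp_add]
  have e1 : Real.exp ((k:ℝ) * (Real.log p - Real.log x)) = (p/x)^k := by
    rw [mul_comm, Real.exp_mul, Real.exp_sub, Real.exp_log hp0, Real.exp_log hx0,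
      Real.rpow_natCast]
  have e2 : Real.exp ((m:ℝ) * (Real.log (1-p) - Real.log (1-x))) = ((1-p)/(1-x))^m := by
    rw [mul_comm, Real.exp_mul, Real.exp_sub, Real.exp_log (by linarith), Real.exp_log (by linarith),
      Real.rpow_natCast]
  rw [e1, e2]
  have hxv : x = (k:ℝ) / ((k+m:ℕ):ℝ) := by rw [hk]; field_simp
  have hx1v : 1 - x = (m:ℝ) / ((k+m:ℕ):ℝ) := by rw [hm]; field_simp
  rw [hx1v, hxv, div_div_eq_mul_div, div_div_eq_mul_div, div_pow, div_pow, div_mul_div_comm]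
  congr 1
  rw [mul_pow, mul_pow, pow_add]
  ring

lemma dkl_rpow_eq (n k m : ℕ) (hkm : k + m = n) (x p : ℝ) (hx0 : 0 < x) (hx1 : x < 1)
    (hp0 : 0 < p) (hp1 : p < 1) (hk0 : 0 < k) (hm0 : 0 < m)
    (hk : (k:ℝ) = x * n) (hm : (m:ℝ) = (1-x) * n) :
    (2:ℝ) ^ (-(dkl x p) * (n:ℝ)) =
      (n:ℝ)^n * (p^k * (1-p)^m) / ((k:ℝ)^k * (m:ℝ)^m) := by
  subst hkm
  exact dkl_rpow_eq_aux k m x p hx0 hx1 hp0 hp1 hk0 hm0 hk hm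

set_option maxHeartbeats 1000000 in
/-- **Tight Chernoff–Hoeffding, lower tail, integral case.** For `0 < x < p < 1` with
`xn` an integer, `2^{-Dkl(x‖p)n}/√(8nx(1-x)) ≤ P[Y ≤ xn] ≤
(p√(1-x))/((p-x)√(πx)) · 2^{-Dkl(x‖p)n}/√n`. -/
theorem chernoff_hoeffding_le_integral (n : ℕ) (hn : 0 < n) (x p : ℝ)
    (hx0 : 0 < x) (hxp : x < p) (hp1 : p < 1) (hint : ∃ k : ℕ, (k : ℝ) = x * n) :
    (2 : ℝ) ^ (-(dkl x p) * n) / Real.sqrt (8 * n * x * (1 - x)) ≤ binomPLE n p (x * n) ∧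
    binomPLE n p (x * n) ≤
      p * Real.sqrt (1 - x) / ((p - x) * Real.sqrt (Real.pi * x)) *
        ((2 : ℝ) ^ (-(dkl x p) * n) / Real.sqrt n) := by
  obtain ⟨k, hkx⟩ := hint
  have hx1 : x < 1 := hxp.trans hp1
  have hp0 : 0 < p := hx0.trans hxp
  have hq0 : 0 < 1 - p := by linarith
  have hn0 : (0:ℝ) < n := by exact_mod_cast hn
  have hk1 : 1 ≤ k := by
    rcases Nat.eq_zero_or_pos k with h | h
    · exfalso; rw [h] at hkx; push_cast at hkx; nlinarith
    · exact h
  have hK0 : (0:ℝ) < k := by exact_mod_cast hk1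
  have hkn : k < n := by
    have : (k:ℝ) < n := by rw [hkx]; nlinarith
    exact_mod_cast this
  obtain ⟨m, hkm⟩ : ∃ m, k + m = n := ⟨n - k, by omega⟩
  have hm1 : 1 ≤ m := by omega
  have hM0 : (0:ℝ) < m := by exact_mod_cast hm1
  have hkmR : (k:ℝ) + (m:ℝ) = (n:ℝ) := by exact_mod_cast congrArg (Nat.cast : ℕ → ℝ) hkm
  have hmx : (m:ℝ) = (1-x) * n := by linear_combination hkmR - hkx
  have hid : (2:ℝ) ^ (-(dkl x p) * (n:ℝ)) =
      (n:ℝ)^n * (p^k * (1-p)^m) / ((k:ℝ)^k * (m:ℝ)^m) :=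
    dkl_rpow_eq n k m hkm x p hx0 hx1 hp0 hp1 hk1 hm1 hkx hmx
  have hCl : ((n:ℝ))^(2*n+1) ≤ 8*((n.choose k : ℕ):ℝ)^2*(k:ℝ)^(2*k+1)*(m:ℝ)^(2*m+1) := by
    have h := choose_sq_lower k hk1 m hm1
    rw [hkm] at h
    exact h
  have hCu : π * ((n.choose k : ℕ):ℝ)^2*(k:ℝ)^(2*k+1)*(m:ℝ)^(2*m+1) ≤ ((n:ℝ))^(2*n+1) := by
    have h := choose_sq_upper k m hk1 hm1
    rw [hkm] at h
    exact h
  set C := ((n.choose k : ℕ):ℝ) with hCdef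
  have hC0 : (0:ℝ) < C := by
    rw [hCdef]
    exact_mod_cast Nat.choose_pos hkn.le
  have hsqn : ((n:ℝ)^n * Real.sqrt n)^2 = (n:ℝ)^(2*n+1) := by
    rw [mul_pow, Real.sq_sqrt hn0.le, ← pow_mul, ← pow_succ]
    congr 1
    omega
  -- lower sqrt bound
  have hlow2 : (n:ℝ)^n * Real.sqrt n ≤ C * ((k:ℝ)^k*(m:ℝ)^m) * Real.sqrt (8*((k:ℝ)*(m:ℝ))) := by
    have hb2 : (C * ((k:ℝ)^k*(m:ℝ)^m) * Real.sqrt (8*((k:ℝ)*(m:ℝ))))^2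
        = 8*C^2*(k:ℝ)^(2*k+1)*(m:ℝ)^(2*m+1) := by
      rw [mul_pow, mul_pow, Real.sq_sqrt (by positivity)]
      ring
    calc (n:ℝ)^n * Real.sqrt n = Real.sqrt (((n:ℝ)^n * Real.sqrt n)^2) :=
          (Real.sqrt_sq (by positivity)).symm
      _ ≤ Real.sqrt ((C * ((k:ℝ)^k*(m:ℝ)^m) * Real.sqrt (8*((k:ℝ)*(m:ℝ))))^2) := by
          apply Real.sqrt_le_sqrt
          rw [hsqn, hb2]
          exact hCl
      _ = C * ((k:ℝ)^k*(m:ℝ)^m) * Real.sqrt (8*((k:ℝ)*(m:ℝ))) :=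
          Real.sqrt_sq (by positivity)
  -- upper sqrt bound
  have hup2 : C * ((k:ℝ)^k*(m:ℝ)^m) * Real.sqrt (π*((k:ℝ)*(m:ℝ))) ≤ (n:ℝ)^n * Real.sqrt n := by
    have hb2 : (C * ((k:ℝ)^k*(m:ℝ)^m) * Real.sqrt (π*((k:ℝ)*(m:ℝ))))^2
        = π*C^2*(k:ℝ)^(2*k+1)*(m:ℝ)^(2*m+1) := by
      rw [mul_pow, mul_pow, Real.sq_sqrt (by positivity)]
      ring
    calc C * ((k:ℝ)^k*(m:ℝ)^m) * Real.sqrt (π*((k:ℝ)*(m:ℝ)))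
        = Real.sqrt ((C * ((k:ℝ)^k*(m:ℝ)^m) * Real.sqrt (π*((k:ℝ)*(m:ℝ))))^2) :=
          (Real.sqrt_sq (by positivity)).symm
      _ ≤ Real.sqrt (((n:ℝ)^n * Real.sqrt n)^2) := by
          apply Real.sqrt_le_sqrt
          rw [hsqn, hb2]
          exact hCu
      _ = (n:ℝ)^n * Real.sqrt n := Real.sqrt_sq (by positivity)
  -- rewrite binomPLE
  have hPLE : binomPLE n p (x*n) = ∑ i ∈ Finset.range (k+1), (n.choose i : ℝ)*p^i*(1-p)^(n-i) := by
    rw [binomPLE, ← Finset.sum_subset (Finset.range_subset_range.mpr (show k+1 ≤ n+1 by omega))]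
    · apply Finset.sum_congr rfl
      intro i hi
      rw [if_pos]
      rw [← hkx]
      exact_mod_cast Nat.lt_succ_iff.mp (Finset.mem_range.mp hi)
    · intro i _ his
      have hik : k < i := by simp only [Finset.mem_range, not_lt] at his; omega
      rw [if_neg]
      rw [← hkx]
      push_neg
      exact_mod_cast hik
  constructor
  · -- LOWER BOUND
    have hlb : C*p^k*(1-p)^m ≤ binomPLE n p (x*n) := by
      rw [hPLE]
      have hmem : k ∈ Finset.range (k+1) := Finset.self_mem_range_succ k
      have h9 : (n.choose k : ℝ)*p^k*(1-p)^(n-k) ≤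
          ∑ i ∈ Finset.range (k+1), (n.choose i : ℝ)*p^i*(1-p)^(n-i) :=
        Finset.single_le_sum (f := fun i => (n.choose i : ℝ)*p^i*(1-p)^(n-i))
          (fun i _ => by positivity) hmem
      rw [show n - k = m from by omega] at h9
      exact h9
    refine le_trans ?_ hlb
    rw [hid]
    have h8 : Real.sqrt (8*(n:ℝ)*x*(1-x)) = Real.sqrt (8*((k:ℝ)*(m:ℝ))) / Real.sqrt n := by
      have he : 8*((k:ℝ)*(m:ℝ)) = (8*(n:ℝ)*x*(1-x))*(n:ℝ) := by
        rw [hkx, hmx]; ring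
      rw [eq_div_iff (ne_of_gt (Real.sqrt_pos.mpr hn0)),
        ← Real.sqrt_mul (by nlinarith : (0:ℝ) ≤ 8*(n:ℝ)*x*(1-x)), ← he]
    rw [h8, div_div_eq_mul_div, div_le_iff₀ (by positivity : (0:ℝ) < Real.sqrt (8*((k:ℝ)*(m:ℝ)))),
      div_mul_eq_mul_div, div_le_iff₀ (by positivity : (0:ℝ) < (k:ℝ)^k*(m:ℝ)^m)]
    have h10 := mul_le_mul_of_nonneg_right hlow2 (show (0:ℝ) ≤ p^k*(1-p)^m by positivity)
    ring_nf at h10 ⊢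
    linarith
  · -- UPPER BOUND
    set r := ((k:ℝ)*(1-p))/((m:ℝ)*p) with hrdef
    have hr0 : 0 ≤ r := by positivity
    have hr1 : r < 1 := by
      rw [hrdef, div_lt_one (by positivity)]
      rw [hkx, hmx]
      nlinarith
    have h1r : 1 - r = (n:ℝ)*(p-x)/((m:ℝ)*p) := by
      rw [hrdef]
      field_simp
      linear_combination (p : ℝ) * hkmR - hkx
    have hstep : ∀ i, i < k → (n.choose i:ℝ)*p^i*(1-p)^(n-i) ≤
        r * ((n.choose (i+1):ℝ)*p^(i+1)*(1-p)^(n-(i+1))) := by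
      intro i hik
      have hin : i < n := lt_of_lt_of_le hik hkn.le
      have hcc : (n.choose (i+1) : ℝ) * ((i:ℝ)+1) = (n.choose i:ℝ) * ((n:ℝ) - i) := by
        have h := Nat.choose_succ_right_eq n i
        have h2 : ((n - i : ℕ):ℝ) = (n:ℝ) - i := by
          rw [Nat.cast_sub hin.le]
        have h3 := congrArg (Nat.cast : ℕ → ℝ) h
        push_cast at h3
        rw [← h2]
        exact_mod_cast h3
      have hCp1 : (0:ℝ) < (n.choose (i+1):ℝ) := by exact_mod_cast Nat.choose_pos hin
      have hcm : (n.choose i:ℝ) * m ≤ (k:ℝ) * (n.choose (i+1):ℝ) := by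
        have hni : (0:ℝ) < (n:ℝ) - i := by
          have : (i:ℝ) < n := by exact_mod_cast hin
          linarith
        have h3 : ((i:ℝ)+1) ≤ k := by exact_mod_cast hik
        have h4 : (m:ℝ) ≤ (n:ℝ)-(i:ℝ) := by
          have h5 : (i:ℝ) ≤ k := by linarith
          linarith [hkmR]
        have h5 : (n.choose i:ℝ) * m * ((n:ℝ)-i) = (n.choose (i+1):ℝ)*(((i:ℝ)+1)*m) := by
          linear_combination (-(m:ℝ)) * hcc
        have h6 : (n.choose (i+1):ℝ)*(((i:ℝ)+1)*m) ≤ (n.choose (i+1):ℝ)*((k:ℝ)*((n:ℝ)-i)) := by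
          apply mul_le_mul_of_nonneg_left _ hCp1.le
          have h6a := mul_le_mul_of_nonneg_right h3 hM0.le
          have h6b := mul_le_mul_of_nonneg_left h4 hK0.le
          linarith
        have h7 : (n.choose i:ℝ) * m * ((n:ℝ)-i) ≤ (k:ℝ) * (n.choose (i+1):ℝ) * ((n:ℝ)-i) := by
          rw [h5]
          calc (n.choose (i+1):ℝ)*(((i:ℝ)+1)*m) ≤ (n.choose (i+1):ℝ)*((k:ℝ)*((n:ℝ)-i)) := h6
            _ = (k:ℝ) * (n.choose (i+1):ℝ) * ((n:ℝ)-i) := by ring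
        exact le_of_mul_le_mul_right h7 hni
      have hpow : (1-p)^(n-i) = (1-p)^(n-(i+1)) * (1-p) := by
        rw [← pow_succ]
        congr 1
        omega
      rw [hpow, hrdef, div_mul_eq_mul_div, le_div_iff₀ (by positivity), pow_succ]
      have h11 := mul_le_mul_of_nonneg_right hcm
        (show (0:ℝ) ≤ p^i*(1-p)^(n-(i+1))*p*(1-p) by positivity)
      calc (n.choose i:ℝ) * p^i * ((1-p)^(n-(i+1))*(1-p)) * ((m:ℝ)*p)
          = (n.choose i:ℝ) * m * (p^i*(1-p)^(n-(i+1))*p*(1-p)) := by ring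
        _ ≤ (k:ℝ) * (n.choose (i+1):ℝ) * (p^i*(1-p)^(n-(i+1))*p*(1-p)) := h11
        _ = (k:ℝ)*(1-p) * ((n.choose (i+1):ℝ)*(p^i*p)*(1-p)^(n-(i+1))) := by ring
    have hgeo : ∀ j, j ≤ k → (n.choose (k-j):ℝ)*p^(k-j)*(1-p)^(n-(k-j)) ≤
        r^j * ((n.choose k:ℝ)*p^k*(1-p)^(n-k)) := by
      intro j
      induction j with
      | zero => intro _; simp
      | succ j ih =>
        intro hjk
        have hjk' : j ≤ k := by omega
        have h1 := hstep (k-(j+1)) (by omega)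
        rw [show k-(j+1)+1 = k-j from by omega] at h1
        calc (n.choose (k-(j+1)):ℝ)*p^(k-(j+1))*(1-p)^(n-(k-(j+1)))
            ≤ r * ((n.choose (k-j):ℝ)*p^(k-j)*(1-p)^(n-(k-j))) := h1
          _ ≤ r * (r^j * ((n.choose k:ℝ)*p^k*(1-p)^(n-k))) :=
              mul_le_mul_of_nonneg_left (ih hjk') hr0
          _ = r^(j+1) * ((n.choose k:ℝ)*p^k*(1-p)^(n-k)) := by ring
    have hgsum : ∑ j ∈ Finset.range (k+1), r^j ≤ (1-r)⁻¹ := by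
      rw [geom_sum_eq (by linarith : r ≠ 1)]
      have h2 : (r^(k+1)-1)/(r-1) = (1-r^(k+1))/(1-r) := by
        rw [← neg_div_neg_eq]
        ring_nf
      rw [h2, ← one_div]
      gcongr
      · nlinarith [pow_nonneg hr0 (k+1)]
    have hfk : (0:ℝ) ≤ (n.choose k:ℝ)*p^k*(1-p)^(n-k) := by positivity
    have hsum : binomPLE n p (x*n) ≤ ((n.choose k:ℝ)*p^k*(1-p)^(n-k)) * (1-r)⁻¹ := by
      rw [hPLE]
      have hrefl : ∑ i ∈ Finset.range (k+1), (n.choose i:ℝ)*p^i*(1-p)^(n-i)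
          = ∑ j ∈ Finset.range (k+1), (n.choose (k-j):ℝ)*p^(k-j)*(1-p)^(n-(k-j)) := by
        rw [← Finset.sum_range_reflect (fun i => (n.choose i:ℝ)*p^i*(1-p)^(n-i)) (k+1)]
        simp only [Nat.add_sub_cancel]
      rw [hrefl]
      calc ∑ j ∈ Finset.range (k+1), (n.choose (k-j):ℝ)*p^(k-j)*(1-p)^(n-(k-j))
          ≤ ∑ j ∈ Finset.range (k+1), r^j * ((n.choose k:ℝ)*p^k*(1-p)^(n-k)) :=
            Finset.sum_le_sum (fun j hj => hgeo j (Nat.lt_succ_iff.mp (Finset.mem_range.mp hj)))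
        _ = (∑ j ∈ Finset.range (k+1), r^j) * ((n.choose k:ℝ)*p^k*(1-p)^(n-k)) := by
            rw [Finset.sum_mul]
        _ ≤ (1-r)⁻¹ * ((n.choose k:ℝ)*p^k*(1-p)^(n-k)) :=
            mul_le_mul_of_nonneg_right hgsum hfk
        _ = ((n.choose k:ℝ)*p^k*(1-p)^(n-k)) * (1-r)⁻¹ := mul_comm _ _
    refine hsum.trans ?_
    rw [show n - k = m from by omega, hid]
    have hpx : (0:ℝ) < p - x := by linarith
    have h1rinv : (1-r)⁻¹ = ((m:ℝ)*p)/((n:ℝ)*(p-x)) := by rw [h1r, inv_div]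
    rw [h1rinv]
    have hx1' : (0:ℝ) ≤ 1 - x := by linarith
    have hsqeq : (m:ℝ) * Real.sqrt (π*x) = Real.sqrt (1-x) * Real.sqrt (π*((k:ℝ)*(m:ℝ))) := by
      have hsq2 : ((m:ℝ)*Real.sqrt (π*x))^2 = (Real.sqrt (1-x)*Real.sqrt (π*((k:ℝ)*(m:ℝ))))^2 := by
        rw [mul_pow, mul_pow, Real.sq_sqrt (by positivity), Real.sq_sqrt hx1',
          Real.sq_sqrt (by positivity)]
        rw [hkx, hmx]
        ring
      calc (m:ℝ)*Real.sqrt (π*x) = Real.sqrt (((m:ℝ)*Real.sqrt (π*x))^2) :=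
            (Real.sqrt_sq (by positivity)).symm
        _ = Real.sqrt ((Real.sqrt (1-x)*Real.sqrt (π*((k:ℝ)*(m:ℝ))))^2) := by rw [hsq2]
        _ = Real.sqrt (1-x)*Real.sqrt (π*((k:ℝ)*(m:ℝ))) := Real.sqrt_sq (by positivity)
    have hcore : C*((k:ℝ)^k*(m:ℝ)^m)*((m:ℝ)*Real.sqrt (π*x))*Real.sqrt n ≤
        (n:ℝ)^n*Real.sqrt (1-x)*(n:ℝ) := by
      calc C*((k:ℝ)^k*(m:ℝ)^m)*((m:ℝ)*Real.sqrt (π*x))*Real.sqrt n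
          = (C*((k:ℝ)^k*(m:ℝ)^m)*Real.sqrt (π*((k:ℝ)*(m:ℝ)))) * (Real.sqrt (1-x)*Real.sqrt n) := by
            rw [hsqeq]; ring
        _ ≤ ((n:ℝ)^n*Real.sqrt n) * (Real.sqrt (1-x)*Real.sqrt n) :=
            mul_le_mul_of_nonneg_right hup2 (by positivity)
        _ = (n:ℝ)^n*Real.sqrt (1-x)*(Real.sqrt n*Real.sqrt n) := by ring
        _ = (n:ℝ)^n*Real.sqrt (1-x)*(n:ℝ) := by rw [Real.mul_self_sqrt hn0.le]
    have hL : C*p^k*(1-p)^m * (((m:ℝ)*p)/((n:ℝ)*(p-x))) =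
        (C*p^k*(1-p)^m*((m:ℝ)*p)) / ((n:ℝ)*(p-x)) := by ring
    have hsπx : (0:ℝ) < Real.sqrt (π*x) := Real.sqrt_pos.mpr (by positivity)
    have hsn' : (0:ℝ) < Real.sqrt (n:ℝ) := Real.sqrt_pos.mpr hn0
    have hR : p*Real.sqrt (1-x)/((p-x)*Real.sqrt (π*x)) *
          ((n:ℝ)^n*(p^k*(1-p)^m)/((k:ℝ)^k*(m:ℝ)^m)/Real.sqrt n)
        = ((n:ℝ)^n*(p^k*(1-p)^m)*(p*Real.sqrt (1-x))) /
          (((k:ℝ)^k*(m:ℝ)^m)*((p-x)*Real.sqrt (π*x))*Real.sqrt n) := by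
      have ne1 : (p-x) ≠ 0 := ne_of_gt hpx
      have ne2 : Real.sqrt (π*x) ≠ 0 := ne_of_gt hsπx
      have ne3 : Real.sqrt (n:ℝ) ≠ 0 := ne_of_gt hsn'
      have ne4 : (k:ℝ)^k ≠ 0 := by positivity
      have ne5 : (m:ℝ)^m ≠ 0 := by positivity
      field_simp
    have hden2 : (0:ℝ) < (k:ℝ)^k*(m:ℝ)^m*((p-x)*Real.sqrt (π*x))*Real.sqrt n :=
      mul_pos (mul_pos (mul_pos (by positivity) (by positivity)) (mul_pos hpx hsπx)) hsn'
    rw [hL, hR, div_le_div_iff₀ (by positivity) hden2]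
    have h12 := mul_le_mul_of_nonneg_right hcore
      (mul_nonneg (mul_nonneg (by positivity : (0:ℝ) ≤ p^k*(1-p)^m) hp0.le) hpx.le)
    calc C*p^k*(1-p)^m*((m:ℝ)*p) * (((k:ℝ)^k*(m:ℝ)^m)*((p-x)*Real.sqrt (π*x))*Real.sqrt n)
        = (C*((k:ℝ)^k*(m:ℝ)^m)*((m:ℝ)*Real.sqrt (π*x))*Real.sqrt n) * (p^k*(1-p)^m*p*(p-x)) := by
          ring
      _ ≤ ((n:ℝ)^n*Real.sqrt (1-x)*(n:ℝ)) * (p^k*(1-p)^m*p*(p-x)) := h12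
      _ = (n:ℝ)^n*(p^k*(1-p)^m)*(p*Real.sqrt (1-x)) * ((n:ℝ)*(p-x)) := by ring
end

section
/- Let n be a positive integer, x and p probabilities with 0 < p < x < 1 such that x·n is an integer, and let Y ~ Bin(n,p). Then 2^{-Dkl(x‖p)·n}/√(8·n·x·(1-x)) ≤ P[Y ≥ xn] ≤ ((1-p)·√x)/((x-p)·√(π·(1-x))) · 2^{-Dkl(x‖p)·n}/√n. -/
open Real Finset

noncomputable def stf (n : ℕ) : ℝ := Real.sqrt (2*n) * ((n:ℝ) / Real.exp 1)^n

lemma stf_pos {n : ℕ} (h : 1 ≤ n) : 0 < stf n := by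
  have : (0:ℝ) < n := by exact_mod_cast h
  unfold stf; positivity

lemma stirling_ge (n : ℕ) : Real.sqrt Real.pi ≤ Stirling.stirlingSeq (n+1) := by
  have h2 : Filter.Tendsto (Stirling.stirlingSeq ∘ Nat.succ) Filter.atTop (nhds (Real.sqrt Real.pi)) :=
    (Filter.tendsto_add_atTop_iff_nat 1).mpr Stirling.tendsto_stirlingSeq_sqrt_pi
  exact Stirling.stirlingSeq'_antitone.le_of_tendsto h2 n

lemma fact_eq {n : ℕ} (h : 1 ≤ n) : (n.factorial : ℝ) = Stirling.stirlingSeq n * stf n := by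
  rw [Stirling.stirlingSeq, stf, div_mul_cancel₀]
  exact (stf_pos h).ne'

lemma fact_lb {n : ℕ} (h : 1 ≤ n) : Real.sqrt Real.pi * stf n ≤ (n.factorial : ℝ) := by
  obtain ⟨m, rfl⟩ : ∃ m, n = m + 1 := ⟨n - 1, by omega⟩
  rw [fact_eq (by omega)]
  exact mul_le_mul_of_nonneg_right (stirling_ge m) (stf_pos h).le

lemma fact_ub1 {n : ℕ} (h : 1 ≤ n) : (n.factorial : ℝ) ≤ (Real.exp 1 / Real.sqrt 2) * stf n := by
  obtain ⟨m, rfl⟩ : ∃ m, n = m + 1 := ⟨n - 1, by omega⟩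
  rw [fact_eq (by omega)]
  refine mul_le_mul_of_nonneg_right ?_ (stf_pos h).le
  have := Stirling.stirlingSeq'_antitone (Nat.zero_le m)
  simpa using this

lemma stirlingSeq_two : Stirling.stirlingSeq 2 = Real.exp 1 ^ 2 / 4 := by
  rw [Stirling.stirlingSeq]
  have h4 : Real.sqrt (2*(2:ℕ)) = 2 := by
    norm_num
  rw [h4]
  have he : Real.exp 1 ≠ 0 := (Real.exp_pos 1).ne'
  norm_num [Nat.factorial, div_pow]
  field_simp

lemma fact_ub2 {n : ℕ} (h : 2 ≤ n) : (n.factorial : ℝ) ≤ (Real.exp 1 ^ 2 / 4) * stf n := by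
  obtain ⟨m, rfl⟩ : ∃ m, n = m + 2 := ⟨n - 2, by omega⟩
  rw [fact_eq (by omega)]
  refine mul_le_mul_of_nonneg_right ?_ (stf_pos (by omega)).le
  have := Stirling.stirlingSeq'_antitone (show 1 ≤ m + 1 by omega)
  rw [Function.comp, Function.comp, show (m+1).succ = m + 2 from rfl,
    show Nat.succ 1 = 2 from rfl, stirlingSeq_two] at this
  exact this

lemma stf_sq (m : ℕ) : stf m ^ 2 * (Real.exp 1 ^ m)^2 = 2 * m * ((m:ℝ)^m)^2 := by
  unfold stf
  rw [mul_pow, Real.sq_sqrt (by positivity), div_pow]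
  have h : (0:ℝ) < Real.exp 1 ^ m := by positivity
  field_simp

lemma hfact_eq (k j : ℕ) :
    ((k+j).choose k : ℝ) * (k.factorial:ℝ) * (j.factorial:ℝ) = ((k+j).factorial : ℝ) := by
  have := Nat.choose_mul_factorial_mul_factorial (Nat.le_add_right k j)
  rw [Nat.add_sub_cancel_left] at this
  exact_mod_cast this

lemma choose_ub (k j : ℕ) (hk : 1 ≤ k) (hj : 1 ≤ j) :
    ((k+j).choose k : ℝ) * ((k:ℝ)^k * (j:ℝ)^j) ≤
      Real.sqrt (((k:ℝ)+j)/(Real.pi*((k:ℝ)*j))) * ((k:ℝ)+j)^(k+j) := by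
  have ha : (0:ℝ) < k := by exact_mod_cast hk
  have hb : (0:ℝ) < j := by exact_mod_cast hj
  set a := (k:ℝ) with ha'
  set b := (j:ℝ) with hb'
  set C := ((k+j).choose k : ℝ) with hC
  have hC0 : (0:ℝ) ≤ C := Nat.cast_nonneg _
  set E := Real.exp 1 with hE'
  have hE : (0:ℝ) < E := Real.exp_pos 1
  have step1 : Real.pi * stf k * stf j * C ≤ (E / Real.sqrt 2) * stf (k+j) := by
    have l1 := fact_lb hk
    have l2 := fact_lb hj
    have u := fact_ub1 (show 1 ≤ k + j by omega)
    have hππ : Real.sqrt Real.pi * Real.sqrt Real.pi = Real.pi :=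
      Real.mul_self_sqrt Real.pi_pos.le
    calc Real.pi * stf k * stf j * C
        = (Real.sqrt Real.pi * stf k) * ((Real.sqrt Real.pi * stf j) * C) := by
          conv_lhs => rw [← hππ]
          ring
      _ ≤ (k.factorial:ℝ) * ((j.factorial:ℝ) * C) := by
          apply mul_le_mul l1 (mul_le_mul_of_nonneg_right l2 hC0)
            (mul_nonneg (mul_nonneg (Real.sqrt_nonneg _) (stf_pos hj).le) hC0)
            (Nat.cast_nonneg _)
      _ = C * (k.factorial:ℝ) * (j.factorial:ℝ) := by ring
      _ = ((k+j).factorial:ℝ) := hfact_eq k j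
      _ ≤ _ := u
  have step2 := pow_le_pow_left₀ (mul_nonneg (mul_nonneg (mul_nonneg
    Real.pi_pos.le (stf_pos hk).le) (stf_pos hj).le) hC0) step1 2
  have hs2 : (Real.sqrt 2)^2 = 2 := Real.sq_sqrt (by norm_num)
  have hEp : (0:ℝ) ≤ (E^k)^2*(E^j)^2 := by positivity
  have step3 : Real.pi^2 * (2*a*(a^k)^2) * (2*b*(b^j)^2) * C^2 ≤
      E^2/2 * (2*(a+b)*((a+b)^(k+j))^2) := by
    have h := mul_le_mul_of_nonneg_right step2 hEp
    calc Real.pi^2 * (2*a*(a^k)^2) * (2*b*(b^j)^2) * C^2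
        = (Real.pi * stf k * stf j * C)^2 * ((E^k)^2*(E^j)^2) := by
          rw [← stf_sq k, ← stf_sq j]; ring
      _ ≤ (E/Real.sqrt 2 * stf (k+j))^2 * ((E^k)^2*(E^j)^2) := h
      _ = E^2/2 * (stf (k+j)^2 * (E^(k+j))^2) := by
          rw [mul_pow, div_pow, hs2, pow_add]; ring
      _ = E^2/2 * (2*(a+b)*((a+b)^(k+j))^2) := by
          rw [stf_sq (k+j)]; push_cast; ring
  have hE2 : E^2 ≤ 4*Real.pi := by
    have h1 := Real.exp_one_lt_d9
    have h2 := Real.pi_gt_d6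
    nlinarith [Real.exp_pos 1]
  have goal_sq : (C * (a^k*b^j))^2 ≤ ((a+b)/(Real.pi*(a*b))) * ((a+b)^(k+j))^2 := by
    rw [div_mul_eq_mul_div, le_div_iff₀ (by positivity)]
    nlinarith [step3,
      mul_le_mul_of_nonneg_right hE2 (show (0:ℝ) ≤ (a+b)*((a+b)^(k+j))^2 by positivity),
      Real.pi_pos, sq_nonneg (C*(a^k*b^j))]
  calc C * (a^k*b^j) = Real.sqrt ((C * (a^k*b^j))^2) :=
        (Real.sqrt_sq (by positivity)).symm
    _ ≤ Real.sqrt (((a+b)/(Real.pi*(a*b))) * ((a+b)^(k+j))^2) :=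
        Real.sqrt_le_sqrt goal_sq
    _ = Real.sqrt ((a+b)/(Real.pi*(a*b))) * ((a+b)^(k+j)) := by
        rw [Real.sqrt_mul (by positivity), Real.sqrt_sq (by positivity)]

lemma nat_ineq (m : ℕ) (hm : 1 ≤ m) : (m+1)^(2*m+1) ≤ 8 * m^(2*m+1) := by
  by_cases h13 : m ≤ 12
  · interval_cases m <;> norm_num
  · have hm13 : 13 ≤ m := by omega
    have hm0 : (0:ℝ) < m := by positivity
    have h1 : (1 + 1/(m:ℝ)) ≤ Real.exp (1/m) := by
      have := Real.add_one_le_exp (1/(m:ℝ)); linarith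
    have h2 : (1 + 1/(m:ℝ))^(2*m+1) ≤ Real.exp (1/m) ^ (2*m+1) :=
      pow_le_pow_left₀ (by positivity) h1 _
    have h3 : Real.exp (1/(m:ℝ)) ^ (2*m+1) = Real.exp ((2*m+1)/m) := by
      rw [← Real.exp_nat_mul]; congr 1; field_simp; push_cast; ring
    have h4 : Real.exp ((2*(m:ℝ)+1)/m) < 8 := by
      have hlog : (2*(m:ℝ)+1)/m < Real.log 8 := by
        have l2 := Real.log_two_gt_d9
        have hl8 : Real.log 8 = 3 * Real.log 2 := by
          rw [show (8:ℝ) = 2^3 by norm_num, Real.log_pow]; push_cast; ring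
        rw [hl8, div_lt_iff₀ hm0]
        have hm' : (13:ℝ) ≤ m := by exact_mod_cast hm13
        nlinarith
      calc Real.exp ((2*(m:ℝ)+1)/m) < Real.exp (Real.log 8) := Real.exp_lt_exp.mpr hlog
        _ = 8 := Real.exp_log (by norm_num)
    have key : ((m:ℝ)+1)^(2*m+1) = (1+1/(m:ℝ))^(2*m+1) * (m:ℝ)^(2*m+1) := by
      rw [← mul_pow]; congr 1; field_simp
    have hmp : (0:ℝ) ≤ (m:ℝ)^(2*m+1) := by positivity
    have h6 : (1 + 1/(m:ℝ))^(2*m+1) ≤ 8 := by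
      calc (1 + 1/(m:ℝ))^(2*m+1) ≤ Real.exp (1/m) ^ (2*m+1) := h2
        _ = Real.exp ((2*m+1)/m) := h3
        _ ≤ 8 := h4.le
    have : ((m:ℝ)+1)^(2*m+1) ≤ 8 * (m:ℝ)^(2*m+1) := by
      rw [key]; nlinarith
    exact_mod_cast (by push_cast; exact this : ((m+1:ℕ):ℝ)^(2*m+1) ≤ 8 * ((m:ℕ):ℝ)^(2*m+1))

lemma choose_lb_main (k j : ℕ) (hk : 2 ≤ k) (hj : 2 ≤ j) :
    Real.sqrt (((k:ℝ)+j)/(8*((k:ℝ)*j))) * ((k:ℝ)+j)^(k+j) ≤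
      ((k+j).choose k : ℝ) * ((k:ℝ)^k * (j:ℝ)^j) := by
  have ha : (0:ℝ) < k := by positivity
  have hb : (0:ℝ) < j := by positivity
  set a := (k:ℝ) with ha'
  set b := (j:ℝ) with hb'
  set C := ((k+j).choose k : ℝ) with hC
  have hC1 : (1:ℝ) ≤ C := by
    have := Nat.choose_pos (Nat.le_add_right k j)
    have h1 : 1 ≤ (k+j).choose k := this
    rw [hC]
    exact_mod_cast h1
  have hC0 : (0:ℝ) < C := lt_of_lt_of_le one_pos hC1
  set E := Real.exp 1 with hE'
  have hE : (0:ℝ) < E := Real.exp_pos 1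
  have step1 : Real.sqrt Real.pi * stf (k+j) ≤ (E^2/4) * stf k * ((E^2/4) * stf j) * C := by
    calc Real.sqrt Real.pi * stf (k+j) ≤ ((k+j).factorial : ℝ) := fact_lb (by omega)
      _ = C * (k.factorial:ℝ) * (j.factorial:ℝ) := (hfact_eq k j).symm
      _ ≤ C * ((E^2/4) * stf k) * ((E^2/4) * stf j) := by
          apply mul_le_mul (mul_le_mul_of_nonneg_left (fact_ub2 hk) hC0.le)
            (fact_ub2 hj) (Nat.cast_nonneg _)
          exact mul_nonneg hC0.le (mul_nonneg (by positivity) (stf_pos (by omega)).le)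
      _ = (E^2/4) * stf k * ((E^2/4) * stf j) * C := by ring
  have step2 := pow_le_pow_left₀ (mul_nonneg (Real.sqrt_nonneg _)
    (stf_pos (show 1 ≤ k+j by omega)).le) step1 2
  have hEp : (0:ℝ) ≤ (E^k)^2*(E^j)^2 := by positivity
  have hππ : (Real.sqrt Real.pi)^2 = Real.pi := Real.sq_sqrt Real.pi_pos.le
  have step3 : Real.pi * (2*(a+b)*((a+b)^(k+j))^2) ≤
      (E^2/4)^2 * (E^2/4)^2 * (2*a*(a^k)^2) * (2*b*(b^j)^2) * C^2 := by
    have h := mul_le_mul_of_nonneg_right step2 hEp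
    calc Real.pi * (2*(a+b)*((a+b)^(k+j))^2)
        = (Real.sqrt Real.pi * stf (k+j))^2 * ((E^k)^2*(E^j)^2) := by
          rw [mul_pow, hππ]
          have h2 : stf (k+j) ^2 * (E^(k+j))^2 = 2 * ((k+j:ℕ):ℝ) * (((k+j:ℕ):ℝ)^(k+j))^2 :=
            stf_sq (k+j)
          push_cast at h2
          rw [show Real.pi * (2*(a+b)*((a+b)^(k+j))^2)
              = Real.pi * (2*(a+b)*((a+b)^(k+j))^2) from rfl]
          calc Real.pi * (2*(a+b)*((a+b)^(k+j))^2)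
              = Real.pi * (stf (k+j) ^2 * (E^(k+j))^2) := by rw [h2]
            _ = Real.pi * stf (k+j)^2 * ((E^k)^2*(E^j)^2) := by rw [pow_add]; ring
      _ ≤ ((E^2/4) * stf k * ((E^2/4) * stf j) * C)^2 * ((E^k)^2*(E^j)^2) := h
      _ = (E^2/4)^2 * (E^2/4)^2 * (stf k^2 * (E^k)^2) * (stf j^2 * (E^j)^2) * C^2 := by ring
      _ = (E^2/4)^2 * (E^2/4)^2 * (2*a*(a^k)^2) * (2*b*(b^j)^2) * C^2 := by
          rw [stf_sq k, stf_sq j]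
  have hE8 : E^8 ≤ 1024 * Real.pi := by
    have h1 := Real.exp_one_lt_d9
    have h2 := Real.pi_gt_d6
    have h3 : E ^ 8 ≤ 2.7182818286 ^ 8 := pow_le_pow_left₀ hE.le h1.le 8
    nlinarith
  have goal_sq : ((a+b)/(8*(a*b))) * ((a+b)^(k+j))^2 ≤ (C * (a^k*b^j))^2 := by
    rw [div_mul_eq_mul_div, div_le_iff₀ (by positivity)]
    nlinarith [step3,
      mul_le_mul_of_nonneg_right hE8
        (show (0:ℝ) ≤ a*b*(a^k)^2*(b^j)^2*C^2 by positivity),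
      Real.pi_pos, sq_nonneg ((a+b)^(k+j))]
  calc Real.sqrt ((a+b)/(8*(a*b))) * ((a+b))^(k+j)
      = Real.sqrt (((a+b)/(8*(a*b))) * ((a+b)^(k+j))^2) := by
        rw [Real.sqrt_mul (by positivity), Real.sqrt_sq (by positivity)]
    _ ≤ Real.sqrt ((C * (a^k*b^j))^2) := Real.sqrt_le_sqrt goal_sq
    _ = C * (a^k*b^j) := Real.sqrt_sq (by positivity)

lemma choose_lb_one (j : ℕ) (hj : 1 ≤ j) :
    Real.sqrt ((1+(j:ℝ))/(8*(1*(j:ℝ)))) * (1+(j:ℝ))^(1+j) ≤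
      ((1+j).choose 1 : ℝ) * ((1:ℝ)^1 * (j:ℝ)^j) := by
  have hb : (0:ℝ) < j := by positivity
  set b := (j:ℝ) with hb'
  have hch : ((1+j).choose 1 : ℝ) = 1 + b := by
    rw [Nat.choose_one_right]; push_cast; ring
  have hcast : (b+1)^(2*j+1) ≤ 8*b^(2*j+1) := by
    have h := nat_ineq j hj
    rw [hb']
    exact_mod_cast h
  have goal_sq : ((1+b)/(8*(1*b))) * ((1+b)^(1+j))^2 ≤ (((1+j).choose 1 : ℝ) * ((1:ℝ)^1 * b^j))^2 := by
    rw [hch, div_mul_eq_mul_div, div_le_iff₀ (by positivity)]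
    have e1 : (1+b)*((1+b)^(1+j))^2 = (b+1)^(2*j+1)*(1+b)^2 := by ring
    have e2 : ((1+b)*((1:ℝ)^1*b^j))^2*(8*(1*b)) = 8*b^(2*j+1)*(1+b)^2 := by ring
    rw [e1, e2]
    exact mul_le_mul_of_nonneg_right hcast (sq_nonneg (1+b))
  calc Real.sqrt ((1+b)/(8*(1*b))) * (1+b)^(1+j)
      = Real.sqrt (((1+b)/(8*(1*b))) * ((1+b)^(1+j))^2) := by
        rw [Real.sqrt_mul (by positivity), Real.sqrt_sq (by positivity)]
    _ ≤ Real.sqrt ((((1+j).choose 1 : ℝ) * ((1:ℝ)^1 * b^j))^2) := Real.sqrt_le_sqrt goal_sq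
    _ = ((1+j).choose 1 : ℝ) * ((1:ℝ)^1 * b^j) := by
        rw [Real.sqrt_sq (by rw [hch]; positivity)]

lemma choose_lb (k j : ℕ) (hk : 1 ≤ k) (hj : 1 ≤ j) :
    Real.sqrt (((k:ℝ)+j)/(8*((k:ℝ)*j))) * ((k:ℝ)+j)^(k+j) ≤
      ((k+j).choose k : ℝ) * ((k:ℝ)^k * (j:ℝ)^j) := by
  rcases eq_or_lt_of_le hk with hk1 | hk2
  · -- k = 1
    rw [← hk1]
    simpa using choose_lb_one j hj
  · rcases eq_or_lt_of_le hj with hj1 | hj2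
    · -- j = 1
      rw [← hj1]
      have h := choose_lb_one k hk
      have hcs : ((k+1).choose k) = ((1+k).choose 1) := by
        rw [Nat.add_comm 1 k, ← Nat.choose_symm (show 1 ≤ k+1 by omega)]
        congr 1
      have e : (1+(k:ℝ))/(8*(1*(k:ℝ))) = ((k:ℝ)+1)/(8*((k:ℝ)*1)) := by
        ring_nf
      rw [e, Nat.add_comm 1 k, show 1+(k:ℝ) = (k:ℝ)+1 by ring] at h
      simp only [Nat.cast_one]
      calc Real.sqrt (((k:ℝ)+1)/(8*((k:ℝ)*1))) * ((k:ℝ)+1)^(k+1)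
          ≤ ((1+k).choose 1 : ℝ) * ((1:ℝ)^1 * (k:ℝ)^k) := by
            rw [show (1+k).choose 1 = (k+1).choose 1 by rw [Nat.add_comm]]
            exact h
        _ = ((k+1).choose k : ℝ) * ((k:ℝ)^k * (1:ℝ)^1) := by rw [hcs]; ring
    · exact choose_lb_main k j hk2 hj2



set_option maxHeartbeats 1000000 in
/-- **Tight Chernoff–Hoeffding, upper tail, integral case.** For `0 < p < x < 1` with
`xn` an integer, `2^{-Dkl(x‖p)n}/√(8nx(1-x)) ≤ P[Y ≥ xn] ≤
((1-p)√x)/((x-p)√(π(1-x))) · 2^{-Dkl(x‖p)n}/√n`. -/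
theorem chernoff_hoeffding_ge_integral (n : ℕ) (hn : 0 < n) (x p : ℝ)
    (hp0 : 0 < p) (hpx : p < x) (hx1 : x < 1) (hint : ∃ k : ℕ, (k : ℝ) = x * n) :
    (2 : ℝ) ^ (-(dkl x p) * n) / Real.sqrt (8 * n * x * (1 - x)) ≤ binomPGE n p (x * n) ∧
    binomPGE n p (x * n) ≤
      (1 - p) * Real.sqrt x / ((x - p) * Real.sqrt (Real.pi * (1 - x))) *
        ((2 : ℝ) ^ (-(dkl x p) * n) / Real.sqrt n) := by
  obtain ⟨k, hk⟩ := hint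
  have hn' : (0:ℝ) < n := by exact_mod_cast hn
  have hx0 : 0 < x := hp0.trans hpx
  have hp1 : p < 1 := hpx.trans hx1
  have hk1 : 1 ≤ k := by
    by_contra h
    have : k = 0 := by omega
    subst this
    push_cast at hk
    nlinarith
  have hkn : k < n := by
    have hxn : x * n < n := by nlinarith
    have : (k:ℝ) < n := by rw [hk]; exact hxn
    exact_mod_cast this
  set j := n - k with hjdef
  have hj1 : 1 ≤ j := by omega
  have hkj : k + j = n := by omega
  have hjr : (j:ℝ) = (n:ℝ) - k := by
    rw [hjdef]; push_cast [Nat.cast_sub hkn.le]; ring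
  have hka : (0:ℝ) < k := by exact_mod_cast hk1
  have hja : (0:ℝ) < j := by exact_mod_cast hj1
  have hkjr : (k:ℝ) + j = (n:ℝ) := by rw [hjr]; ring
  have hxk : x = (k:ℝ)/n := by rw [hk]; field_simp
  have h1x : 1 - x = (j:ℝ)/n := by rw [hxk, hjr]; field_simp
  have hx1' : 0 < 1 - x := by linarith
  have hp1' : 0 < 1 - p := by linarith
  have hxp : 0 < x - p := by linarith
  -- probabilities sum
  set a : ℕ → ℝ := fun i => (n.choose i:ℝ) * p^i * (1-p)^(n-i) with ha
  have ha_nonneg : ∀ i, 0 ≤ a i := fun i => by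
    rw [ha]; positivity
  have hsum : binomPGE n p (x*n) = ∑ i ∈ Finset.Icc k n, a i := by
    rw [binomPGE, ← Finset.sum_filter]
    apply Finset.sum_congr
    · ext i
      simp only [Finset.mem_filter, Finset.mem_range, Finset.mem_Icc, ← hk, Nat.cast_le]
      omega
    · intros; rfl
  -- dkl rewriting
  have hd : (2:ℝ)^(-(dkl x p)*(n:ℝ)) = (p/x)^k * ((1-p)/(1-x))^j := by
    set L1 := Real.logb 2 (p/x) with hL1
    set L2 := Real.logb 2 ((1-p)/(1-x)) with hL2
    have e1 : -(dkl x p) * (n:ℝ) = L1*(k:ℝ) + L2*(j:ℝ) := by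
      rw [dkl, show x/p = (p/x)⁻¹ by rw [inv_div],
        show (1-x)/(1-p) = ((1-p)/(1-x))⁻¹ by rw [inv_div],
        Real.logb_inv, Real.logb_inv, ← hL1, ← hL2]
      linear_combination (-L1) * hk + (-L2) * (hjr.trans (by linarith [hk] : (n:ℝ) - k = (1-x)*n))
    rw [e1, Real.rpow_add (by norm_num : (0:ℝ) < 2),
      Real.rpow_mul (by norm_num : (0:ℝ) ≤ 2),
      Real.rpow_mul (by norm_num : (0:ℝ) ≤ 2),
      hL1, hL2,
      Real.rpow_logb (by norm_num) (by norm_num) (by positivity),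
      Real.rpow_logb (by norm_num) (by norm_num) (by positivity),
      Real.rpow_natCast, Real.rpow_natCast]
  -- choose bound conversions
  have hpow_eq : x^k * (1-x)^j * (n:ℝ)^n = (k:ℝ)^k * (j:ℝ)^j := by
    rw [h1x, hxk, div_pow, div_pow]
    rw [← hkj, pow_add]
    field_simp
  have hCl : Real.sqrt ((n:ℝ)/(8*((k:ℝ)*j))) ≤ (n.choose k : ℝ) * (x^k * (1-x)^j) := by
    have h := choose_lb k j hk1 hj1
    rw [hkj, hkjr] at h
    have hnn : (0:ℝ) < (n:ℝ)^n := by positivity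
    rw [← mul_le_mul_iff_of_pos_right hnn]
    calc Real.sqrt ((n:ℝ)/(8*((k:ℝ)*j))) * (n:ℝ)^n ≤ (n.choose k : ℝ) * ((k:ℝ)^k * (j:ℝ)^j) := h
      _ = (n.choose k : ℝ) * (x^k * (1-x)^j) * (n:ℝ)^n := by rw [mul_assoc, ← hpow_eq]
  have hCu : (n.choose k : ℝ) * (x^k * (1-x)^j) ≤ Real.sqrt ((n:ℝ)/(Real.pi*((k:ℝ)*j))) := by
    have h := choose_ub k j hk1 hj1
    rw [hkj, hkjr] at h
    have hnn : (0:ℝ) < (n:ℝ)^n := by positivity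
    rw [← mul_le_mul_iff_of_pos_right hnn]
    calc (n.choose k : ℝ) * (x^k * (1-x)^j) * (n:ℝ)^n
        = (n.choose k : ℝ) * ((k:ℝ)^k * (j:ℝ)^j) := by rw [mul_assoc, ← hpow_eq]
      _ ≤ Real.sqrt ((n:ℝ)/(Real.pi*((k:ℝ)*j))) * (n:ℝ)^n := h
  constructor
  · -- lower bound
    have hterm : a k ≤ binomPGE n p (x*n) := by
      rw [hsum]
      exact Finset.single_le_sum (fun i _ => ha_nonneg i) (Finset.mem_Icc.mpr ⟨le_refl k, hkn.le⟩)
    have he : 8 * (n:ℝ) * x * (1-x) = 8*((k:ℝ)*j)/n := by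
      rw [h1x, hxk]; field_simp
    have hS2pos : 0 < Real.sqrt (8 * (n:ℝ) * x * (1-x)) := Real.sqrt_pos.mpr (by positivity)
    have hS1S2 : Real.sqrt ((n:ℝ)/(8*((k:ℝ)*j))) * Real.sqrt (8 * (n:ℝ) * x * (1-x)) = 1 := by
      rw [he, ← Real.sqrt_mul (by positivity),
        show (n:ℝ)/(8*((k:ℝ)*j)) * (8*((k:ℝ)*j)/n) = 1 by field_simp]
      exact Real.sqrt_one
    have key : 1 ≤ (n.choose k:ℝ) * (x^k*(1-x)^j) * Real.sqrt (8 * (n:ℝ) * x * (1-x)) := by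
      calc (1:ℝ) = Real.sqrt ((n:ℝ)/(8*((k:ℝ)*j))) * Real.sqrt (8 * (n:ℝ) * x * (1-x)) :=
            hS1S2.symm
        _ ≤ _ := mul_le_mul_of_nonneg_right hCl hS2pos.le
    refine le_trans ?_ hterm
    rw [div_le_iff₀ hS2pos, hd]
    have ht0 : (0:ℝ) < p^k * (1-p)^j / (x^k * (1-x)^j) := by positivity
    have hak : a k = (n.choose k:ℝ) * p^k * (1-p)^j := rfl
    calc (p/x)^k * ((1-p)/(1-x))^j
        = (p^k*(1-p)^j/(x^k*(1-x)^j)) * 1 := by rw [div_pow, div_pow, mul_one]; ring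
      _ ≤ (p^k*(1-p)^j/(x^k*(1-x)^j)) *
          ((n.choose k:ℝ) * (x^k*(1-x)^j) * Real.sqrt (8 * (n:ℝ) * x * (1-x))) :=
          mul_le_mul_of_nonneg_left key ht0.le
      _ = a k * Real.sqrt (8 * (n:ℝ) * x * (1-x)) := by rw [hak]; field_simp
  · -- upper bound
    set r := p*(j:ℝ)/((1-p)*k) with hrdef
    have hr0 : 0 ≤ r := by positivity
    have hkpn : (k:ℝ) - p*n = (x-p)*n := by rw [hk]; ring
    have hkpn' : 0 < (k:ℝ) - p*n := by rw [hkpn]; positivity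
    have hden : ((1:ℝ)-p)*(k:ℝ) ≠ 0 := by positivity
    have h1r : 1 - r = ((k:ℝ) - p*n)/((1-p)*k) := by
      have hpj : p*(j:ℝ) = (1-p)*(k:ℝ) - ((k:ℝ) - p*(n:ℝ)) := by linear_combination p * hjr
      rw [hrdef, hpj]
      field_simp
      ring
    have h1r0 : 0 < 1 - r := by rw [h1r]; positivity
    have hr1 : r < 1 := by linarith
    have hstep : ∀ i, k ≤ i → i < n → a (i+1) ≤ r * a i := by
      intro i hki hin
      have hi_n : i ≤ n := hin.le
      have hchoose : ((n.choose (i+1)):ℝ) * ((i:ℝ)+1) = (n.choose i:ℝ) * ((n:ℝ) - i) := by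
        have h0 := Nat.choose_succ_right_eq n i
        have h2 : ((n.choose (i+1) * (i+1) : ℕ):ℝ) = ((n.choose i * (n - i) : ℕ):ℝ) := by
          exact_mod_cast congrArg (Nat.cast : ℕ → ℝ) h0
        push_cast [Nat.cast_sub hi_n] at h2
        linarith [h2]
      set m := n - (i+1) with hm
      have hnm : n - i = m + 1 := by omega
      have hpos : (0:ℝ) < ((i:ℝ)+1)*((1-p)*k) := by positivity
      have key2 : ((n:ℝ) - i)*k ≤ ((i:ℝ)+1)*(j:ℝ) := by
        rw [hjr]
        have hik : (k:ℝ) ≤ i := by exact_mod_cast hki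
        have hkr : (k:ℝ) < n := by exact_mod_cast hkn
        have h1 : (k:ℝ)*n ≤ (i:ℝ)*n := mul_le_mul_of_nonneg_right hik hn'.le
        nlinarith [h1, hkr]
      apply le_of_mul_le_mul_right _ hpos
      have haL : a (i+1) = (n.choose (i+1):ℝ) * p^(i+1) * (1-p)^m := by
        rw [ha]
      have haR : a i = (n.choose i:ℝ) * p^i * (1-p)^(m+1) := by
        rw [ha, ← hnm]
      rw [haL, haR, hrdef]
      have hrhs : p*(j:ℝ)/((1-p)*k) * ((n.choose i:ℝ) * p^i * (1-p)^(m+1)) * (((i:ℝ)+1)*((1-p)*k))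
          = ((n.choose i:ℝ) * (((i:ℝ)+1)*(j:ℝ))) * (p^(i+1) * (1-p)^(m+1)) := by
        field_simp
        ring
      have hlhs : (n.choose (i+1):ℝ) * p^(i+1) * (1-p)^m * (((i:ℝ)+1)*((1-p)*k))
          = ((n.choose (i+1):ℝ) * ((i:ℝ)+1)) * (k:ℝ) * (p^(i+1) * (1-p)^(m+1)) := by ring
      rw [hlhs, hrhs, hchoose]
      have hmid : (n.choose i:ℝ) * ((n:ℝ)-i) * (k:ℝ) ≤ (n.choose i:ℝ) * (((i:ℝ)+1)*(j:ℝ)) := by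
        rw [mul_assoc]
        exact mul_le_mul_of_nonneg_left key2 (Nat.cast_nonneg _)
      exact mul_le_mul_of_nonneg_right hmid (by positivity)
    have hgeo : ∀ t, k + t ≤ n → a (k+t) ≤ a k * r^t := by
      intro t
      induction t with
      | zero => intro _; simp
      | succ s ih =>
        intro hts
        have hs := ih (by omega)
        calc a (k+(s+1)) = a ((k+s)+1) := by rw [show k+(s+1) = (k+s)+1 by omega]
          _ ≤ r * a (k+s) := hstep (k+s) (by omega) (by omega)
          _ ≤ r * (a k * r^s) := mul_le_mul_of_nonneg_left hs hr0
          _ = a k * r^(s+1) := by ring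
    have hsum2 : ∑ i ∈ Finset.Icc k n, a i ≤ a k * (1/(1-r)) := by
      rw [← Finset.Ico_add_one_right_eq_Icc, Finset.sum_Ico_eq_sum_range, show n + 1 - k = j + 1 by omega]
      calc ∑ t ∈ Finset.range (j+1), a (k+t) ≤ ∑ t ∈ Finset.range (j+1), a k * r^t := by
            apply Finset.sum_le_sum
            intro t ht
            exact hgeo t (by simp only [Finset.mem_range] at ht; omega)
        _ = a k * ∑ t ∈ Finset.range (j+1), r^t := by rw [Finset.mul_sum]
        _ ≤ a k * (1/(1-r)) := by
            apply mul_le_mul_of_nonneg_left _ (ha_nonneg k)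
            rw [geom_sum_eq (by linarith : r ≠ 1)]
            have e : (r^(j+1)-1)/(r-1) = (1-r^(j+1))/(1-r) := by
              rw [div_eq_div_iff (by linarith) (by linarith)]; ring
            rw [e]
            gcongr
            · nlinarith [pow_nonneg hr0 (j+1)]
    rw [hsum]
    refine le_trans hsum2 ?_
    have hW : 1/(1-r) = (1-p)*(k:ℝ)/(((k:ℝ) - p*n)) := by
      rw [h1r, one_div_div]
    have hak : a k = (n.choose k:ℝ) * p^k * (1-p)^j := rfl
    have hpk : p^k * (1-p)^j = (2:ℝ)^(-(dkl x p)*(n:ℝ)) * (x^k * (1-x)^j) := by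
      rw [hd, div_pow, div_pow]
      field_simp
    have core : Real.sqrt ((n:ℝ)/(Real.pi*((k:ℝ)*j))) * ((k:ℝ)/n)
        = Real.sqrt x / (Real.sqrt (Real.pi*(1-x)) * Real.sqrt n) := by
      rw [show Real.sqrt (Real.pi*(1-x)) * Real.sqrt (n:ℝ) = Real.sqrt (Real.pi*(1-x)*n) from
          (Real.sqrt_mul (by positivity) _).symm,
        show Real.sqrt x / Real.sqrt (Real.pi*(1-x)*(n:ℝ)) = Real.sqrt (x/(Real.pi*(1-x)*n)) from
          (Real.sqrt_div hx0.le _).symm,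
        show (k:ℝ)/n = Real.sqrt (((k:ℝ)/n)^2) from (Real.sqrt_sq (by positivity)).symm,
        ← Real.sqrt_mul (by positivity)]
      congr 1
      rw [h1x]
      field_simp
      linear_combination hk
    set D := (2:ℝ)^(-(dkl x p)*(n:ℝ)) with hD
    have hD0 : 0 ≤ D := Real.rpow_nonneg (by norm_num) _
    have harr : a k * (1/(1-r))
        = ((n.choose k:ℝ)*(x^k*(1-x)^j)) * (((1-p)/(x-p)) * D * ((k:ℝ)/n)) := by
      rw [hak, hW, hkpn,
        show (n.choose k:ℝ)*p^k*(1-p)^j = (n.choose k:ℝ)*(p^k*(1-p)^j) by ring, hpk]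
      field_simp
    rw [harr]
    calc ((n.choose k:ℝ)*(x^k*(1-x)^j)) * (((1-p)/(x-p)) * D * ((k:ℝ)/n))
        ≤ Real.sqrt ((n:ℝ)/(Real.pi*((k:ℝ)*j))) * (((1-p)/(x-p)) * D * ((k:ℝ)/n)) := by
          apply mul_le_mul_of_nonneg_right hCu
          exact mul_nonneg (mul_nonneg (by positivity) hD0) (by positivity)
      _ = ((1-p)/(x-p)) * D * (Real.sqrt ((n:ℝ)/(Real.pi*((k:ℝ)*j))) * ((k:ℝ)/n)) := by ring
      _ = ((1-p)/(x-p)) * D * (Real.sqrt x / (Real.sqrt (Real.pi*(1-x)) * Real.sqrt n)) := by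
          rw [core]
      _ = (1-p) * Real.sqrt x / ((x-p) * Real.sqrt (Real.pi*(1-x))) * (D/Real.sqrt n) := by
          have hs1 : Real.sqrt (Real.pi*(1-x)) ≠ 0 :=
            ne_of_gt (Real.sqrt_pos.mpr (by positivity))
          have hs2 : Real.sqrt (n:ℝ) ≠ 0 := ne_of_gt (Real.sqrt_pos.mpr hn')
          field_simp
end

section
/- Let p and x be probabilities with 0 < p < 1 and p < x < 1, and for each positive integer n let Y_n ~ Bin(n,p). Then there exists a constant C > 0 (depending only on p and x) such that for all positive integers n ≥ 1/(1-x): |(1/n)·ln(P[Y_n ≥ xn]) + Dkl_e(x‖p) + (1/2)·(ln n)/n| ≤ C/n, where Dkl_e(x‖p) = x·ln(x/p) + (1-x)·ln((1-x)/(1-p)) is the natural-logarithm Kullback–Leibler divergence. -/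
/-- Natural-logarithm Kullback–Leibler divergence between Bernoulli distributions. -/
noncomputable def dklE (x p : ℝ) : ℝ :=
  x * Real.log (x / p) + (1 - x) * Real.log ((1 - x) / (1 - p))


open Real


lemma tlogt_upper {a b : ℝ} (hb : 0 < b) (hba : b ≤ a) :
    a * Real.log a - b * Real.log b ≤ (a - b) * (Real.log a + 1) := by
  have ha : 0 < a := lt_of_lt_of_le hb hba
  have h1 : Real.log a - Real.log b ≤ (a - b) / b := by
    rw [← Real.log_div (ne_of_gt ha) (ne_of_gt hb)]
    have := Real.log_le_sub_one_of_pos (show 0 < a / b by positivity)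
    have : Real.log (a/b) ≤ a/b - 1 := this
    rw [div_sub_one (ne_of_gt hb)] at this
    linarith
  have h2 : b * (Real.log a - Real.log b) ≤ a - b := by
    have := mul_le_mul_of_nonneg_left h1 (le_of_lt hb)
    rwa [mul_div_cancel₀ _ (ne_of_gt hb)] at this
  nlinarith [mul_le_mul_of_nonneg_left h1 (le_of_lt hb)]

lemma tlogt_lower {a b : ℝ} (hb : 0 < b) (hba : b ≤ a) :
    (a - b) * (Real.log b + 1) ≤ a * Real.log a - b * Real.log b := by
  have ha : 0 < a := lt_of_lt_of_le hb hba
  have h1 : Real.log b - Real.log a ≤ (b - a) / a := by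
    rw [← Real.log_div (ne_of_gt hb) (ne_of_gt ha)]
    have := Real.log_le_sub_one_of_pos (show 0 < b / a by positivity)
    rw [div_sub_one (ne_of_gt ha)] at this
    linarith
  have h2 : a * (Real.log b - Real.log a) ≤ b - a := by
    have := mul_le_mul_of_nonneg_left h1 (le_of_lt ha)
    rwa [mul_div_cancel₀ _ (ne_of_gt ha)] at this
  nlinarith [h2]

/-- two-sided bound for `t ↦ t log (t/c)` differences. -/
lemma flog_diff_bounds {c a b : ℝ} (hc : 0 < c) (hb : 0 < b) (hba : b ≤ a) :
    (a - b) * (Real.log (b/c) + 1) ≤ a * Real.log (a/c) - b * Real.log (b/c) ∧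
    a * Real.log (a/c) - b * Real.log (b/c) ≤ (a - b) * (Real.log (a/c) + 1) := by
  have ha : 0 < a := lt_of_lt_of_le hb hba
  rw [Real.log_div (ne_of_gt ha) (ne_of_gt hc), Real.log_div (ne_of_gt hb) (ne_of_gt hc)]
  constructor
  · nlinarith [tlogt_lower hb hba]
  · nlinarith [tlogt_upper hb hba]

lemma abs_of_between {l u v : ℝ} (h1 : l ≤ v) (h2 : v ≤ u) : |v| ≤ |l| + |u| := by
  rw [abs_le]
  have := neg_abs_le l; have := le_abs_self u; have := abs_nonneg u; have := abs_nonneg l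
  constructor <;> linarith


lemma stirling_lb (n : ℕ) : Real.sqrt π ≤ Stirling.stirlingSeq (n + 1) := by
  have ha : Antitone (fun m => Stirling.stirlingSeq (m + 1)) := by
    intro i j hij
    have h := Stirling.log_stirlingSeq'_antitone hij
    simp only [Function.comp] at h
    exact (Real.log_le_log_iff (Stirling.stirlingSeq'_pos j) (Stirling.stirlingSeq'_pos i)).mp h
  have ht : Filter.Tendsto (fun m => Stirling.stirlingSeq (m + 1)) Filter.atTop
      (nhds (Real.sqrt π)) :=
    (Stirling.tendsto_stirlingSeq_sqrt_pi).comp (Filter.tendsto_add_atTop_nat 1)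
  exact ha.le_of_tendsto ht n

lemma stirling_log_bounds {j : ℕ} (hj : 1 ≤ j) :
    0 ≤ Real.log (Stirling.stirlingSeq j) ∧ Real.log (Stirling.stirlingSeq j) ≤ 1 := by
  obtain ⟨m, rfl⟩ := Nat.exists_eq_add_of_le hj
  have hlb := stirling_lb m
  have hub : Stirling.stirlingSeq (m + 1) ≤ Stirling.stirlingSeq 1 := by
    have ha := Stirling.log_stirlingSeq'_antitone (Nat.zero_le m)
    simp only [Function.comp] at ha
    exact (Real.log_le_log_iff (Stirling.stirlingSeq'_pos m) (Stirling.stirlingSeq'_pos 0)).mp ha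
  have h1 : (1:ℝ) ≤ Real.sqrt π := by
    rw [show (1:ℝ) = Real.sqrt 1 by simp]
    exact Real.sqrt_le_sqrt (by linarith [Real.pi_gt_three])
  rw [show 1 + m = m + 1 by ring]
  constructor
  · have : (1:ℝ) ≤ Stirling.stirlingSeq (m+1) := le_trans h1 hlb
    exact Real.log_nonneg this
  · have he : Stirling.stirlingSeq 1 ≤ Real.exp 1 := by
      rw [Stirling.stirlingSeq_one]
      have : (1:ℝ) ≤ Real.sqrt 2 := by
        rw [show (1:ℝ) = Real.sqrt 1 by simp]
        exact Real.sqrt_le_sqrt (by norm_num)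
      calc Real.exp 1 / Real.sqrt 2 ≤ Real.exp 1 / 1 := by
            apply div_le_div_of_nonneg_left (Real.exp_pos 1).le one_pos this
          _ = Real.exp 1 := by ring
    have : Real.log (Stirling.stirlingSeq (m+1)) ≤ Real.log (Real.exp 1) := by
      apply Real.log_le_log (Stirling.stirlingSeq'_pos m) (le_trans hub he)
    rwa [Real.log_exp] at this

lemma log_factorial_eq {j : ℕ} (hj : 1 ≤ j) :
    Real.log (j.factorial : ℝ) = (j:ℝ) * Real.log j - j + (1/2) * Real.log (2*j)
      + Real.log (Stirling.stirlingSeq j) := by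
  have h := Stirling.log_stirlingSeq_formula j
  have hjp : (0:ℝ) < j := by exact_mod_cast hj
  rw [Real.log_div (ne_of_gt hjp) (ne_of_gt (Real.exp_pos 1)), Real.log_exp] at h
  push_cast at h ⊢
  linarith [h]



noncomputable def bterm (n : ℕ) (p : ℝ) (i : ℕ) : ℝ :=
  (n.choose i : ℝ) * p ^ i * (1 - p) ^ (n - i)

lemma bterm_nonneg {n : ℕ} {p : ℝ} (hp0 : 0 ≤ p) (hp1 : p ≤ 1) (i : ℕ) :
    0 ≤ bterm n p i := by
  unfold bterm
  have : (0:ℝ) ≤ 1 - p := by linarith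
  positivity

lemma bterm_pos {n : ℕ} {p : ℝ} (hp0 : 0 < p) (hp1 : p < 1) {i : ℕ} (hi : i ≤ n) :
    0 < bterm n p i := by
  unfold bterm
  have h1 : (0:ℝ) < 1 - p := by linarith
  have h2 : 0 < n.choose i := Nat.choose_pos hi
  have h2' : (0:ℝ) < (n.choose i : ℝ) := by exact_mod_cast h2
  positivity

lemma binomPGE_lower {n : ℕ} {p x : ℝ} (hp0 : 0 < p) (hp1 : p < 1)
    {k : ℕ} (hk : k ≤ n) (hxk : x * n ≤ k) :
    bterm n p k ≤ binomPGE n p (x * n) := by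
  unfold binomPGE
  have hmem : k ∈ Finset.range (n+1) := Finset.mem_range.mpr (Nat.lt_succ_of_le hk)
  have h := Finset.single_le_sum (f := fun i : ℕ =>
      if x * (n:ℝ) ≤ (i : ℝ) then (n.choose i : ℝ) * p ^ i * (1 - p) ^ (n - i) else 0)
    (fun i _ => by
      split
      · exact bterm_nonneg hp0.le hp1.le i
      · exact le_refl 0) hmem
  simpa [hxk, bterm] using h

lemma term_succ_le {p x : ℝ} (hp0 : 0 < p) (hpx : p < x) (hx1 : x < 1) {n i : ℕ}
    (hi : x * n ≤ i) (hin : i + 1 ≤ n) :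
    bterm n p (i+1) ≤ (p * (1-x) / ((1-p) * x)) * bterm n p i := by
  have hq : (0:ℝ) < 1 - p := by linarith
  have hx0 : (0:ℝ) < x := by linarith
  have hin' : i ≤ n := by omega
  have hA : (0:ℝ) < (n.choose i : ℝ) := by exact_mod_cast Nat.choose_pos hin'
  have hcast : ((n - i : ℕ) : ℝ) = (n:ℝ) - i := Nat.cast_sub hin'
  have hchoose : (n.choose (i+1) : ℝ) * ((i:ℝ)+1) = (n.choose i : ℝ) * ((n:ℝ) - i) := by
    have h := Nat.choose_succ_right_eq n i
    have h2 := congrArg (fun t : ℕ => (t : ℝ)) h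
    push_cast [hcast] at h2
    linarith [h2]
  have hpow : (1-p) ^ (n - i) = (1-p) ^ (n - (i+1)) * (1-p) := by
    rw [← pow_succ]
    congr 1
    omega
  have key : x * ((n:ℝ) - i) ≤ (1-x) * ((i:ℝ)+1) := by nlinarith
  have hB : (0:ℝ) < p ^ i * (1-p) ^ (n - (i+1)) := by positivity
  have hi1 : (0:ℝ) < (i:ℝ) + 1 := by positivity
  -- scalar inequality
  have hscal : ((n:ℝ) - i) / ((i:ℝ)+1) * p ≤ p * (1-x) / x := by
    rw [div_mul_eq_mul_div, div_le_div_iff₀ hi1 hx0]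
    nlinarith [key, hp0.le]
  have hρq : (p * (1-x) / ((1-p) * x)) * (1-p) = p * (1-x) / x := by
    field_simp
  have hLHS : bterm n p (i+1) = (n.choose i : ℝ) * p ^ i * (1-p) ^ (n - (i+1)) *
      (((n:ℝ) - i) / ((i:ℝ)+1) * p) := by
    unfold bterm
    rw [pow_succ]
    rw [div_mul_eq_mul_div, ← mul_div_assoc, eq_div_iff (ne_of_gt hi1)]
    linear_combination (p ^ i * p * (1-p) ^ (n - (i+1))) * hchoose
  have hRHS : (p * (1-x) / ((1-p) * x)) * bterm n p i =
      (n.choose i : ℝ) * p ^ i * (1-p) ^ (n - (i+1)) * (p * (1-x) / x) := by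
    unfold bterm
    rw [hpow, ← hρq]
    ring
  rw [hLHS, hRHS]
  apply mul_le_mul_of_nonneg_left hscal
  positivity

lemma binomPGE_upper {p x : ℝ} (hp0 : 0 < p) (hpx : p < x) (hx1 : x < 1) {n : ℕ}
    (hn : 0 < n) :
    binomPGE n p (x * n) ≤ bterm n p (⌈x * (n:ℝ)⌉₊) / (1 - p * (1-x) / ((1-p) * x)) := by
  set ρ := p * (1-x) / ((1-p) * x) with hρ
  set k := ⌈x * (n:ℝ)⌉₊ with hkdef
  have hq : (0:ℝ) < 1 - p := by linarith
  have hx0 : (0:ℝ) < x := by linarith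
  have hρ0 : 0 ≤ ρ := div_nonneg (mul_nonneg hp0.le (by linarith)) (by positivity)
  have hρ1 : ρ < 1 := by
    rw [hρ, div_lt_one (by positivity)]
    nlinarith
  have hxk : x * n ≤ (k:ℝ) := Nat.le_ceil _
  have hiff : ∀ i : ℕ, (x * n ≤ (i:ℝ)) ↔ k ≤ i := by
    intro i
    constructor
    · intro h; exact Nat.ceil_le.mpr h
    · intro h; exact le_trans hxk (by exact_mod_cast h)
  have hstep : binomPGE n p (x * n) = ∑ i ∈ Finset.Ico k (n+1), bterm n p i := by
    unfold binomPGE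
    rw [← Finset.sum_filter]
    apply Finset.sum_congr
    · ext i
      simp only [Finset.mem_filter, Finset.mem_range, Finset.mem_Ico]
      constructor
      · rintro ⟨h1, h2⟩; exact ⟨(hiff i).mp h2, h1⟩
      · rintro ⟨h1, h2⟩; exact ⟨h2, (hiff i).mpr h1⟩
    · intro i _; rfl
  rw [hstep, Finset.sum_Ico_eq_sum_range]
  have hgeo : ∀ j, k + j ≤ n → bterm n p (k + j) ≤ ρ ^ j * bterm n p k := by
    intro j
    induction j with
    | zero => intro _; simp
    | succ j ih =>
      intro hj
      have hj' : k + j ≤ n := by omega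
      have h1 : bterm n p (k + j + 1) ≤ ρ * bterm n p (k + j) := by
        apply term_succ_le hp0 hpx hx1 _ (by omega)
        calc x * n ≤ (k:ℝ) := hxk
          _ ≤ ((k + j : ℕ):ℝ) := by exact_mod_cast Nat.le_add_right k j
      calc bterm n p (k + (j+1)) = bterm n p (k + j + 1) := by ring_nf
        _ ≤ ρ * bterm n p (k + j) := h1
        _ ≤ ρ * (ρ ^ j * bterm n p k) := by
            apply mul_le_mul_of_nonneg_left (ih hj') hρ0
        _ = ρ ^ (j+1) * bterm n p k := by ring
  have htk : 0 ≤ bterm n p k := bterm_nonneg hp0.le (by linarith) k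
  calc ∑ j ∈ Finset.range (n + 1 - k), bterm n p (k + j)
      ≤ ∑ j ∈ Finset.range (n + 1 - k), ρ ^ j * bterm n p k := by
        apply Finset.sum_le_sum
        intro j hj
        exact hgeo j (by simp [Finset.mem_range] at hj; omega)
    _ = (∑ j ∈ Finset.range (n + 1 - k), ρ ^ j) * bterm n p k := by
        rw [Finset.sum_mul]
    _ ≤ (1 / (1 - ρ)) * bterm n p k := by
        apply mul_le_mul_of_nonneg_right _ htk
        rw [geom_sum_eq (ne_of_lt hρ1)]
        have h1ρ : (0:ℝ) < 1 - ρ := by linarith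
        have heq : (ρ ^ (n+1-k) - 1) / (ρ - 1) = (1 - ρ ^ (n+1-k)) / (1 - ρ) := by
          rw [div_eq_div_iff (by linarith : ρ - 1 ≠ 0) (ne_of_gt h1ρ)]
          ring
        rw [heq, div_le_div_iff₀ h1ρ h1ρ]
        have hpw : 0 ≤ ρ ^ (n + 1 - k) := by positivity
        nlinarith
    _ = bterm n p k / (1 - ρ) := by ring

set_option maxHeartbeats 2000000 in
lemma main_est (p x : ℝ) (hp0 : 0 < p) (hpx : p < x) (hx1 : x < 1) {n : ℕ}
    (hn : 0 < n) (hnx : 1 / (1 - x) ≤ (n : ℝ)) :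
    |Real.log (bterm n p (⌈x * (n:ℝ)⌉₊)) + n * dklE x p + (1/2) * Real.log n| ≤
      (Real.log (1/p) + 1)
      + (|Real.log ((1-x)/(2*(1-p)))| + 2 * |Real.log ((1-x)/(1-p))| + 1)
      + (|Real.log (1/(2*(1-x)))| + |Real.log (1/(x*(1-x)))|)
      + 2 := by
  have hq : (0:ℝ) < 1 - p := by linarith
  have hx0 : (0:ℝ) < x := by linarith
  have h1x : (0:ℝ) < 1 - x := by linarith
  have hn0 : (0:ℝ) < n := by exact_mod_cast hn
  have hn1x : (1:ℝ) ≤ (n:ℝ) * (1 - x) := by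
    rw [div_le_iff₀ h1x] at hnx; linarith
  set k : ℕ := ⌈x * (n:ℝ)⌉₊ with hkdef
  have hk_lb : x * n ≤ (k:ℝ) := Nat.le_ceil _
  have hxn_pos : 0 < x * (n:ℝ) := by positivity
  have hk_ub : (k:ℝ) < x * n + 1 := by
    have := Nat.ceil_lt_add_one (le_of_lt hxn_pos)
    exact_mod_cast this
  have hk1 : 1 ≤ k := Nat.one_le_iff_ne_zero.mpr (by
    intro h
    rw [hkdef] at h
    have := Nat.ceil_eq_zero.mp h
    linarith)
  have hk0 : (0:ℝ) < k := by exact_mod_cast hk1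
  have hkn_real : (k:ℝ) < n := by linarith only [hk_ub, hn1x]
  have hkn : k < n := by exact_mod_cast hkn_real
  set m : ℕ := n - k with hmdef
  have hkm : k + m = n := by omega
  have hm1 : 1 ≤ m := by omega
  have hmr : (m:ℝ) = (n:ℝ) - k := by
    rw [hmdef]; push_cast [Nat.cast_sub (le_of_lt hkn)]; ring
  have hm0 : (0:ℝ) < m := by exact_mod_cast hm1
  have hm_ub : (m:ℝ) ≤ (n:ℝ) * (1-x) := by rw [hmr]; linarith only [hk_lb]
  have hm_lb : (n:ℝ) * (1-x) / 2 ≤ (m:ℝ) := by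
    rcases le_or_gt ((n:ℝ) * (1-x)) 2 with h | h
    · have : (1:ℝ) ≤ (m:ℝ) := by exact_mod_cast hm1
      linarith
    · rw [hmr]; linarith only [hk_ub, h]
  have hkm_real : (k:ℝ) + m = n := by exact_mod_cast hkm
  -- log of bterm
  have hchoose_pos : (0:ℝ) < (n.choose k : ℝ) := by
    exact_mod_cast Nat.choose_pos (le_of_lt hkn)
  have hnk_eq : n - k = m := rfl
  have hfac : (n.choose k : ℝ) = (n.factorial : ℝ) / ((k.factorial : ℝ) * (m.factorial : ℝ)) := by
    have h := Nat.choose_mul_factorial_mul_factorial (le_of_lt hkn)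
    rw [eq_div_iff (by positivity), hmdef]
    have h2 := congrArg (fun t : ℕ => (t:ℝ)) h
    push_cast at h2
    linarith [h2]
  have hppow : p ^ k ≠ 0 := by positivity
  have hqpow : (1-p) ^ m ≠ 0 := by positivity
  have hfn : (0:ℝ) < (n.factorial : ℝ) := by exact_mod_cast Nat.factorial_pos n
  have hfk : (0:ℝ) < (k.factorial : ℝ) := by exact_mod_cast Nat.factorial_pos k
  have hfm : (0:ℝ) < (m.factorial : ℝ) := by exact_mod_cast Nat.factorial_pos m
  have hlog_bterm : Real.log (bterm n p k) =
      Real.log (n.factorial : ℝ) - Real.log (k.factorial : ℝ) - Real.log (m.factorial : ℝ)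
        + (k:ℝ) * Real.log p + (m:ℝ) * Real.log (1-p) := by
    show Real.log ((n.choose k : ℝ) * p ^ k * (1 - p) ^ (n - k)) = _
    rw [hnk_eq]
    rw [Real.log_mul (mul_ne_zero (ne_of_gt hchoose_pos) hppow) hqpow,
        Real.log_mul (ne_of_gt hchoose_pos) hppow, Real.log_pow, Real.log_pow, hfac,
        Real.log_div (ne_of_gt hfn) (by positivity),
        Real.log_mul (ne_of_gt hfk) (ne_of_gt hfm)]
    ring
  -- composite log expansions
  have hlog_knp : Real.log ((k:ℝ)/((n:ℝ)*p)) = Real.log k - (Real.log n + Real.log p) := by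
    rw [Real.log_div (ne_of_gt hk0) (by positivity), Real.log_mul (ne_of_gt hn0) (ne_of_gt hp0)]
  have hlog_xp : Real.log (x/p) = Real.log x - Real.log p :=
    Real.log_div (ne_of_gt hx0) (ne_of_gt hp0)
  have hlog_mnq : Real.log ((m:ℝ)/((n:ℝ)*(1-p))) =
      Real.log m - (Real.log n + Real.log (1-p)) := by
    rw [Real.log_div (ne_of_gt hm0) (by positivity), Real.log_mul (ne_of_gt hn0) (ne_of_gt hq)]
  have hlog_1xq : Real.log ((1-x)/(1-p)) = Real.log (1-x) - Real.log (1-p) :=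
    Real.log_div (ne_of_gt h1x) (ne_of_gt hq)
  have hlog_ratio : Real.log ((n:ℝ)^2/(2*((k:ℝ)*(m:ℝ)))) =
      2 * Real.log n - (Real.log 2 + (Real.log k + Real.log m)) := by
    rw [Real.log_div (by positivity) (by positivity), Real.log_mul (by norm_num) (by positivity),
        Real.log_mul (ne_of_gt hk0) (ne_of_gt hm0), Real.log_pow]
    push_cast
    ring
  have hlog2n : Real.log (2*(n:ℝ)) = Real.log 2 + Real.log n :=
    Real.log_mul (by norm_num) (ne_of_gt hn0)
  have hlog2k : Real.log (2*(k:ℝ)) = Real.log 2 + Real.log k :=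
    Real.log_mul (by norm_num) (ne_of_gt hk0)
  have hlog2m : Real.log (2*(m:ℝ)) = Real.log 2 + Real.log m :=
    Real.log_mul (by norm_num) (ne_of_gt hm0)
  set Sn := Real.log (Stirling.stirlingSeq n) with hSn
  set Sk := Real.log (Stirling.stirlingSeq k) with hSk
  set Sm := Real.log (Stirling.stirlingSeq m) with hSm
  set P1 := (k:ℝ) * Real.log ((k:ℝ)/((n:ℝ)*p)) - (x*(n:ℝ)) * Real.log (x/p) with hP1def
  set P2 := ((1-x)*(n:ℝ)) * Real.log ((1-x)/(1-p))
      - (m:ℝ) * Real.log ((m:ℝ)/((n:ℝ)*(1-p))) with hP2def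
  set P3 := (1/2) * Real.log ((n:ℝ)^2/(2*((k:ℝ)*(m:ℝ)))) with hP3def
  set P4 := Sn - Sk - Sm with hP4def
  have hkey : Real.log (bterm n p k) + (n:ℝ) * dklE x p + (1/2) * Real.log n
      = -P1 + P2 + P3 + P4 := by
    rw [hlog_bterm, log_factorial_eq hn, log_factorial_eq hk1, log_factorial_eq hm1,
        hP1def, hP2def, hP3def, hP4def]
    unfold dklE
    rw [hlog_xp, hlog_1xq, hlog_knp, hlog_mnq, hlog_ratio, hlog2n, hlog2k, hlog2m]
    rw [show (n:ℝ) = (k:ℝ) + (m:ℝ) from by linarith]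
    ring
  -- bound P1
  have hxp1 : (1:ℝ) ≤ x / p := by rw [le_div_iff₀ hp0]; linarith
  have hlogxp0 : 0 ≤ Real.log (x/p) := Real.log_nonneg hxp1
  have hsim1 : x*(n:ℝ)/((n:ℝ)*p) = x/p := by
    rw [mul_comm (n:ℝ) p, mul_div_mul_right _ _ (ne_of_gt hn0)]
  obtain ⟨hlow1, hup1⟩ := flog_diff_bounds (show (0:ℝ) < (n:ℝ)*p by positivity) hxn_pos hk_lb
  rw [hsim1] at hlow1 hup1
  have hknp1 : (1:ℝ) ≤ (k:ℝ)/((n:ℝ)*p) := by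
    rw [le_div_iff₀ (by positivity)]
    have h := mul_lt_mul_of_pos_left hpx hn0
    linarith only [h, hk_lb]
  have hknp2 : (k:ℝ)/((n:ℝ)*p) ≤ 1/p := by
    rw [div_le_div_iff₀ (by positivity) hp0]
    have h := mul_le_mul_of_nonneg_right (le_of_lt hkn_real) hp0.le
    linarith only [h]
  have hlogknp0 : 0 ≤ Real.log ((k:ℝ)/((n:ℝ)*p)) := Real.log_nonneg hknp1
  have hlogknp_ub : Real.log ((k:ℝ)/((n:ℝ)*p)) ≤ Real.log (1/p) :=
    Real.log_le_log (by positivity) hknp2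
  have hlog1p0 : 0 ≤ Real.log (1/p) := Real.log_nonneg (by rw [le_div_iff₀ hp0]; linarith)
  have hP1bnd : |P1| ≤ Real.log (1/p) + 1 := by
    rw [hP1def, abs_le]
    have hd0' : 0 ≤ (k:ℝ) - x*n := by linarith only [hk_lb]
    have hd1' : (k:ℝ) - x*n ≤ 1 := by linarith only [hk_ub]
    constructor
    · have h1 : 0 ≤ ((k:ℝ) - x*(n:ℝ)) * (Real.log (x/p) + 1) :=
        mul_nonneg hd0' (by linarith only [hlogxp0])
      linarith only [hlow1, h1, hlog1p0]
    · have h2 : ((k:ℝ) - x*(n:ℝ)) * (Real.log ((k:ℝ)/((n:ℝ)*p)) + 1)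
          ≤ 1 * (Real.log (1/p) + 1) :=
        mul_le_mul hd1' (by linarith only [hlogknp_ub]) (by linarith only [hlogknp0])
          (by norm_num)
      linarith only [hup1, h2]
  -- bound P2
  have hm_ub' : (m:ℝ) ≤ (1-x)*(n:ℝ) := by linarith
  obtain ⟨hlow2, hup2⟩ :=
    flog_diff_bounds (show (0:ℝ) < (n:ℝ)*(1-p) by positivity) hm0 hm_ub'
  have hsim2 : (1-x)*(n:ℝ)/((n:ℝ)*(1-p)) = (1-x)/(1-p) := by
    rw [mul_comm (n:ℝ) (1-p), mul_div_mul_right _ _ (ne_of_gt hn0)]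
  rw [hsim2] at hlow2 hup2
  have hd0 : 0 ≤ (1-x)*(n:ℝ) - m := by linarith
  have hd1 : (1-x)*(n:ℝ) - m ≤ 1 := by rw [hmr]; linarith only [hk_ub]
  set Lm := Real.log ((m:ℝ)/((n:ℝ)*(1-p))) with hLm
  have hLm_lb : Real.log ((1-x)/(2*(1-p))) ≤ Lm := by
    apply Real.log_le_log (by positivity)
    rw [div_le_div_iff₀ (by positivity) (by positivity)]
    have h := mul_le_mul_of_nonneg_right hm_lb hq.le
    linarith only [h]
  have hLm_ub : Lm ≤ Real.log ((1-x)/(1-p)) := by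
    apply Real.log_le_log (by positivity)
    rw [div_le_div_iff₀ (by positivity) (by positivity)]
    have h := mul_le_mul_of_nonneg_right hm_ub hq.le
    linarith only [h]
  have hLm_abs : |Lm| ≤ |Real.log ((1-x)/(2*(1-p)))| + |Real.log ((1-x)/(1-p))| :=
    abs_of_between hLm_lb hLm_ub
  have hP2bnd : |P2| ≤ |Real.log ((1-x)/(2*(1-p)))| + 2 * |Real.log ((1-x)/(1-p))| + 1 := by
    have hub : P2 ≤ |Real.log ((1-x)/(1-p))| + 1 := by
      have h1 : ((1-x)*(n:ℝ) - m) * (Real.log ((1-x)/(1-p)) + 1)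
          ≤ |Real.log ((1-x)/(1-p))| + 1 := by
        have h2 : |((1-x)*(n:ℝ) - m) * (Real.log ((1-x)/(1-p)) + 1)|
            ≤ |Real.log ((1-x)/(1-p)) + 1| := by
          rw [abs_mul]
          apply mul_le_of_le_one_left (abs_nonneg _)
          rw [abs_of_nonneg hd0]; exact hd1
        have h3 := abs_add_le (Real.log ((1-x)/(1-p))) 1
        have h4 := le_abs_self (((1-x)*(n:ℝ) - m) * (Real.log ((1-x)/(1-p)) + 1))
        simp only [abs_one] at h3
        linarith only [h2, h3, h4]
      linarith only [h1, hup2]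
    have hlb : -(|Lm| + 1) ≤ P2 := by
      have h1 : -(|Lm| + 1) ≤ ((1-x)*(n:ℝ) - m) * (Lm + 1) := by
        have h2 : |((1-x)*(n:ℝ) - m) * (Lm + 1)| ≤ |Lm + 1| := by
          rw [abs_mul]
          apply mul_le_of_le_one_left (abs_nonneg _)
          rw [abs_of_nonneg hd0]; exact hd1
        have h3 := abs_add_le Lm 1
        have h4 := neg_abs_le (((1-x)*(n:ℝ) - m) * (Lm + 1))
        simp only [abs_one] at h3
        linarith only [h2, h3, h4]
      exact h1.trans hlow2
    rw [abs_le]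
    constructor
    · have h5 := abs_nonneg (Real.log ((1-x)/(1-p)))
      refine le_trans ?_ hlb
      linarith only [hLm_abs, h5]
    · have h5 := abs_nonneg (Real.log ((1-x)/(2*(1-p))))
      have h6 := le_abs_self (Real.log ((1-x)/(1-p)))
      have h7 := abs_nonneg (Real.log ((1-x)/(1-p)))
      linarith only [hub, h5, h6, h7]
  -- bound P3
  have hk_le_n : (k:ℝ) ≤ n := le_of_lt hkn_real
  have hR_lb : 1/(2*(1-x)) ≤ (n:ℝ)^2/(2*((k:ℝ)*(m:ℝ))) := by
    rw [div_le_div_iff₀ (by positivity) (by positivity)]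
    have h := mul_le_mul hk_le_n hm_ub hm0.le hn0.le
    linarith only [h]
  have hR_ub : (n:ℝ)^2/(2*((k:ℝ)*(m:ℝ))) ≤ 1/(x*(1-x)) := by
    rw [div_le_div_iff₀ (by positivity) (by positivity)]
    have h := mul_le_mul hk_lb hm_lb (by positivity : (0:ℝ) ≤ (n:ℝ)*(1-x)/2) hk0.le
    linarith only [h]
  have hR_abs : |Real.log ((n:ℝ)^2/(2*((k:ℝ)*(m:ℝ))))| ≤
      |Real.log (1/(2*(1-x)))| + |Real.log (1/(x*(1-x)))| :=
    abs_of_between (Real.log_le_log (by positivity) hR_lb)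
      (Real.log_le_log (by positivity) hR_ub)
  have hP3bnd : |P3| ≤ |Real.log (1/(2*(1-x)))| + |Real.log (1/(x*(1-x)))| := by
    rw [hP3def, abs_mul]
    have h0 : |(1:ℝ)/2| = 1/2 := by norm_num
    rw [h0]
    have h1 := abs_nonneg (Real.log ((n:ℝ)^2/(2*((k:ℝ)*(m:ℝ)))))
    have h2 := abs_nonneg (Real.log (1/(2*(1-x))))
    have h3 := abs_nonneg (Real.log (1/(x*(1-x))))
    linarith only [hR_abs, h1, h2, h3]
  -- bound P4
  obtain ⟨hSn0, hSn1⟩ := stirling_log_bounds hn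
  obtain ⟨hSk0, hSk1⟩ := stirling_log_bounds hk1
  obtain ⟨hSm0, hSm1⟩ := stirling_log_bounds hm1
  have hP4bnd : |P4| ≤ 2 := by
    rw [hP4def, abs_le]
    constructor
    · linarith only [hSn0, hSk1, hSm1]
    · linarith only [hSn1, hSk0, hSm0]
  -- combine
  rw [hkey]
  calc |(-P1) + P2 + P3 + P4| ≤ |(-P1) + P2 + P3| + |P4| := abs_add_le _ _
    _ ≤ |(-P1) + P2| + |P3| + |P4| := by linarith [abs_add_le ((-P1) + P2) P3]
    _ ≤ |(-P1)| + |P2| + |P3| + |P4| := by linarith [abs_add_le (-P1) P2]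
    _ = |P1| + |P2| + |P3| + |P4| := by rw [abs_neg]
    _ ≤ _ := by linarith only [hP1bnd, hP2bnd, hP3bnd, hP4bnd]

/-- **Rate of convergence in Cramér's theorem for Bernoulli variables.** For
`0 < p < x < 1` there is `C > 0` with
`|(1/n)·ln P[Y_n ≥ xn] + Dkl_e(x‖p) + (1/2)(ln n)/n| ≤ C/n` for all `n ≥ 1/(1-x)`. -/
theorem cramer_rate (p x : ℝ) (hp0 : 0 < p) (hpx : p < x) (hx1 : x < 1) :
    ∃ C > (0 : ℝ), ∀ n : ℕ, 0 < n → 1 / (1 - x) ≤ (n : ℝ) →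
      |(1 / n) * Real.log (binomPGE n p (x * n)) + dklE x p +
          (1 / 2) * Real.log n / n| ≤ C / n := by
  have hq : (0:ℝ) < 1 - p := by linarith
  have hx0 : (0:ℝ) < x := lt_trans hp0 hpx
  have h1x : (0:ℝ) < 1 - x := by linarith
  have hp1 : p < 1 := lt_trans hpx hx1
  set ρ := p * (1-x) / ((1-p) * x) with hρ
  have hρ0 : 0 < ρ := div_pos (mul_pos hp0 h1x) (mul_pos hq hx0)
  have hρ1 : ρ < 1 := by
    rw [hρ, div_lt_one (mul_pos hq hx0)]
    nlinarith
  have hlogρ : Real.log (1-ρ) < 0 := Real.log_neg (by linarith) (by linarith)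
  set A := (Real.log (1/p) + 1)
      + (|Real.log ((1-x)/(2*(1-p)))| + 2 * |Real.log ((1-x)/(1-p))| + 1)
      + (|Real.log (1/(2*(1-x)))| + |Real.log (1/(x*(1-x)))|)
      + 2 with hA
  have hA4 : 4 ≤ A := by
    have h1 : 0 ≤ Real.log (1/p) := Real.log_nonneg (by rw [le_div_iff₀ hp0]; linarith)
    have h2 := abs_nonneg (Real.log ((1-x)/(2*(1-p))))
    have h3 := abs_nonneg (Real.log ((1-x)/(1-p)))
    have h4 := abs_nonneg (Real.log (1/(2*(1-x))))
    have h5 := abs_nonneg (Real.log (1/(x*(1-x))))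
    rw [hA]
    linarith
  refine ⟨A + (- Real.log (1-ρ)), by linarith, ?_⟩
  intro n hn hnx
  have hn0 : (0:ℝ) < n := by exact_mod_cast hn
  set k : ℕ := ⌈x * (n:ℝ)⌉₊ with hkdef
  have hk_lb : x * n ≤ (k:ℝ) := Nat.le_ceil _
  have hkn : k ≤ n := Nat.ceil_le.mpr (by nlinarith)
  have hT_pos : 0 < bterm n p k := bterm_pos hp0 hp1 hkn
  have hlow : bterm n p k ≤ binomPGE n p (x * n) := binomPGE_lower hp0 hp1 hkn hk_lb
  have hup : binomPGE n p (x * n) ≤ bterm n p k / (1 - ρ) := binomPGE_upper hp0 hpx hx1 hn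
  have hP_pos : 0 < binomPGE n p (x * n) := lt_of_lt_of_le hT_pos hlow
  have hlog1 : Real.log (bterm n p k) ≤ Real.log (binomPGE n p (x * n)) :=
    Real.log_le_log hT_pos hlow
  have hlog2 : Real.log (binomPGE n p (x * n)) ≤ Real.log (bterm n p k) - Real.log (1-ρ) := by
    have h := Real.log_le_log hP_pos hup
    rwa [Real.log_div (ne_of_gt hT_pos) (by linarith)] at h
  have hmain := main_est p x hp0 hpx hx1 hn hnx
  rw [← hkdef] at hmain
  rw [← hA] at hmain
  have hkey : |Real.log (binomPGE n p (x * n)) + (n:ℝ) * dklE x p + (1/2) * Real.log n|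
      ≤ A + (- Real.log (1-ρ)) := by
    have htri : |Real.log (binomPGE n p (x * n)) + (n:ℝ) * dklE x p + (1/2) * Real.log n|
        ≤ |Real.log (bterm n p k) + (n:ℝ) * dklE x p + (1/2) * Real.log n|
          + |Real.log (binomPGE n p (x * n)) - Real.log (bterm n p k)| := by
      have h := abs_add_le (Real.log (bterm n p k) + (n:ℝ) * dklE x p + (1/2) * Real.log n)
        (Real.log (binomPGE n p (x * n)) - Real.log (bterm n p k))
      have heq2 : Real.log (bterm n p k) + (n:ℝ) * dklE x p + (1/2) * Real.log n
          + (Real.log (binomPGE n p (x * n)) - Real.log (bterm n p k))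
          = Real.log (binomPGE n p (x * n)) + (n:ℝ) * dklE x p + (1/2) * Real.log n := by
        ring
      rwa [heq2] at h
    have hd : |Real.log (binomPGE n p (x * n)) - Real.log (bterm n p k)|
        ≤ - Real.log (1-ρ) := by
      rw [abs_le]
      constructor <;> [linarith; linarith]
    linarith
  have heq : (1 / (n:ℝ)) * Real.log (binomPGE n p (x * n)) + dklE x p
      + (1 / 2) * Real.log n / n
      = (1/(n:ℝ)) * (Real.log (binomPGE n p (x * n)) + (n:ℝ) * dklE x p
          + (1/2) * Real.log n) := by
    field_simp
  rw [heq, abs_mul, abs_of_pos (show (0:ℝ) < 1/(n:ℝ) by positivity)]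
  calc (1/(n:ℝ)) * |Real.log (binomPGE n p (x * n)) + (n:ℝ) * dklE x p + (1/2) * Real.log n|
      ≤ (1/(n:ℝ)) * (A + (- Real.log (1-ρ))) :=
        mul_le_mul_of_nonneg_left hkey (by positivity)
    _ = (A + (- Real.log (1-ρ))) / n := by ring
end

section
/- Let n be a positive integer, x and p probabilities with 0 < p < 1, 1/n ≤ x ≤ 1 - 1/n, and x ≤ p, let C > 0 be a positive real, and let x' be the unique rational with x'·n = ⌊x·n⌋. Then (x·(1-p)/e) · 2^{-Dkl(x‖p)·n}/√(C·n·x·(1-x)) < 2^{-Dkl(x'‖p)·n}/√(C·n·x'·(1-x')) < (1/p) · 2^{-Dkl(x‖p)·n}/√(C·n·x·(1-x)). -/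
set_option maxHeartbeats 1600000


/-- For positive `y z`: `z - y ≤ z (log z - log y)`. -/
private lemma ml_aux (y z : ℝ) (hy : 0 < y) (hz : 0 < z) :
    z - y ≤ z * (Real.log z - Real.log y) := by
  have h := Real.log_le_sub_one_of_pos (div_pos hy hz)
  rw [Real.log_div hy.ne' hz.ne'] at h
  have h2 := mul_le_mul_of_nonneg_left h hz.le
  have h3 : z * (y / z) = y := by field_simp
  nlinarith [h2, h3]

/-- **Constant loss when rounding down to `x' = ⌊xn⌋/n`.** For `0 < p < 1`,
`1/n ≤ x ≤ 1-1/n`, `x ≤ p` and `C > 0`: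
`(x(1-p)/e) · 2^{-Dkl(x‖p)n}/√(Cnx(1-x)) < 2^{-Dkl(x'‖p)n}/√(Cnx'(1-x'))
 < (1/p) · 2^{-Dkl(x‖p)n}/√(Cnx(1-x))`. -/
theorem rounding_constant_loss (n : ℕ) (hn : 0 < n) (x p : ℝ)
    (hp0 : 0 < p) (hp1 : p < 1)
    (hx1 : 1 / (n : ℝ) ≤ x) (hx2 : x ≤ 1 - 1 / (n : ℝ)) (hxp : x ≤ p)
    (C : ℝ) (hC : 0 < C) (x' : ℝ) (hx' : x' * n = (⌊x * n⌋₊ : ℝ)) :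
    x * (1 - p) / Real.exp 1 *
        ((2 : ℝ) ^ (-(dkl x p) * n) / Real.sqrt (C * n * x * (1 - x))) <
      (2 : ℝ) ^ (-(dkl x' p) * n) / Real.sqrt (C * n * x' * (1 - x')) ∧
    (2 : ℝ) ^ (-(dkl x' p) * n) / Real.sqrt (C * n * x' * (1 - x')) <
      1 / p * ((2 : ℝ) ^ (-(dkl x p) * n) / Real.sqrt (C * n * x * (1 - x))) := by
  have hn0 : (0:ℝ) < n := by exact_mod_cast hn
  have hinv : (0:ℝ) < 1 / n := by positivity
  have hx0 : 0 < x := lt_of_lt_of_le hinv hx1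
  have hxlt1 : x < 1 := by linarith
  have h1x : 0 < 1 - x := by linarith
  have h1p : 0 < 1 - p := by linarith
  -- facts about x'
  have hkx : (⌊x * n⌋₊ : ℝ) ≤ x * n := Nat.floor_le (by positivity)
  have ha_le : x' ≤ x := by
    have : x' * n ≤ x * n := by rw [hx']; exact hkx
    exact le_of_mul_le_mul_right this hn0
  have hd1 : x * n < x' * n + 1 := by
    rw [hx']; exact Nat.lt_floor_add_one (x * n)
  have hk1 : 1 ≤ ⌊x * n⌋₊ := by
    apply Nat.le_floor
    push_cast
    have h : (1/(n:ℝ))*n = 1 := by field_simp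
    nlinarith [mul_le_mul_of_nonneg_right hx1 hn0.le, h]
  have han1 : (1:ℝ) ≤ x' * n := by
    rw [hx']; exact_mod_cast hk1
  have ha0 : 0 < x' := by
    by_contra h
    push_neg at h
    have : x' * n ≤ 0 := mul_nonpos_of_nonpos_of_nonneg h hn0.le
    linarith
  have ha1n : 1 / (n:ℝ) ≤ x' := by
    rw [div_le_iff₀ hn0]; linarith
  have hxlt1' : x' < 1 := lt_of_le_of_lt ha_le hxlt1
  have h1a : 0 < 1 - x' := by linarith
  have hs0 : 0 ≤ (x - x') * n := mul_nonneg (by linarith) hn0.le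
  have hs1 : (x - x') * n < 1 := by
    have : (x - x') * n = x * n - x' * n := by ring
    linarith
  have hn1x : 1 ≤ (1 - x) * n := by
    have : 1 / (n:ℝ) ≤ 1 - x := by linarith
    rw [div_le_iff₀ hn0] at this; linarith
  -- log abbrev facts
  have hlp : Real.log p < 0 := Real.log_neg hp0 hp1
  have hlq : Real.log (1 - p) < 0 := Real.log_neg h1p (by linarith)
  have hlx : Real.log x ≤ 0 := Real.log_nonpos hx0.le hxlt1.le
  have hla : Real.log x' ≤ 0 := Real.log_nonpos ha0.le hxlt1'.le
  have hly : Real.log (1 - x) ≤ 0 := Real.log_nonpos h1x.le (by linarith)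
  have hlb : Real.log (1 - x') ≤ 0 := Real.log_nonpos h1a.le (by linarith)
  have hl2 : (0:ℝ) < Real.log 2 := Real.log_pos one_lt_two
  have hl2lt1 : Real.log 2 < 1 := by
    have := Real.log_lt_sub_one_of_pos (by norm_num : (0:ℝ) < 2) (by norm_num)
    linarith
  -- the exponential form
  have key : ∀ t : ℝ, 0 < t → t < 1 →
      (2 : ℝ) ^ (-(dkl t p) * n) / Real.sqrt (C * n * t * (1 - t))
        = Real.exp (-(n:ℝ) * (t * Real.log t + (1 - t) * Real.log (1 - t)
              - t * Real.log p - (1 - t) * Real.log (1 - p))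
            - (Real.log C + Real.log n + Real.log t + Real.log (1 - t)) / 2) := by
    intro t ht0 ht1
    have h1t : 0 < 1 - t := by linarith
    have hz : 0 < C * n * t * (1 - t) :=
      mul_pos (mul_pos (mul_pos hC hn0) ht0) h1t
    have hsq : Real.sqrt (C * n * t * (1 - t))
        = Real.exp (Real.log (C * n * t * (1 - t)) / 2) := by
      rw [← Real.log_sqrt hz.le, Real.exp_log (Real.sqrt_pos.mpr hz)]
    have hpow : (2:ℝ) ^ (-(dkl t p) * n)
        = Real.exp (Real.log 2 * (-(dkl t p) * n)) := by
      rw [Real.rpow_def_of_pos (by norm_num)]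
    rw [hpow, hsq, ← Real.exp_sub]
    congr 1
    have e1 : Real.log (C * n * t * (1 - t))
        = Real.log C + Real.log n + Real.log t + Real.log (1 - t) := by
      rw [Real.log_mul (by positivity) h1t.ne', Real.log_mul (by positivity) ht0.ne',
        Real.log_mul hC.ne' hn0.ne']
    rw [e1]
    simp only [dkl, Real.logb, Real.log_div ht0.ne' hp0.ne',
      Real.log_div h1t.ne' h1p.ne']
    field_simp
    ring
  rw [key x hx0 hxlt1, key x' ha0 hxlt1']
  have hmulL : x * (1 - p) / Real.exp 1
      = Real.exp (Real.log x + Real.log (1 - p) - 1) := by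
    rw [Real.exp_sub, Real.exp_add, Real.exp_log hx0, Real.exp_log h1p]
  have hmulR : (1:ℝ) / p = Real.exp (-Real.log p) := by
    rw [Real.exp_neg, Real.exp_log hp0, one_div]
  rw [hmulL, hmulR, ← Real.exp_add, ← Real.exp_add, Real.exp_lt_exp, Real.exp_lt_exp]
  -- convexity facts
  have m1 : x - x' ≤ x * (Real.log x - Real.log x') := ml_aux x' x ha0 hx0
  have m2 : (1 - x) - (1 - x') ≤ (1 - x) * (Real.log (1 - x) - Real.log (1 - x')) :=
    ml_aux (1 - x') (1 - x) h1a h1x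
  have m3 : x' - x ≤ x' * (Real.log x' - Real.log x) := ml_aux x x' hx0 ha0
  have m4 : (1 - x') - (1 - x) ≤ (1 - x') * (Real.log (1 - x') - Real.log (1 - x)) :=
    ml_aux (1 - x) (1 - x') h1x h1a
  constructor
  · -- LOWER BOUND
    -- K2 : n (ψ x - ψ x') ≥ ((x-x')*n) * log x'
    have hK2 : ((x - x') * n) * Real.log x'
        ≤ (n:ℝ) * ((x * Real.log x + (1 - x) * Real.log (1 - x))
            - (x' * Real.log x' + (1 - x') * Real.log (1 - x'))) := by
      have hstep : (x - x') * Real.log x'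
          ≤ (x * Real.log x + (1 - x) * Real.log (1 - x))
            - (x' * Real.log x' + (1 - x') * Real.log (1 - x')) := by
        have hnb : 0 ≤ (x - x') * (-Real.log (1 - x')) :=
          mul_nonneg (by linarith [ha_le]) (by linarith)
        linarith [m1, m2, hnb]
      have h := mul_le_mul_of_nonneg_left hstep hn0.le
      linarith [h]
    have hB : 0 ≤ ((x - x') * n) * (-Real.log p) :=
      mul_nonneg hs0 (by linarith)
    have hCq : 0 ≤ (1 - (x - x') * n) * (-Real.log (1 - p)) :=
      mul_nonneg (by linarith) (by linarith)
    have hD : Real.log (1 - x') - Real.log (1 - x) ≤ Real.log 2 := by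
      have h2x : 1 - x' ≤ 2 * (1 - x) := by
        have hdxn : (x - x') * n < (1 - x) * n := by linarith [hd1, hn1x]
        have := (mul_lt_mul_iff_left₀ hn0).mp hdxn
        linarith
      have := Real.log_le_log h1a h2x
      rw [Real.log_mul (by norm_num) h1x.ne'] at this
      linarith
    have hE : -(Real.log 2) / 2
        ≤ ((x - x') * n - 1/2) * Real.log x' - Real.log x / 2 := by
      rcases le_or_gt ((x - x') * n) (1/2) with hs | hs
      · have h1 : 0 ≤ (1/2 - (x - x') * n) * (-Real.log x') :=
          mul_nonneg (by linarith) (by linarith)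
        linarith [h1]
      · -- x ≤ 2 x'
        have hx2a : x ≤ 2 * x' := by
          have hxn : x * n < (2 * x') * n := by linarith [hd1, han1]
          have := (mul_lt_mul_iff_left₀ hn0).mp hxn
          linarith
        have hlog : Real.log x ≤ Real.log 2 + Real.log x' := by
          have := Real.log_le_log hx0 hx2a
          rw [Real.log_mul (by norm_num) ha0.ne'] at this
          linarith
        have h1 : 0 ≤ ((x - x') * n - 1/2) * (Real.log x' - (Real.log x - Real.log 2)) :=
          mul_nonneg (by linarith) (by linarith)
        have h2 : 0 ≤ (1 - (x - x') * n) * (-Real.log x) :=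
          mul_nonneg (by linarith) (by linarith)
        have h3 : 0 ≤ (1 - (x - x') * n) * Real.log 2 :=
          mul_nonneg (by linarith) hl2.le
        linarith [h1, h2, h3]
    linarith [hK2, hB, hCq, hD, hE, hl2lt1]
  · -- UPPER BOUND
    rcases eq_or_lt_of_le ha_le with heq | hlt
    · subst heq
      linarith
    · have hd0 : 0 < x - x' := by linarith
      -- K1 : n (ψ x - ψ x') ≤ ((x-x')*n) * (log x - log (1-x))
      have hK1 : (n:ℝ) * ((x * Real.log x + (1 - x) * Real.log (1 - x))
            - (x' * Real.log x' + (1 - x') * Real.log (1 - x')))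
          ≤ ((x - x') * n) * (Real.log x - Real.log (1 - x)) := by
        have hstep : (x * Real.log x + (1 - x) * Real.log (1 - x))
            - (x' * Real.log x' + (1 - x') * Real.log (1 - x'))
            ≤ (x - x') * (Real.log x - Real.log (1 - x)) := by
          linarith [m3, m4]
        have h := mul_le_mul_of_nonneg_left hstep hn0.le
        linarith [h]
      have hq : ((x - x') * n) * Real.log (1 - p) ≤ ((x - x') * n) * Real.log (1 - x) :=
        mul_le_mul_of_nonneg_left (Real.log_le_log h1p (by linarith)) hs0
      have hP : 0 ≤ (1 - (x - x') * n) * (-Real.log p) :=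
        mul_nonneg (by linarith) (by linarith)
      -- the core inequality
      have hna2 : x' * n ≤ (n:ℝ) - 2 := by
        have hlt' : (⌊x * n⌋₊ : ℝ) < (n:ℝ) - 1 := by
          rw [← hx']
          have h7 : (1 - 1/(n:ℝ)) * n = n - 1 := by field_simp
          have h8 := mul_le_mul_of_nonneg_right hx2 hn0.le
          have h9 := mul_lt_mul_of_pos_right hlt hn0
          linarith
        have hnat : ⌊x * n⌋₊ + 1 < n := by exact_mod_cast (by linarith : (⌊x * n⌋₊:ℝ) + 1 < n)
        have : (⌊x * n⌋₊:ℝ) + 2 ≤ n := by exact_mod_cast hnat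
        rw [hx']; linarith
      have Hcore : 2 * x' * (1 - x') * n * Real.log x + (1 - 2 * x') < 0 := by
        rcases le_or_gt (1/2 : ℝ) x' with hh | hh
        · have hxneg : Real.log x < 0 := Real.log_neg hx0 hxlt1
          have hcoef : 0 < 2 * x' * (1 - x') * n := by positivity
          linarith [mul_neg_of_pos_of_neg hcoef hxneg]
        · -- x' < 1/2
          have h5 : Real.log x ≤ x - 1 := Real.log_le_sub_one_of_pos hx0
          have hw : ((n:ℝ) - x' * n) - 1 < (1 - x) * n := by linarith [hd1]
          have hc2 : (2:ℝ) ≤ (n:ℝ) - x' * n := by linarith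
          have h2c : (n:ℝ) < 2 * ((n:ℝ) - x' * n) := by
            linarith [mul_lt_mul_of_pos_right hh hn0]
          -- scaled polynomial inequality
          have hS : (n:ℝ) * ((n:ℝ) - 2 * (x' * n))
              < 2 * (x' * n) * ((n:ℝ) - x' * n) * ((1 - x) * n) := by
            have s4 : 2 * (x' * n) * (((n:ℝ) - x' * n) * (((n:ℝ) - x' * n) - 1))
                < 2 * (x' * n) * (((n:ℝ) - x' * n) * ((1 - x) * n)) := by
              linarith [mul_pos (mul_pos (by linarith [han1] : (0:ℝ) < 2 * (x' * n))
                  (by linarith : (0:ℝ) < (n:ℝ) - x' * n))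
                (by linarith : (0:ℝ) < (1 - x) * n - (((n:ℝ) - x' * n) - 1))]
            have s1 : 2 * (((n:ℝ) - x' * n) * (((n:ℝ) - x' * n) - 1))
                ≤ 2 * (x' * n) * (((n:ℝ) - x' * n) * (((n:ℝ) - x' * n) - 1)) := by
              linarith [mul_nonneg (mul_nonneg (by linarith : (0:ℝ) ≤ x' * n - 1)
                  (by linarith : (0:ℝ) ≤ (n:ℝ) - x' * n))
                (by linarith : (0:ℝ) ≤ ((n:ℝ) - x' * n) - 1)]
            have s2 : (n:ℝ) * (((n:ℝ) - x' * n) - 1)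
                ≤ 2 * (((n:ℝ) - x' * n) * (((n:ℝ) - x' * n) - 1)) := by
              linarith [mul_nonneg (by linarith : (0:ℝ) ≤ 2 * ((n:ℝ) - x' * n) - n)
                (by linarith : (0:ℝ) ≤ ((n:ℝ) - x' * n) - 1)]
            have s3 : (n:ℝ) * ((n:ℝ) - 2 * (x' * n)) ≤ (n:ℝ) * (((n:ℝ) - x' * n) - 1) := by
              linarith [mul_nonneg hn0.le (by linarith : (0:ℝ) ≤ x' * n - 1)]
            linarith [s1, s2, s3, s4]
          -- descale
          have hgoal : (1 - 2 * x') < 2 * x' * (1 - x') * n * (1 - x) := by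
            have hnsq : (0:ℝ) < (n:ℝ) * n := by positivity
            rw [← mul_lt_mul_iff_left₀ hnsq]
            linarith [hS]
          have h6 := mul_le_mul_of_nonneg_left h5
            (by positivity : (0:ℝ) ≤ 2 * x' * (1 - x') * n)
          linarith [h6, hgoal]
      -- combine: U < 0
      have hxa2 : x' * (Real.log x - Real.log x') ≤ x - x' := by linarith [m3]
      have hyb2 : (1 - x') * (Real.log (1 - x) - Real.log (1 - x')) ≤ -(x - x') := by
        linarith [m4]
      have hUU : 2 * x' * (1 - x') *
          (((x - x') * n) * Real.log x + (Real.log x - Real.log x') / 2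
            + (Real.log (1 - x) - Real.log (1 - x')) / 2) < 0 := by
        have hcore' := mul_neg_of_pos_of_neg hd0 Hcore
        have t1 := mul_le_mul_of_nonneg_left hxa2 h1a.le
        have t2 := mul_le_mul_of_nonneg_left hyb2 ha0.le
        linarith [hcore', t1, t2]
      have hU : ((x - x') * n) * Real.log x + (Real.log x - Real.log x') / 2
            + (Real.log (1 - x) - Real.log (1 - x')) / 2 < 0 := by
        by_contra h
        push_neg at h
        have hc : (0:ℝ) < 2 * x' * (1 - x') := by positivity
        linarith [mul_nonneg hc.le h, hUU]
      linarith [hK1, hq, hP, hU]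
end

section
/- Let (Ω, μ) be a probability space, let A and B be disjoint measurable subsets of Ω with μ(B) > 0, let m be a positive integer, and let μ^m be the m-fold product measure on Ω^m (m i.i.d. trials). Then μ^m({ω : ∀ j ≤ m, ω_j ∉ A, and ∃ k ≤ m, ω_k ∈ B}) / μ^m({ω : ∃ k ≤ m, ω_k ∈ B}) ≤ μ^m({ω : ∀ j ≤ m, ω_j ∉ A, and ω_m ∈ B}) / μ(B), i.e., the probability that no trial lands in A conditioned on at least one trial landing in B is at most the probability that no trial lands in A conditioned on the last trial landing in B (the latter equals (1-μ(A))^{m-1}). -/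
open MeasureTheory

lemma key_real (a d : ℝ) (ha0 : 0 ≤ a) (ha1 : a ≤ 1) (hd1 : d ≤ 1)
    (hc0 : 0 ≤ a + d - 1) (m : ℕ) :
    a ^ m - (a + d - 1) ^ m ≤ a ^ (m - 1) * (1 - d ^ m) := by
  set c := a + d - 1 with hc
  have hca : c ≤ a * d := by nlinarith
  have h1 : a ^ m - c ^ m = (∑ i ∈ Finset.range m, a ^ i * c ^ (m - 1 - i)) * (a - c) :=
    (geom_sum₂_mul a c m).symm
  have h2 : 1 - d ^ m = (∑ i ∈ Finset.range m, d ^ (m - 1 - i)) * (1 - d) := by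
    have := geom_sum₂_mul (1:ℝ) d m
    simp only [one_pow, one_mul] at this
    exact this.symm
  have hac : a - c = 1 - d := by ring
  rw [h1, hac, h2, ← mul_assoc, Finset.mul_sum]
  apply mul_le_mul_of_nonneg_right _ (by linarith)
  apply Finset.sum_le_sum
  intro i hi
  have him : i < m := Finset.mem_range.mp hi
  calc a ^ i * c ^ (m - 1 - i) ≤ a ^ i * (a * d) ^ (m - 1 - i) :=
        mul_le_mul_of_nonneg_left (pow_le_pow_left₀ hc0 hca _) (pow_nonneg ha0 _)
    _ = a ^ (i + (m - 1 - i)) * d ^ (m - 1 - i) := by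
        rw [mul_pow, ← mul_assoc, ← pow_add]
    _ = a ^ (m - 1) * d ^ (m - 1 - i) := by
        have h : i + (m - 1 - i) = m - 1 := by omega
        rw [h]

/-- **Conditioning on the last trial.** For `m` i.i.d. trials with disjoint single-trial
events `A` and `B` (with `μ(B) > 0`), the probability that no trial lands in `A`
conditioned on at least one trial landing in `B` is at most the probability that no trial
lands in `A` conditioned on the last trial landing in `B`. -/
theorem avoid_given_exists_le_avoid_given_last {Ω : Type*} [MeasurableSpace Ω]
    (μ : Measure Ω) [IsProbabilityMeasure μ] (A B : Set Ω)
    (hA : MeasurableSet A) (hB : MeasurableSet B) (hAB : Disjoint A B)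
    (hBpos : 0 < μ B) (m : ℕ) (hm : 0 < m) :
    (Measure.pi fun _ : Fin m => μ) {ω | (∀ j, ω j ∉ A) ∧ ∃ k, ω k ∈ B} /
        (Measure.pi fun _ : Fin m => μ) {ω | ∃ k, ω k ∈ B} ≤
      (Measure.pi fun _ : Fin m => μ)
          {ω | (∀ j, ω j ∉ A) ∧ ω ⟨m - 1, Nat.sub_lt hm Nat.one_pos⟩ ∈ B} / μ B := by
  set P := Measure.pi fun _ : Fin m => μ with hP
  set last : Fin m := ⟨m - 1, Nat.sub_lt hm Nat.one_pos⟩ with hlast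
  have hBAc : B ⊆ Aᶜ := Disjoint.subset_compl_left hAB
  -- RHS numerator
  have hset2 : {ω : Fin m → Ω | (∀ j, ω j ∉ A) ∧ ω last ∈ B}
      = Set.pi Set.univ (fun i => if i = last then B else Aᶜ) := by
    ext ω
    simp only [Set.mem_setOf_eq, Set.mem_pi, Set.mem_univ, forall_true_left]
    constructor
    · rintro ⟨h1, h2⟩ i
      by_cases hi : i = last
      · simp [hi, h2]
      · simp [hi, h1 i]
    · intro h
      refine ⟨fun j => ?_, by simpa using h last⟩
      by_cases hj : j = last
      · have := h last; simp at this; exact hj ▸ (hBAc this)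
      · have := h j; simp [hj] at this; exact this
  have hval2 : P {ω : Fin m → Ω | (∀ j, ω j ∉ A) ∧ ω last ∈ B} = μ B * μ Aᶜ ^ (m - 1) := by
    rw [hset2, hP, Measure.pi_pi]
    rw [← Finset.mul_prod_erase Finset.univ _ (Finset.mem_univ last)]
    simp only [if_pos rfl]
    congr 1
    rw [Finset.prod_congr rfl (fun i hi => ?_), Finset.prod_const,
      Finset.card_erase_of_mem (Finset.mem_univ last), Finset.card_univ, Fintype.card_fin]
    have : i ≠ last := Finset.ne_of_mem_erase hi
    simp [this]
  -- abbreviations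
  set N : Set (Fin m → Ω) := {ω | ∀ j, ω j ∉ A} with hN
  set E : Set (Fin m → Ω) := {ω | ∃ k, ω k ∈ B} with hE
  have hNpi : N = Set.pi Set.univ (fun _ : Fin m => Aᶜ) := by
    ext ω; simp [hN, Set.mem_pi]
  have hNmeas : MeasurableSet N := by
    rw [hNpi]; exact MeasurableSet.univ_pi (fun _ => hA.compl)
  have hEc : Eᶜ = Set.pi Set.univ (fun _ : Fin m => Bᶜ) := by
    ext ω; simp [hE, Set.mem_pi]
  have hEmeas : MeasurableSet E := by
    rw [← compl_compl E, hEc]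
    exact (MeasurableSet.univ_pi (fun _ => hB.compl)).compl
  have hNval : P N = μ Aᶜ ^ m := by
    rw [hNpi, hP, Measure.pi_pi, Finset.prod_const, Finset.card_univ, Fintype.card_fin]
  have hNEc : N ∩ Eᶜ = Set.pi Set.univ (fun _ : Fin m => Aᶜ ∩ Bᶜ) := by
    ext ω; simp [hN, hE, Set.mem_pi, forall_and]
  have hNEcval : P (N ∩ Eᶜ) = μ (Aᶜ ∩ Bᶜ) ^ m := by
    rw [hNEc, hP, Measure.pi_pi, Finset.prod_const, Finset.card_univ, Fintype.card_fin]
  have hEcval : P Eᶜ = μ Bᶜ ^ m := by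
    rw [hEc, hP, Measure.pi_pi, Finset.prod_const, Finset.card_univ, Fintype.card_fin]
  have hPprob : IsProbabilityMeasure P := by infer_instance
  have hEval : P E = 1 - μ Bᶜ ^ m := by
    have h := prob_compl_eq_one_sub (μ := P) hEmeas.compl
    rw [compl_compl] at h
    rw [h, hEcval]
  -- LHS numerator
  have hNE : P (N ∩ E) = μ Aᶜ ^ m - μ (Aᶜ ∩ Bᶜ) ^ m := by
    rw [← Set.diff_compl, ← Set.diff_self_inter,
      measure_diff Set.inter_subset_left (hNmeas.inter hEmeas.compl).nullMeasurableSet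
        (measure_ne_top _ _), hNval, hNEcval]
  have hgoal1 : {ω : Fin m → Ω | (∀ j, ω j ∉ A) ∧ ∃ k, ω k ∈ B} = N ∩ E := rfl
  rw [hgoal1, hNE, hEval, hval2,
    mul_comm (μ B), mul_div_assoc, ENNReal.div_self hBpos.ne' (measure_ne_top μ B), mul_one]
  apply ENNReal.div_le_of_le_mul
  -- now a pure ENNReal inequality
  set a := μ Aᶜ with ha
  set cc := μ (Aᶜ ∩ Bᶜ) with hcc
  set dd := μ Bᶜ with hdd
  have hccle : cc ≤ a := measure_mono Set.inter_subset_left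
  have hdd1 : dd ≤ 1 := prob_le_one
  have h₁ : a ^ m - cc ^ m ≠ ⊤ :=
    ne_top_of_le_ne_top (ENNReal.pow_ne_top (measure_ne_top _ _)) tsub_le_self
  have h₂ : a ^ (m - 1) * (1 - dd ^ m) ≠ ⊤ :=
    ENNReal.mul_ne_top (ENNReal.pow_ne_top (measure_ne_top _ _))
      (ne_top_of_le_ne_top ENNReal.one_ne_top tsub_le_self)
  refine (ENNReal.toReal_le_toReal h₁ h₂).mp ?_
  rw [ENNReal.toReal_sub_of_le (pow_le_pow_left' hccle m) (ENNReal.pow_ne_top (measure_ne_top _ _)),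
    ENNReal.toReal_mul, ENNReal.toReal_sub_of_le (pow_le_one' hdd1 m) ENNReal.one_ne_top,
    ENNReal.toReal_pow, ENNReal.toReal_pow, ENNReal.toReal_pow, ENNReal.toReal_pow, ENNReal.toReal_one]
  -- identify toReal values
  have hAc' : a.toReal = 1 - (μ A).toReal := by
    rw [ha, prob_compl_eq_one_sub hA, ENNReal.toReal_sub_of_le prob_le_one ENNReal.one_ne_top,
      ENNReal.toReal_one]
  have hBc' : dd.toReal = 1 - (μ B).toReal := by
    rw [hdd, prob_compl_eq_one_sub hB, ENNReal.toReal_sub_of_le prob_le_one ENNReal.one_ne_top,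
      ENNReal.toReal_one]
  have hcc' : cc.toReal = a.toReal + dd.toReal - 1 := by
    rw [hcc, show Aᶜ ∩ Bᶜ = (A ∪ B)ᶜ from (Set.compl_union A B).symm,
      prob_compl_eq_one_sub (hA.union hB),
      ENNReal.toReal_sub_of_le prob_le_one ENNReal.one_ne_top, ENNReal.toReal_one,
      measure_union hAB hB, ENNReal.toReal_add (measure_ne_top _ _) (measure_ne_top _ _)]
    rw [hAc', hBc']; ring
  have ha1' : a.toReal ≤ 1 := by
    have := hAc'; have h0 : 0 ≤ (μ A).toReal := ENNReal.toReal_nonneg; linarith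
  have hdd1' : dd.toReal ≤ 1 := by
    have := hBc'; have h0 : 0 ≤ (μ B).toReal := ENNReal.toReal_nonneg; linarith
  have hc0 : 0 ≤ a.toReal + dd.toReal - 1 := by rw [← hcc']; exact ENNReal.toReal_nonneg
  rw [hcc']
  exact key_real a.toReal dd.toReal ENNReal.toReal_nonneg ha1' hdd1' hc0 m
end

section
/- Let 0 < p < 1 be a probability and n, m positive integers. Then the expected size of the minimization satisfies E[|min(B_{n,m,p})|] ≥ Σ_{i=0}^{n} C(n,i) · (1 - (1 - p^i·(1-p)^{n-i})^m) · (1 - (1-p)^{n-i}·(1-p^i))^m. -/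
open MeasureTheory

lemma bern_true (p : ℝ) : bernoulliBool p {true} = ENNReal.ofReal p := by
  simp [bernoulliBool]
lemma bern_false (p : ℝ) : bernoulliBool p {false} = ENNReal.ofReal (1-p) := by
  simp [bernoulliBool]
lemma bern_singleton (p : ℝ) (b : Bool) :
    bernoulliBool p {b} = ENNReal.ofReal (if b then p else 1 - p) := by
  cases b <;> simp [bernoulliBool]
lemma bern_prob (p : ℝ) (h0 : 0 ≤ p) (h1 : p ≤ 1) : IsProbabilityMeasure (bernoulliBool p) := by
  constructor
  simp [bernoulliBool, ← ENNReal.ofReal_add h0 (by linarith : (0:ℝ) ≤ 1 - p)]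

variable {n : ℕ} {p : ℝ}

lemma measure_eq (S : Finset (Fin n)) :
    (Measure.pi fun _ : Fin n => bernoulliBool p) {f | toSet f = S}
      = ENNReal.ofReal p ^ S.card * ENNReal.ofReal (1 - p) ^ (n - S.card) := by
  have hset : {f : Fin n → Bool | toSet f = S}
      = Set.univ.pi (fun x => {decide (x ∈ S)}) := by
    ext f
    simp only [Set.mem_setOf_eq, Set.mem_pi, Set.mem_univ, Set.mem_singleton_iff,
      forall_true_left, Finset.ext_iff, toSet, Finset.mem_filter, Finset.mem_univ, true_and]
    constructor
    · intro h x
      rcases Bool.dichotomy (f x) with hb | hb <;> rcases (h x) with ⟨h1, h2⟩ <;>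
        simp_all
    · intro h x
      rw [h x]; simp
  rw [hset, Measure.pi_pi]
  have : ∀ x : Fin n, bernoulliBool p {decide (x ∈ S)}
      = (if x ∈ S then ENNReal.ofReal p else ENNReal.ofReal (1 - p)) := by
    intro x
    by_cases h : x ∈ S <;> simp [h, bern_true, bern_false]
  rw [Finset.prod_congr rfl (fun x _ => this x), Finset.prod_ite, Finset.prod_const,
    Finset.prod_const]
  congr 1
  · congr 1
    simp [Finset.filter_univ_mem]
  · congr 1
    rw [Finset.filter_not]
    simp [Finset.card_sdiff, Finset.filter_univ_mem]

lemma measure_subset (h0 : 0 ≤ p) (h1 : p ≤ 1) (S : Finset (Fin n)) :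
    (Measure.pi fun _ : Fin n => bernoulliBool p) {f | toSet f ⊆ S}
      = ENNReal.ofReal (1 - p) ^ (n - S.card) := by
  have hset : {f : Fin n → Bool | toSet f ⊆ S}
      = Set.univ.pi (fun x => if x ∈ S then Set.univ else {false}) := by
    ext f
    simp only [Set.mem_setOf_eq, Set.mem_pi, Set.mem_univ, forall_true_left,
      Finset.subset_iff, toSet, Finset.mem_filter, Finset.mem_univ, true_and]
    constructor
    · intro h x
      by_cases hx : x ∈ S
      · simp [hx]
      · simp only [hx, if_false, Set.mem_singleton_iff]
        rcases Bool.dichotomy (f x) with hb | hb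
        · exact hb
        · exact absurd (h hb) hx
    · intro h x hfx
      by_contra hx
      have := h x
      simp [hx, hfx] at this
  rw [hset, Measure.pi_pi]
  have : ∀ x : Fin n, bernoulliBool p (if x ∈ S then Set.univ else {false})
      = (if x ∈ S then 1 else ENNReal.ofReal (1 - p)) := by
    haveI := bern_prob p h0 h1
    intro x
    by_cases h : x ∈ S
    · rw [if_pos h, if_pos h, measure_univ]
    · rw [if_neg h, if_neg h, bern_false]
  rw [Finset.prod_congr rfl (fun x _ => this x), Finset.prod_ite, Finset.prod_const,
    Finset.prod_const, one_pow, one_mul]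
  congr 1
  rw [Finset.filter_not]
  simp [Finset.card_sdiff, Finset.filter_univ_mem]

variable {m : ℕ}

lemma measure_not_sub (h0 : 0 ≤ p) (h1 : p ≤ 1) (S : Finset (Fin n)) :
    (Measure.pi fun _ : Fin n => bernoulliBool p) {f | ¬ toSet f ⊆ S}
      = 1 - ENNReal.ofReal ((1 - p) ^ (n - S.card)) := by
  haveI := bern_prob p h0 h1
  haveI : IsProbabilityMeasure (Measure.pi fun _ : Fin n => bernoulliBool p) :=
    inferInstance
  have : {f : Fin n → Bool | ¬ toSet f ⊆ S} = {f | toSet f ⊆ S}ᶜ := rfl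
  rw [this, measure_compl ((Set.toFinite _).measurableSet) (measure_ne_top _ _),
    measure_univ, measure_subset h0 h1, ENNReal.ofReal_pow (by linarith)]

lemma measure_not_ssub (h0 : 0 ≤ p) (h1 : p ≤ 1) (S : Finset (Fin n)) :
    (Measure.pi fun _ : Fin n => bernoulliBool p) {f | ¬ toSet f ⊂ S}
      = 1 - ENNReal.ofReal ((1 - p) ^ (n - S.card) * (1 - p ^ S.card)) := by
  haveI := bern_prob p h0 h1
  haveI : IsProbabilityMeasure (Measure.pi fun _ : Fin n => bernoulliBool p) :=
    inferInstance
  have h2 : {f : Fin n → Bool | ¬ toSet f ⊂ S} = ({f | toSet f ⊆ S} \ {f | toSet f = S})ᶜ := by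
    ext f
    simp [Finset.ssubset_iff_subset_ne, and_comm]
  have h3 : {f : Fin n → Bool | toSet f = S} ⊆ {f | toSet f ⊆ S} := by
    intro f hf; rw [Set.mem_setOf_eq, hf]
  rw [h2, measure_compl ((Set.toFinite _).measurableSet) (measure_ne_top _ _), measure_univ,
    measure_diff h3 ((Set.toFinite _).measurableSet.nullMeasurableSet) (measure_ne_top _ _),
    measure_subset h0 h1, measure_eq]
  have hq : (0:ℝ) ≤ p ^ S.card * (1 - p) ^ (n - S.card) :=
    mul_nonneg (pow_nonneg h0 _) (pow_nonneg (by linarith) _)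
  rw [show ENNReal.ofReal p ^ S.card * ENNReal.ofReal (1 - p) ^ (n - S.card)
      = ENNReal.ofReal (p ^ S.card * (1 - p) ^ (n - S.card)) by
    rw [ENNReal.ofReal_mul (pow_nonneg h0 _), ENNReal.ofReal_pow h0,
      ENNReal.ofReal_pow (by linarith)],
    show ENNReal.ofReal (1 - p) ^ (n - S.card) = ENNReal.ofReal ((1 - p) ^ (n - S.card)) by
      rw [ENNReal.ofReal_pow (by linarith)],
    ← ENNReal.ofReal_sub _ hq]
  ring_nf

lemma measure_event (h0 : 0 ≤ p) (h1 : p ≤ 1) (S : Finset (Fin n)) :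
    (hyperMeasure n m p {ω | (∃ j, toSet (ω j) = S) ∧ ∀ k, ¬ toSet (ω k) ⊂ S}).toReal
      = (1 - (1 - p) ^ (n - S.card) * (1 - p ^ S.card)) ^ m
        - (1 - (1 - p) ^ (n - S.card)) ^ m := by
  haveI := bern_prob p h0 h1
  set μ1 : Measure (Fin n → Bool) := Measure.pi fun _ : Fin n => bernoulliBool p with hμ1
  haveI : IsProbabilityMeasure μ1 := inferInstance
  set b : ℝ := (1 - p) ^ (n - S.card) * (1 - p ^ S.card) with hbdef
  set c : ℝ := (1 - p) ^ (n - S.card) with hcdef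
  have hc0 : (0:ℝ) ≤ c := pow_nonneg (by linarith) _
  have hc1 : c ≤ 1 := pow_le_one₀ (by linarith) (by linarith)
  have hpi0 : (0:ℝ) ≤ p ^ S.card := pow_nonneg h0 _
  have hpi1 : p ^ S.card ≤ 1 := pow_le_one₀ h0 h1
  have hb0 : (0:ℝ) ≤ b := mul_nonneg hc0 (by linarith)
  have hbc : b ≤ c := by
    calc b ≤ c * 1 := mul_le_mul_of_nonneg_left (by linarith) hc0
    _ = c := mul_one c
  have hG : {ω : Fin m → Fin n → Bool | (∃ j, toSet (ω j) = S) ∧ ∀ k, ¬ toSet (ω k) ⊂ S}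
      = Set.univ.pi (fun _ => {f : Fin n → Bool | ¬ toSet f ⊂ S})
        \ Set.univ.pi (fun _ => {f : Fin n → Bool | ¬ toSet f ⊆ S}) := by
    ext ω
    simp only [Set.mem_setOf_eq, Set.mem_diff, Set.mem_pi, Set.mem_univ, forall_true_left,
      not_forall, not_not]
    constructor
    · rintro ⟨⟨j, hj⟩, hk⟩
      exact ⟨hk, ⟨j, by rw [hj]⟩⟩
    · rintro ⟨hk, ⟨j, hj⟩⟩
      refine ⟨⟨j, ?_⟩, hk⟩
      by_contra hne
      exact hk j (Finset.ssubset_iff_subset_ne.mpr ⟨hj, hne⟩)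
  have hsub : Set.univ.pi (fun _ : Fin m => {f : Fin n → Bool | ¬ toSet f ⊆ S})
      ⊆ Set.univ.pi (fun _ => {f : Fin n → Bool | ¬ toSet f ⊂ S}) := by
    refine Set.pi_mono fun k _ => ?_
    intro f hf hss
    exact hf hss.subset
  rw [hG, hyperMeasure,
    measure_diff hsub ((Set.toFinite _).measurableSet.nullMeasurableSet) (measure_ne_top _ _),
    Measure.pi_pi, Measure.pi_pi]
  simp only [hμ1, measure_not_ssub h0 h1, measure_not_sub h0 h1, Finset.prod_const,
    Finset.card_univ, Fintype.card_fin]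
  rw [show (1:ENNReal) - ENNReal.ofReal b = ENNReal.ofReal (1 - b) by
      rw [ENNReal.ofReal_sub _ hb0, ENNReal.ofReal_one],
    show (1:ENNReal) - ENNReal.ofReal c = ENNReal.ofReal (1 - c) by
      rw [ENNReal.ofReal_sub _ hc0, ENNReal.ofReal_one],
    ← ENNReal.ofReal_pow (by linarith), ← ENNReal.ofReal_pow (by linarith),
    ← ENNReal.ofReal_sub _ (pow_nonneg (by linarith) _),
    ENNReal.toReal_ofReal]
  have := pow_le_pow_left₀ (by linarith : (0:ℝ) ≤ 1 - c) (by linarith : 1 - c ≤ 1 - b) m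
  linarith


lemma term_ineq (h0 : 0 ≤ p) (h1 : p ≤ 1) (i mm : ℕ) :
    (1 - (1 - p ^ i * (1 - p) ^ (n - i)) ^ mm) * (1 - (1 - p) ^ (n - i) * (1 - p ^ i)) ^ mm
      ≤ (1 - (1 - p) ^ (n - i) * (1 - p ^ i)) ^ mm - (1 - (1 - p) ^ (n - i)) ^ mm := by
  set q : ℝ := p ^ i * (1 - p) ^ (n - i) with hq
  set b : ℝ := (1 - p) ^ (n - i) * (1 - p ^ i) with hb
  have hp1' : (0:ℝ) ≤ 1 - p := by linarith
  have hpi0 : (0:ℝ) ≤ p ^ i := pow_nonneg h0 _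
  have hpi1 : p ^ i ≤ 1 := pow_le_one₀ h0 h1
  have hc0 : (0:ℝ) ≤ (1 - p) ^ (n - i) := pow_nonneg hp1' _
  have hc1 : (1 - p) ^ (n - i) ≤ 1 := pow_le_one₀ hp1' (by linarith)
  have hq0 : (0:ℝ) ≤ q := mul_nonneg hpi0 hc0
  have hb0 : (0:ℝ) ≤ b := mul_nonneg hc0 (by linarith)
  have hbq : b + q = (1 - p) ^ (n - i) := by rw [hb, hq]; ring
  have hq1 : q ≤ 1 := by nlinarith
  have hb1 : b ≤ 1 := by nlinarith
  have key : (1 - (1 - p) ^ (n - i)) ^ mm ≤ (1 - q) ^ mm * (1 - b) ^ mm := by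
    rw [← mul_pow]
    exact pow_le_pow_left₀ (by linarith) (by nlinarith) mm
  have hring : (1 - (1 - q) ^ mm) * (1 - b) ^ mm
      = (1 - b) ^ mm - (1 - q) ^ mm * (1 - b) ^ mm := by ring
  rw [hring]
  linarith

/-- **Lower bound on the expected size of the minimization.**
`E[|min(B_{n,m,p})|] ≥ Σ_{i=0}^n C(n,i)·(1-(1-p^i(1-p)^{n-i})^m)·(1-(1-p)^{n-i}(1-p^i))^m`. -/
theorem expMin_lower_bound (p : ℝ) (hp0 : 0 < p) (hp1 : p < 1)
    (n m : ℕ) (hn : 0 < n) (hm : 0 < m) :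
    ∑ i ∈ Finset.range (n + 1),
        (n.choose i : ℝ) * (1 - (1 - p ^ i * (1 - p) ^ (n - i)) ^ m) *
          (1 - (1 - p) ^ (n - i) * (1 - p ^ i)) ^ m ≤ expMin n m p := by
  have h0 : (0:ℝ) ≤ p := hp0.le
  have h1 : p ≤ 1 := hp1.le
  haveI := bern_prob p h0 h1
  haveI : IsProbabilityMeasure (hyperMeasure n m p) := by
    rw [hyperMeasure]; infer_instance
  classical
  set G : Finset (Fin n) → Set (Fin m → Fin n → Bool) := fun S =>
    {ω | (∃ j, toSet (ω j) = S) ∧ ∀ k, ¬ toSet (ω k) ⊂ S} with hGdef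
  have hexp : expMin n m p = ∑ S : Finset (Fin n), ((hyperMeasure n m p) (G S)).toReal := by
    rw [expMin]
    have hcount : (fun ω => (minCount n m ω : ℝ))
        = fun ω => ∑ S : Finset (Fin n), Set.indicator (G S) (fun _ => (1:ℝ)) ω := by
      funext ω
      rw [minCount, Finset.card_filter]
      push_cast
      refine Finset.sum_congr rfl fun S _ => ?_
      rw [Set.indicator_apply]
      simp [hGdef]
    rw [hcount, integral_finset_sum _ (fun S _ => Integrable.of_finite)]
    refine Finset.sum_congr rfl fun S _ => ?_
    rw [integral_indicator_const (1:ℝ) ((Set.toFinite _).measurableSet)]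
    simp
    rfl
  have hsum : ∑ S : Finset (Fin n), ((hyperMeasure n m p) (G S)).toReal
      = ∑ i ∈ Finset.range (n + 1), (n.choose i : ℝ) *
          ((1 - (1 - p) ^ (n - i) * (1 - p ^ i)) ^ m - (1 - (1 - p) ^ (n - i)) ^ m) := by
    simp only [hGdef, fun S => measure_event (m := m) h0 h1 S]
    rw [show (Finset.univ : Finset (Finset (Fin n))) = (Finset.univ : Finset (Fin n)).powerset
        by rw [Finset.powerset_univ], Finset.sum_powerset, Finset.card_univ, Fintype.card_fin]
    refine Finset.sum_congr rfl fun i _ => ?_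
    rw [Finset.sum_congr rfl (fun S hS => by
      rw [(Finset.mem_powersetCard.mp hS).2]), Finset.sum_const, Finset.card_powersetCard,
      Finset.card_univ, Fintype.card_fin, nsmul_eq_mul]
  rw [hexp, hsum]
  refine Finset.sum_le_sum fun i _ => ?_
  rw [mul_assoc]
  exact mul_le_mul_of_nonneg_left (term_ineq h0 h1 i m) (Nat.cast_nonneg _)
end

section
/- Let 0 < p < 1 be a probability and n, m positive integers. Then the expected size of the minimization satisfies E[|min(B_{n,m,p})|] ≤ Σ_{i=0}^{n} C(n,i) · (1 - (1 - p^i·(1-p)^{n-i})^m) · (1 - (1-p)^{n-i}·(1-p^i))^{m-1}. -/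
open MeasureTheory

lemma key_ineq (q r : ℝ) (hq : 0 ≤ q) (hqr : q ≤ r) (hr : r ≤ 1) (m : ℕ) :
    r ^ m - (r - q) ^ m ≤ (1 - (1 - q) ^ m) * r ^ (m - 1) := by
  have hr0 : 0 ≤ r := hq.trans hqr
  have h1 : r ^ m - (r - q) ^ m
      = (∑ i ∈ Finset.range m, r ^ i * (r - q) ^ (m - 1 - i)) * q := by
    have := geom_sum₂_mul r (r - q) m
    simpa using this.symm
  have h2 : 1 - (1 - q) ^ m
      = (∑ i ∈ Finset.range m, (1 - q) ^ (m - 1 - i)) * q := by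
    have := geom_sum₂_mul (1 : ℝ) (1 - q) m
    simpa using this.symm
  rw [h1, h2]
  have hterm : ∀ i ∈ Finset.range m,
      r ^ i * (r - q) ^ (m - 1 - i) ≤ (1 - q) ^ (m - 1 - i) * r ^ (m - 1) := by
    intro i hi
    have hi' : i < m := Finset.mem_range.mp hi
    have hpow : r ^ (m - 1) = r ^ i * r ^ (m - 1 - i) := by
      rw [← pow_add]; congr 1; omega
    rw [hpow]
    have h3 : (r - q) ^ (m - 1 - i) ≤ ((1 - q) * r) ^ (m - 1 - i) := by
      apply pow_le_pow_left₀ (by linarith)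
      nlinarith
    calc r ^ i * (r - q) ^ (m - 1 - i) ≤ r ^ i * ((1 - q) * r) ^ (m - 1 - i) := by
          apply mul_le_mul_of_nonneg_left h3 (pow_nonneg hr0 i)
      _ = (1 - q) ^ (m - 1 - i) * (r ^ i * r ^ (m - 1 - i)) := by
          rw [mul_pow]; ring
  calc (∑ i ∈ Finset.range m, r ^ i * (r - q) ^ (m - 1 - i)) * q
      ≤ (∑ i ∈ Finset.range m, (1 - q) ^ (m - 1 - i) * r ^ (m - 1)) * q := by
        apply mul_le_mul_of_nonneg_right (Finset.sum_le_sum hterm) hq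
    _ = (∑ i ∈ Finset.range m, (1 - q) ^ (m - 1 - i)) * q * r ^ (m - 1) := by
        rw [← Finset.sum_mul]; ring

lemma bern_prob_s16 {p : ℝ} (hp0 : 0 ≤ p) (hp1 : p ≤ 1) :
    IsProbabilityMeasure (bernoulliBool p) := by
  constructor
  simp [bernoulliBool, ← ENNReal.ofReal_add hp0 (by linarith : (0:ℝ) ≤ 1 - p)]

noncomputable def nu (n : ℕ) (p : ℝ) : Measure (Fin n → Bool) :=
  Measure.pi fun _ => bernoulliBool p

def fS {n : ℕ} (S : Finset (Fin n)) : Fin n → Bool := fun i => decide (i ∈ S)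

lemma toSet_eq_iff {n : ℕ} (S : Finset (Fin n)) (f : Fin n → Bool) :
    toSet f = S ↔ f = fS S := by
  constructor
  · intro h; funext i
    have h2 : i ∈ toSet f ↔ i ∈ S := by rw [h]
    simp only [toSet, Finset.mem_filter, Finset.mem_univ, true_and] at h2
    show f i = decide (i ∈ S)
    cases hb : f i
    · simp [← h2, hb]
    · simp [← h2, hb]
  · rintro rfl; ext i; simp [toSet, fS]

lemma nu_pi {n : ℕ} (p : ℝ) (t : Fin n → Set Bool) :
    nu n p (Set.pi Set.univ t) = ∏ i, bernoulliBool p (t i) :=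
  Measure.pi_pi _ _

lemma nu_subsets {n : ℕ} {p : ℝ} (hp0 : 0 ≤ p) (hp1 : p ≤ 1) (S : Finset (Fin n)) :
    nu n p {f | toSet f ⊆ S} = ENNReal.ofReal ((1 - p) ^ (n - S.card)) := by
  haveI := bern_prob_s16 hp0 hp1
  have hset : {f : Fin n → Bool | toSet f ⊆ S}
      = Set.pi Set.univ (fun i => if i ∈ S then Set.univ else ({false} : Set Bool)) := by
    ext f
    simp only [Set.mem_setOf_eq, Set.mem_pi, Set.mem_univ, forall_true_left]
    constructor
    · intro h i
      by_cases hi : i ∈ S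
      · simp [hi]
      · simp only [hi, if_false, Set.mem_singleton_iff]
        by_contra hf
        rw [Bool.not_eq_false] at hf
        exact hi (h (by simp [toSet, hf]))
    · intro h i hi
      simp only [toSet, Finset.mem_filter] at hi
      by_contra hiS
      have := h i
      simp [hiS, hi.2] at this
  rw [hset, nu_pi]
  have : ∀ i : Fin n, bernoulliBool p (if i ∈ S then Set.univ else ({false} : Set Bool))
      = if i ∈ S then 1 else ENNReal.ofReal (1 - p) := by
    intro i; by_cases hi : i ∈ S
    · simp only [hi, if_true]; exact measure_univ
    · simp only [hi, if_false]; rw [bern_singleton]; simp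
  rw [Finset.prod_congr rfl (fun i _ => this i), Finset.prod_ite, Finset.prod_const_one,
    Finset.prod_const, one_mul]
  have hcard : (Finset.univ.filter fun i : Fin n => ¬ i ∈ S).card = n - S.card := by
    have : (Finset.univ.filter fun i : Fin n => ¬ i ∈ S) = Sᶜ := by ext; simp
    rw [this, Finset.card_compl, Fintype.card_fin]
  rw [hcard, ← ENNReal.ofReal_pow (by linarith)]

lemma nu_single {n : ℕ} {p : ℝ} (hp0 : 0 ≤ p) (hp1 : p ≤ 1) (S : Finset (Fin n)) :
    nu n p {fS S} = ENNReal.ofReal (p ^ S.card * (1 - p) ^ (n - S.card)) := by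
  have hset : ({fS S} : Set (Fin n → Bool)) = Set.pi Set.univ (fun i => {fS S i}) :=
    (Set.univ_pi_singleton _).symm
  rw [hset, nu_pi]
  have : ∀ i : Fin n, bernoulliBool p {fS S i}
      = if i ∈ S then ENNReal.ofReal p else ENNReal.ofReal (1 - p) := by
    intro i; by_cases hi : i ∈ S <;> simp [fS, hi, bern_singleton]
  rw [Finset.prod_congr rfl (fun i _ => this i), Finset.prod_ite, Finset.prod_const,
    Finset.prod_const]
  have h1 : (Finset.univ.filter fun i : Fin n => i ∈ S).card = S.card := by
    congr 1; ext; simp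
  have h2 : (Finset.univ.filter fun i : Fin n => ¬ i ∈ S).card = n - S.card := by
    have : (Finset.univ.filter fun i : Fin n => ¬ i ∈ S) = Sᶜ := by ext; simp
    rw [this, Finset.card_compl, Fintype.card_fin]
  rw [h1, h2, ← ENNReal.ofReal_pow hp0, ← ENNReal.ofReal_pow (by linarith),
    ← ENNReal.ofReal_mul (by positivity)]

lemma meas_all {α : Type*} [Countable α] [MeasurableSpace α] [MeasurableSingletonClass α] (s : Set α) : MeasurableSet s :=
  s.to_countable.measurableSet

lemma nu_prob {n : ℕ} {p : ℝ} (hp0 : 0 ≤ p) (hp1 : p ≤ 1) :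
    IsProbabilityMeasure (nu n p) := by
  haveI := bern_prob_s16 hp0 hp1
  unfold nu; infer_instance

lemma nu_A {n : ℕ} {p : ℝ} (hp0 : 0 ≤ p) (hp1 : p ≤ 1) (S : Finset (Fin n)) :
    nu n p {f | ¬ toSet f ⊂ S}
      = ENNReal.ofReal (1 - (1 - p) ^ (n - S.card) * (1 - p ^ S.card)) := by
  haveI := nu_prob (n := n) hp0 hp1
  set a : ℝ := (1 - p) ^ (n - S.card) with ha
  set q : ℝ := p ^ S.card * a with hqdef
  have h1p : (0:ℝ) ≤ 1 - p := by linarith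
  have ha0 : 0 ≤ a := pow_nonneg h1p _
  have hpi0 : 0 ≤ p ^ S.card := pow_nonneg hp0 _
  have hpi1 : p ^ S.card ≤ 1 := pow_le_one₀ hp0 hp1
  have hq0 : 0 ≤ q := by positivity
  have hcompl : {f : Fin n → Bool | toSet f ⊂ S}
      = {f | toSet f ⊆ S} \ {fS S} := by
    ext f
    simp [Finset.ssubset_iff_subset_ne, ← toSet_eq_iff]
  have hsub : ({fS S} : Set (Fin n → Bool)) ⊆ {f | toSet f ⊆ S} := by
    intro f hf
    simp only [Set.mem_singleton_iff] at hf
    subst hf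
    simp only [Set.mem_setOf_eq]
    rw [(toSet_eq_iff S (fS S)).mpr rfl]
  have hssubset : nu n p {f : Fin n → Bool | toSet f ⊂ S} = ENNReal.ofReal (a - q) := by
    rw [hcompl, measure_diff hsub (meas_all _).nullMeasurableSet (measure_ne_top _ _),
      nu_subsets hp0 hp1, nu_single hp0 hp1, ← ha,
      ← ENNReal.ofReal_sub _ (by positivity)]
  have hA : {f : Fin n → Bool | ¬ toSet f ⊂ S} = {f : Fin n → Bool | toSet f ⊂ S}ᶜ := by
    ext f; simp
  rw [hA, measure_compl (meas_all _) (measure_ne_top _ _), hssubset, measure_univ,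
    ← ENNReal.ofReal_one, ← ENNReal.ofReal_sub _ (by nlinarith)]
  congr 1
  ring

lemma nu_A' {n : ℕ} {p : ℝ} (hp0 : 0 ≤ p) (hp1 : p ≤ 1) (S : Finset (Fin n)) :
    nu n p ({f | ¬ toSet f ⊂ S} \ {fS S})
      = ENNReal.ofReal (1 - (1 - p) ^ (n - S.card)) := by
  haveI := nu_prob (n := n) hp0 hp1
  have hmem : ({fS S} : Set (Fin n → Bool)) ⊆ {f | ¬ toSet f ⊂ S} := by
    intro f hf
    simp only [Set.mem_singleton_iff] at hf
    subst hf
    simp only [Set.mem_setOf_eq]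
    rw [(toSet_eq_iff S (fS S)).mpr rfl]
    exact fun h => h.ne rfl
  have h1p : (0:ℝ) ≤ 1 - p := by linarith
  have ha0 : (0:ℝ) ≤ (1 - p) ^ (n - S.card) := pow_nonneg h1p _
  have hpi0 : 0 ≤ p ^ S.card := pow_nonneg hp0 _
  have hpi1 : p ^ S.card ≤ 1 := pow_le_one₀ hp0 hp1
  rw [measure_diff hmem (meas_all _).nullMeasurableSet (measure_ne_top _ _),
    nu_A hp0 hp1, nu_single hp0 hp1,
    ← ENNReal.ofReal_sub _ (by positivity)]
  congr 1
  ring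

lemma hyper_eq_pi (n m : ℕ) (p : ℝ) :
    hyperMeasure n m p = Measure.pi fun _ : Fin m => nu n p := rfl

lemma hyper_prob {n m : ℕ} {p : ℝ} (hp0 : 0 ≤ p) (hp1 : p ≤ 1) :
    IsProbabilityMeasure (hyperMeasure n m p) := by
  haveI := nu_prob (n := n) hp0 hp1
  rw [hyper_eq_pi]; infer_instance

lemma hyper_all {n m : ℕ} {p : ℝ} (hp0 : 0 ≤ p) (hp1 : p ≤ 1) (T : Set (Fin n → Bool)) :
    hyperMeasure n m p {ω | ∀ k, ω k ∈ T} = (nu n p T) ^ m := by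
  haveI := nu_prob (n := n) hp0 hp1
  have hset : {ω : Fin m → Fin n → Bool | ∀ k, ω k ∈ T}
      = Set.pi Set.univ (fun _ : Fin m => T) := by
    ext ω; simp [Set.mem_pi]
  rw [hset, hyper_eq_pi, Measure.pi_pi, Finset.prod_const, Finset.card_univ, Fintype.card_fin]

def ES {n : ℕ} (m : ℕ) (S : Finset (Fin n)) : Set (Fin m → Fin n → Bool) :=
  {ω | (∃ j, toSet (ω j) = S) ∧ ∀ k, ¬ toSet (ω k) ⊂ S}

lemma mu_ES {n m : ℕ} {p : ℝ} (hp0 : 0 ≤ p) (hp1 : p ≤ 1) (S : Finset (Fin n)) :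
    hyperMeasure n m p (ES m S)
      = (nu n p {f | ¬ toSet f ⊂ S}) ^ m
        - (nu n p ({f | ¬ toSet f ⊂ S} \ {fS S})) ^ m := by
  haveI := hyper_prob (n := n) (m := m) hp0 hp1
  have hset : ES m S = {ω : Fin m → Fin n → Bool | ∀ k, ω k ∈ {f | ¬ toSet f ⊂ S}}
      \ {ω | ∀ k, ω k ∈ {f : Fin n → Bool | ¬ toSet f ⊂ S} \ {fS S}} := by
    ext ω
    simp only [ES, Set.mem_setOf_eq, Set.mem_diff, Set.mem_singleton_iff,
      toSet_eq_iff]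
    constructor
    · rintro ⟨⟨j, hj⟩, hB⟩
      exact ⟨hB, fun h => (h j).2 hj⟩
    · rintro ⟨hB, hno⟩
      push_neg at hno
      obtain ⟨k, hk⟩ := hno
      exact ⟨⟨k, not_not.mp (fun h => h (hk (hB k)))⟩, hB⟩
  have hsub : {ω : Fin m → Fin n → Bool | ∀ k, ω k ∈ {f : Fin n → Bool | ¬ toSet f ⊂ S} \ {fS S}}
      ⊆ {ω | ∀ k, ω k ∈ {f | ¬ toSet f ⊂ S}} := by
    intro ω hω k; exact (hω k).1
  rw [hset, measure_diff hsub (meas_all _).nullMeasurableSet (measure_ne_top _ _),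
    hyper_all hp0 hp1, hyper_all hp0 hp1]

lemma per_S {n m : ℕ} {p : ℝ} (hp0 : 0 ≤ p) (hp1 : p ≤ 1) (S : Finset (Fin n)) :
    (hyperMeasure n m p (ES m S)).toReal
      ≤ (1 - (1 - p ^ S.card * (1 - p) ^ (n - S.card)) ^ m) *
          (1 - (1 - p) ^ (n - S.card) * (1 - p ^ S.card)) ^ (m - 1) := by
  set i := S.card with hi
  set a : ℝ := (1 - p) ^ (n - i) with ha
  have h1p : (0:ℝ) ≤ 1 - p := by linarith
  have ha0 : 0 ≤ a := pow_nonneg h1p _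
  have ha1 : a ≤ 1 := pow_le_one₀ h1p (by linarith)
  have hpi0 : 0 ≤ p ^ i := pow_nonneg hp0 _
  have hpi1 : p ^ i ≤ 1 := pow_le_one₀ hp0 hp1
  set qR : ℝ := p ^ i * a with hqR
  set rR : ℝ := 1 - a * (1 - p ^ i) with hrR
  set sR : ℝ := 1 - a with hsR
  have hq0 : 0 ≤ qR := by positivity
  have hs0 : 0 ≤ sR := by simp only [hsR]; linarith
  have hsr : sR = rR - qR := by simp only [hsR, hrR, hqR]; ring
  have hr0 : 0 ≤ rR := by rw [hrR]; nlinarith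
  have hr1 : rR ≤ 1 := by rw [hrR]; nlinarith
  have hqr : qR ≤ rR := by rw [hsr] at hs0; linarith
  have hmu : hyperMeasure n m p (ES m S) = ENNReal.ofReal (rR ^ m - sR ^ m) := by
    rw [mu_ES hp0 hp1, nu_A hp0 hp1, nu_A' hp0 hp1, ← hi, ← ha,
      ← ENNReal.ofReal_pow hr0, ← ENNReal.ofReal_pow hs0,
      ← ENNReal.ofReal_sub _ (pow_nonneg hs0 _)]
  have hsle : sR ^ m ≤ rR ^ m := pow_le_pow_left₀ hs0 (by rw [hsr]; linarith) m
  rw [hmu, ENNReal.toReal_ofReal (by linarith)]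
  have := key_ineq qR rR hq0 hqr hr1 m
  rw [← hsr] at this
  calc rR ^ m - sR ^ m ≤ (1 - (1 - qR) ^ m) * rR ^ (m - 1) := this
    _ = (1 - (1 - p ^ i * (1 - p) ^ (n - i)) ^ m) *
          (1 - (1 - p) ^ (n - i) * (1 - p ^ i)) ^ (m - 1) := by
        rw [hrR, hqR, ha]

lemma expMin_sum (n m : ℕ) {p : ℝ} (hp0 : 0 ≤ p) (hp1 : p ≤ 1) :
    (∫ ω, ((Finset.univ.filter fun S : Finset (Fin n) =>
        (∃ j, toSet (ω j) = S) ∧ ∀ k, ¬ toSet (ω k) ⊂ S).card : ℝ) ∂(hyperMeasure n m p))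
      = ∑ S : Finset (Fin n), (hyperMeasure n m p (ES m S)).toReal := by
  haveI := hyper_prob (n := n) (m := m) hp0 hp1
  have hpt : ∀ ω : Fin m → Fin n → Bool,
      ((Finset.univ.filter fun S : Finset (Fin n) =>
        (∃ j, toSet (ω j) = S) ∧ ∀ k, ¬ toSet (ω k) ⊂ S).card : ℝ)
      = ∑ S : Finset (Fin n), Set.indicator (ES m S) (fun _ => (1:ℝ)) ω := by
    intro ω
    rw [Finset.card_filter]
    push_cast
    refine Finset.sum_congr rfl fun S _ => ?_
    by_cases h : (∃ j, toSet (ω j) = S) ∧ ∀ k, ¬ toSet (ω k) ⊂ S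
    · rw [if_pos h]
      exact (Set.indicator_of_mem (show ω ∈ ES m S from h) (fun _ => (1:ℝ))).symm
    · rw [if_neg h]
      exact (Set.indicator_of_notMem (show ω ∉ ES m S from h) (fun _ => (1:ℝ))).symm
  simp only [hpt]
  rw [MeasureTheory.integral_finset_sum _ fun S _ => Integrable.of_finite]
  refine Finset.sum_congr rfl fun S _ => ?_
  rw [MeasureTheory.integral_indicator_const _ (meas_all _), smul_eq_mul, mul_one]
  rfl

lemma sum_card_group {n : ℕ} (g : ℕ → ℝ) :
    ∑ S : Finset (Fin n), g S.card = ∑ i ∈ Finset.range (n + 1), (n.choose i : ℝ) * g i := by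
  have hmaps : ∀ S ∈ (Finset.univ : Finset (Finset (Fin n))),
      S.card ∈ Finset.range (n + 1) := by
    intro S _
    simp only [Finset.mem_range, Nat.lt_succ_iff]
    simpa using Finset.card_le_univ S
  rw [← Finset.sum_fiberwise_of_maps_to hmaps (fun S => g S.card)]
  refine Finset.sum_congr rfl fun i hi => ?_
  have hfilter : (Finset.univ.filter fun S : Finset (Fin n) => S.card = i)
      = Finset.powersetCard i Finset.univ := by
    ext S; simp [Finset.mem_powersetCard]
  rw [Finset.sum_congr rfl (fun S hS => by rw [(Finset.mem_filter.mp hS).2]),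
    Finset.sum_const, hfilter, Finset.card_powersetCard, Finset.card_univ, Fintype.card_fin,
    nsmul_eq_mul]

/-- **Upper bound on the expected size of the minimization.**
`E[|min(B_{n,m,p})|] ≤ Σ_{i=0}^n C(n,i)·(1-(1-p^i(1-p)^{n-i})^m)·(1-(1-p)^{n-i}(1-p^i))^{m-1}`. -/
theorem expMin_upper_bound (p : ℝ) (hp0 : 0 < p) (hp1 : p < 1)
    (n m : ℕ) (hn : 0 < n) (hm : 0 < m) :
    expMin n m p ≤
      ∑ i ∈ Finset.range (n + 1),
        (n.choose i : ℝ) * (1 - (1 - p ^ i * (1 - p) ^ (n - i)) ^ m) *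
          (1 - (1 - p) ^ (n - i) * (1 - p ^ i)) ^ (m - 1) := by
  have hp0' : (0:ℝ) ≤ p := hp0.le
  have hp1' : p ≤ 1 := hp1.le
  have h1 : expMin n m p = ∑ S : Finset (Fin n), (hyperMeasure n m p (ES m S)).toReal := by
    rw [expMin]
    simp only [minCount]
    exact expMin_sum n m hp0' hp1'
  rw [h1]
  calc ∑ S : Finset (Fin n), (hyperMeasure n m p (ES m S)).toReal
      ≤ ∑ S : Finset (Fin n),
          (1 - (1 - p ^ S.card * (1 - p) ^ (n - S.card)) ^ m) *
            (1 - (1 - p) ^ (n - S.card) * (1 - p ^ S.card)) ^ (m - 1) :=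
        Finset.sum_le_sum fun S _ => per_S hp0' hp1' S
    _ = ∑ i ∈ Finset.range (n + 1), (n.choose i : ℝ) *
          ((1 - (1 - p ^ i * (1 - p) ^ (n - i)) ^ m) *
            (1 - (1 - p) ^ (n - i) * (1 - p ^ i)) ^ (m - 1)) :=
        sum_card_group (fun i => (1 - (1 - p ^ i * (1 - p) ^ (n - i)) ^ m) *
            (1 - (1 - p) ^ (n - i) * (1 - p ^ i)) ^ (m - 1))
    _ = _ := Finset.sum_congr rfl fun i _ => (mul_assoc _ _ _).symm
end

section
/- Let 0 < p < 1 be a probability, n and m positive integers, and ℓ, u integers with 0 ≤ ℓ ≤ u ≤ n. Let 𝐩 = max_{ℓ ≤ i ≤ u} p^i·(1-p)^{n-i} (explicitly, 𝐩 = p^ℓ·(1-p)^{n-ℓ} if p < 1/2, 𝐩 = 1/2^n if p = 1/2, and 𝐩 = p^u·(1-p)^{n-u} if p > 1/2). Then the expected number of distinct sampled sets of cardinality between ℓ and u, which equals Σ_{i=ℓ}^{u} C(n,i)·(1 - (1 - p^i·(1-p)^{n-i})^m), satisfies (m/(1 + m·𝐩)) · Σ_{i=ℓ}^{u} C(n,i)·p^i·(1-p)^{n-i}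 ≤ Σ_{i=ℓ}^{u} C(n,i)·(1 - (1 - p^i·(1-p)^{n-i})^m) ≤ m · Σ_{i=ℓ}^{u} C(n,i)·p^i·(1-p)^{n-i}. -/
lemma q_le_P_aux (p : ℝ) (hp0 : 0 < p) (hp1 : p < 1)
    (n l u i : ℕ) (hli : l ≤ i) (hiu : i ≤ u) (hun : u ≤ n) (P : ℝ)
    (hP : P = if p < 1 / 2 then p ^ l * (1 - p) ^ (n - l)
          else if p = 1 / 2 then 1 / 2 ^ n
          else p ^ u * (1 - p) ^ (n - u)) :
    p ^ i * (1 - p) ^ (n - i) ≤ P := by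
  have hin : i ≤ n := le_trans hiu hun
  have h1p : (0:ℝ) < 1 - p := by linarith
  split_ifs at hP with h1 h2
  · -- p < 1/2 : p ≤ 1 - p
    have hple : p ≤ 1 - p := by linarith
    have e1 : p ^ i = p ^ l * p ^ (i - l) := by rw [← pow_add]; congr 1; omega
    have e2 : (1 - p) ^ (n - l) = (1 - p) ^ (i - l) * (1 - p) ^ (n - i) := by
      rw [← pow_add]; congr 1; omega
    rw [hP, e1, e2]
    have hkey : p ^ (i - l) ≤ (1 - p) ^ (i - l) := pow_le_pow_left₀ hp0.le hple _
    have hmain := mul_le_mul_of_nonneg_right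
      (mul_le_mul_of_nonneg_left hkey (pow_nonneg hp0.le l)) (pow_nonneg h1p.le (n - i))
    linarith [hmain]
  · subst h2
    rw [hP]
    have : (1:ℝ) - 1/2 = 1/2 := by norm_num
    rw [this, ← pow_add]
    have : i + (n - i) = n := by omega
    rw [this, one_div, inv_pow]
    rw [one_div]
  · -- p > 1/2 : 1 - p ≤ p
    have hgt : 1/2 < p := by
      rcases lt_trichotomy p (1/2) with h | h | h
      · exact absurd h h1
      · exact absurd h h2
      · exact h
    have hple : 1 - p ≤ p := by linarith
    have e1 : p ^ u = p ^ i * p ^ (u - i) := by rw [← pow_add]; congr 1; omega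
    have e2 : (1 - p) ^ (n - i) = (1 - p) ^ (u - i) * (1 - p) ^ (n - u) := by
      rw [← pow_add]; congr 1; omega
    rw [hP, e1, e2]
    have hkey : (1 - p) ^ (u - i) ≤ p ^ (u - i) := pow_le_pow_left₀ h1p.le hple _
    have hmain := mul_le_mul_of_nonneg_right
      (mul_le_mul_of_nonneg_left hkey (pow_nonneg hp0.le i)) (pow_nonneg h1p.le (n - u))
    linarith [hmain]

/-- **Expected number of distinct sampled sets with cardinality between `ℓ` and `u`.**
With `𝐩 = max_{ℓ ≤ i ≤ u} p^i(1-p)^{n-i}` (given explicitly by cases on `p` vs `1/2`),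
the expected number of distinct sets, `Σ_{i=ℓ}^u C(n,i)(1-(1-p^i(1-p)^{n-i})^m)`, is
between `m/(1+m𝐩)` times and `m` times `Σ_{i=ℓ}^u C(n,i)p^i(1-p)^{n-i} = P[ℓ ≤ Y ≤ u]`. -/
theorem distinct_sets_bounds (p : ℝ) (hp0 : 0 < p) (hp1 : p < 1)
    (n m : ℕ) (hn : 0 < n) (hm : 0 < m) (l u : ℕ) (hlu : l ≤ u) (hun : u ≤ n)
    (P : ℝ)
    (hP : P = if p < 1 / 2 then p ^ l * (1 - p) ^ (n - l)
          else if p = 1 / 2 then 1 / 2 ^ n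
          else p ^ u * (1 - p) ^ (n - u)) :
    (∀ i ∈ Finset.Icc l u, p ^ i * (1 - p) ^ (n - i) ≤ P) ∧
    (m : ℝ) / (1 + m * P) *
        ∑ i ∈ Finset.Icc l u, (n.choose i : ℝ) * p ^ i * (1 - p) ^ (n - i) ≤
      ∑ i ∈ Finset.Icc l u, (n.choose i : ℝ) * (1 - (1 - p ^ i * (1 - p) ^ (n - i)) ^ m) ∧
    ∑ i ∈ Finset.Icc l u, (n.choose i : ℝ) * (1 - (1 - p ^ i * (1 - p) ^ (n - i)) ^ m) ≤
      (m : ℝ) * ∑ i ∈ Finset.Icc l u, (n.choose i : ℝ) * p ^ i * (1 - p) ^ (n - i) := by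
  have h1p : (0:ℝ) < 1 - p := by linarith
  have hqP : ∀ i ∈ Finset.Icc l u, p ^ i * (1 - p) ^ (n - i) ≤ P := by
    intro i hi
    rw [Finset.mem_Icc] at hi
    exact q_le_P_aux p hp0 hp1 n l u i hi.1 hi.2 hun P hP
  -- positivity of P
  have hP0 : 0 < P := by
    have hll : l ∈ Finset.Icc l u := Finset.mem_Icc.mpr ⟨le_refl l, hlu⟩
    have := hqP l hll
    have : 0 < p ^ l * (1 - p) ^ (n - l) :=
      mul_pos (pow_pos hp0 l) (pow_pos h1p (n - l))
    linarith [hqP l hll]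
  have hmP : (0:ℝ) < 1 + m * P := by
    have : (0:ℝ) ≤ (m:ℝ) := Nat.cast_nonneg m
    nlinarith
  refine ⟨hqP, ?_, ?_⟩
  · -- lower bound
    rw [Finset.mul_sum]
    apply Finset.sum_le_sum
    intro i hi
    set q := p ^ i * (1 - p) ^ (n - i) with hq
    have hq0 : 0 < q := mul_pos (pow_pos hp0 i) (pow_pos h1p (n - i))
    have hq1 : q ≤ 1 := by
      have h1 : p ^ i ≤ 1 := pow_le_one₀ hp0.le hp1.le
      have h2 : (1 - p) ^ (n - i) ≤ 1 := pow_le_one₀ h1p.le (by linarith)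
      nlinarith [pow_pos h1p (n - i)]
    have hqPi : q ≤ P := hqP i hi
    have hc : (0:ℝ) ≤ (n.choose i : ℝ) := Nat.cast_nonneg _
    -- key: (1-q)^m * (1 + m*q) ≤ 1
    have hbern : (1:ℝ) + m * q ≤ (1 + q) ^ m := one_add_mul_le_pow (by linarith) m
    have hmul : (1 - q) ^ m * (1 + q) ^ m = (1 - q ^ 2) ^ m := by
      rw [← mul_pow]; ring_nf
    have hle1 : (1 - q ^ 2) ^ m ≤ 1 := pow_le_one₀ (by nlinarith) (by nlinarith)
    have hkey : (1 - q) ^ m * (1 + m * q) ≤ 1 := by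
      have h0 : (0:ℝ) ≤ (1 - q) ^ m := pow_nonneg (by linarith) m
      calc (1 - q) ^ m * (1 + m * q) ≤ (1 - q) ^ m * (1 + q) ^ m :=
            mul_le_mul_of_nonneg_left hbern h0
        _ = (1 - q ^ 2) ^ m := hmul
        _ ≤ 1 := hle1
    have hpow1 : (1 - q) ^ m ≤ 1 := pow_le_one₀ (by linarith) (by linarith)
    -- goal: m/(1+mP) * (choose * p^i * (1-p)^(n-i)) ≤ choose * (1 - (1-q)^m)
    have hgoal : (m:ℝ) * q / (1 + m * P) ≤ 1 - (1 - q) ^ m := by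
      rw [div_le_iff₀ hmP]
      have hmq : (0:ℝ) ≤ (m:ℝ) := Nat.cast_nonneg m
      have h4 : (0:ℝ) ≤ (1 - (1 - q) ^ m) * ((m:ℝ) * P - m * q) := by
        apply mul_nonneg (by linarith)
        have := mul_le_mul_of_nonneg_left hqPi hmq
        linarith
      nlinarith [hkey, h4]
    calc (m:ℝ) / (1 + m * P) * ((n.choose i : ℝ) * p ^ i * (1 - p) ^ (n - i))
        = (n.choose i : ℝ) * ((m:ℝ) * q / (1 + m * P)) := by rw [hq]; ring
      _ ≤ (n.choose i : ℝ) * (1 - (1 - q) ^ m) :=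
          mul_le_mul_of_nonneg_left hgoal hc
      _ = (n.choose i : ℝ) * (1 - (1 - p ^ i * (1 - p) ^ (n - i)) ^ m) := by rw [hq]
  · -- upper bound
    rw [Finset.mul_sum]
    apply Finset.sum_le_sum
    intro i hi
    set q := p ^ i * (1 - p) ^ (n - i) with hq
    have hq0 : 0 < q := mul_pos (pow_pos hp0 i) (pow_pos h1p (n - i))
    have hc : (0:ℝ) ≤ (n.choose i : ℝ) := Nat.cast_nonneg _
    have hq1 : q ≤ 1 := by
      have h1 : p ^ i ≤ 1 := pow_le_one₀ hp0.le hp1.le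
      have h2 : (1 - p) ^ (n - i) ≤ 1 := pow_le_one₀ h1p.le (by linarith)
      nlinarith [pow_pos h1p (n - i)]
    have hbern : (1:ℝ) + m * (-q) ≤ (1 + (-q)) ^ m := one_add_mul_le_pow (by linarith) m
    have : 1 - (1 - q) ^ m ≤ m * q := by
      have : (1:ℝ) - m * q ≤ (1 - q) ^ m := by
        calc (1:ℝ) - m * q = 1 + m * (-q) := by ring
          _ ≤ (1 + (-q)) ^ m := hbern
          _ = (1 - q) ^ m := by ring_nf
      linarith
    calc (n.choose i : ℝ) * (1 - (1 - q) ^ m) ≤ (n.choose i : ℝ) * ((m:ℝ) * q) :=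
          mul_le_mul_of_nonneg_left this hc
      _ = (m:ℝ) * ((n.choose i : ℝ) * p ^ i * (1 - p) ^ (n - i)) := by rw [hq]; ring
end
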